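/- arXiv:1711.06558 — 5 statements merged into one kernel-verified Lean document; each statement's English description precedes it below -/
import Mathlib

section
/- Let X be a finite connected k-regular graph with k ≥ 3 and let λ₁(X) = max{λ : λ an eigenvalue of the adjacency matrix of X, λ ≠ k}. Then k − λ₁(X) ≤ 2·h(X), where h(X) is the Cheeger constant of X. -/
open SimpleGraph Finset

/-- `l` is an eigenvalue of the real matrix `A`. -/
def Matrix.IsEigenvalue {V : Type*} [Fintype V] (A : Matrix V V ℝ) (l : ℝ) : Prop :=
  ∃ v : V → ℝ, v ≠ 0 ∧ A.mulVec v = l • v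

/-- The number of edges between a vertex set `Y` and its complement. -/
def SimpleGraph.edgeBoundary {V : Type*} [Fintype V] [DecidableEq V] (G : SimpleGraph V)
    [DecidableRel G.Adj] (Y : Finset V) : ℕ :=
  ((Y ×ˢ Yᶜ).filter fun p => G.Adj p.1 p.2).card

/-- The Cheeger constant `h(X)`: the minimum of `|E(Y, Ȳ)|/|Y|` over nonempty vertex
sets `Y` with `|Y| ≤ |X|/2`. -/
noncomputable def SimpleGraph.cheegerConstant {V : Type*} [Fintype V] [DecidableEq V]
    (G : SimpleGraph V) [DecidableRel G.Adj] : ℝ :=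
  sInf {r : ℝ | ∃ Y : Finset V, Y.Nonempty ∧ 2 * Y.card ≤ Fintype.card V ∧
    r = (G.edgeBoundary Y : ℝ) / (Y.card : ℝ)}

/-- `λ₁(X)`: the largest adjacency eigenvalue different from `k`. -/
noncomputable def SimpleGraph.lambdaOne {V : Type*} [Fintype V] (G : SimpleGraph V)
    [DecidableRel G.Adj] (k : ℕ) : ℝ :=
  sSup {l : ℝ | (G.adjMatrix ℝ).IsEigenvalue l ∧ l ≠ (k : ℝ)}

section Aux

open Matrix

variable {V : Type*} [Fintype V] [DecidableEq V]

private lemma mulVec_sum' {ι : Type*} (A : Matrix V V ℝ) (s : Finset ι) (g : ι → V → ℝ) :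
    A *ᵥ (∑ i ∈ s, g i) = ∑ i ∈ s, A *ᵥ (g i) := by
  ext u
  simp only [Matrix.mulVec, dotProduct, Finset.sum_apply, Finset.mul_sum]
  rw [Finset.sum_comm]

/-- An eigenvector of a connected `k`-regular graph with eigenvalue `k` is constant. -/
private lemma eig_k_const (X : SimpleGraph V) [DecidableRel X.Adj] {k : ℕ}
    (hconn : X.Connected) (hreg : X.IsRegularOfDegree k)
    (v : V → ℝ) (hv : (X.adjMatrix ℝ) *ᵥ v = (k : ℝ) • v) (a b : V) : v a = v b := by
  obtain ⟨u0, -, hmax⟩ := Finset.exists_max_image Finset.univ v ⟨a, Finset.mem_univ a⟩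
  have step : ∀ u w, v u = v u0 → X.Adj u w → v w = v u0 := by
    intro u w hu huw
    have h1 : ∑ x ∈ X.neighborFinset u, v x = (k : ℝ) * v u := by
      have h := congrFun hv u
      rw [SimpleGraph.adjMatrix_mulVec_apply] at h
      simpa using h
    have h2 : ∑ x ∈ X.neighborFinset u, (v u0 - v x) = 0 := by
      rw [Finset.sum_sub_distrib, Finset.sum_const, h1,
        SimpleGraph.card_neighborFinset_eq_degree, hreg u, hu, nsmul_eq_mul]
      ring
    have h3 : ∀ x ∈ X.neighborFinset u, v u0 - v x = 0 := by
      rw [← Finset.sum_eq_zero_iff_of_nonneg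
        (fun x _ => sub_nonneg.mpr (hmax x (Finset.mem_univ x)))]
      exact h2
    have := h3 w (by rwa [SimpleGraph.mem_neighborFinset])
    linarith
  have key : ∀ (x y : V) (p : X.Walk x y), v x = v u0 → v y = v u0 := by
    intro x y p
    induction p with
    | nil => exact id
    | cons h _ ih => exact fun hx => ih (step _ _ hx h)
  obtain ⟨pa⟩ := hconn u0 a
  obtain ⟨pb⟩ := hconn u0 b
  rw [key u0 a pa rfl, key u0 b pb rfl]

/-- Every adjacency eigenvalue of a `k`-regular graph is at most `k`. -/
private lemma eig_le (X : SimpleGraph V) [DecidableRel X.Adj] {k : ℕ}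
    (hreg : X.IsRegularOfDegree k) {l : ℝ} (hl : (X.adjMatrix ℝ).IsEigenvalue l) :
    l ≤ (k : ℝ) := by
  obtain ⟨v, hv0, hv⟩ := hl
  obtain ⟨u1, hu1⟩ := Function.ne_iff.mp hv0
  obtain ⟨u, -, hmax⟩ := Finset.exists_max_image Finset.univ (fun x => |v x|)
    ⟨u1, Finset.mem_univ u1⟩
  have hvu : 0 < |v u| := lt_of_lt_of_le (abs_pos.mpr hu1) (hmax u1 (Finset.mem_univ u1))
  have h1 : ∑ x ∈ X.neighborFinset u, v x = l * v u := by
    have h := congrFun hv u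
    rw [SimpleGraph.adjMatrix_mulVec_apply] at h
    simpa using h
  have h2 : |l| * |v u| ≤ (k : ℝ) * |v u| := by
    rw [← abs_mul, ← h1]
    calc |∑ x ∈ X.neighborFinset u, v x| ≤ ∑ x ∈ X.neighborFinset u, |v x| :=
          Finset.abs_sum_le_sum_abs _ _
      _ ≤ ∑ _x ∈ X.neighborFinset u, |v u| :=
          Finset.sum_le_sum (fun x _ => hmax x (Finset.mem_univ x))
      _ = (k : ℝ) * |v u| := by
          rw [Finset.sum_const, SimpleGraph.card_neighborFinset_eq_degree, hreg u,
            nsmul_eq_mul]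
  have h3 : |l| ≤ (k : ℝ) := le_of_mul_le_mul_right h2 hvu
  exact le_trans (le_abs_self l) h3

/-- Rayleigh quotient bound: for any `f` with `∑ f = 0`,
`⟨f, A f⟩ ≤ λ₁ ⟨f, f⟩`. -/
private lemma rayleigh (X : SimpleGraph V) [DecidableRel X.Adj] {k : ℕ}
    (hconn : X.Connected) (hreg : X.IsRegularOfDegree k)
    (f : V → ℝ) (hsum : ∑ u, f u = 0) :
    ∑ u, f u * ((X.adjMatrix ℝ) *ᵥ f) u ≤ X.lambdaOne k * ∑ u, f u * f u := by
  classical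
  have hA : (X.adjMatrix ℝ).IsHermitian := X.isSymm_adjMatrix
  set b := hA.eigenvectorBasis with hb
  set μ := hA.eigenvalues with hμ
  set w : V → V → ℝ := fun i => (WithLp.equiv 2 _) (b i) with hwdef
  have hbasis : ∀ i, (X.adjMatrix ℝ) *ᵥ w i = μ i • w i := fun i =>
    hA.mulVec_eigenvectorBasis i
  set c : V → ℝ := fun i => ∑ u, w i u * f u with hcdef
  -- expansion of f in the eigenbasis
  have hfeq : f = ∑ i, c i • w i := by
    have h0 := b.sum_repr ((WithLp.equiv 2 (V → ℝ)).symm f)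
    have hrepr : ∀ i, b.repr ((WithLp.equiv 2 (V → ℝ)).symm f) i = c i := by
      intro i
      rw [b.repr_apply_apply]
      simp only [PiLp.inner_apply, RCLike.inner_apply, starRingEnd_apply, star_trivial]
      exact Finset.sum_congr rfl fun u _ => mul_comm _ _
    rw [Finset.sum_congr rfl (fun i (_ : i ∈ Finset.univ) => by rw [hrepr i])] at h0
    calc f = (WithLp.linearEquiv 2 ℝ (V → ℝ)) ((WithLp.equiv 2 (V → ℝ)).symm f) := rfl
      _ = (WithLp.linearEquiv 2 ℝ (V → ℝ)) (∑ i, c i • b i) := by rw [h0]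
      _ = ∑ i, c i • w i := by
          rw [map_sum]
          exact Finset.sum_congr rfl fun i _ => by rw [_root_.map_smul]; rfl
  -- key computation
  have key : ∀ d : V → ℝ, (∑ u, f u * (∑ i, d i • w i) u) = ∑ i, c i * d i := by
    intro d
    have : ∀ u, f u * (∑ i, d i • w i) u = ∑ i, d i * (w i u * f u) := by
      intro u
      simp only [Finset.sum_apply, Pi.smul_apply, smul_eq_mul, Finset.mul_sum]
      exact Finset.sum_congr rfl fun i _ => by ring
    rw [Finset.sum_congr rfl fun u _ => this u, Finset.sum_comm]
    refine Finset.sum_congr rfl fun i _ => ?_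
    rw [← Finset.mul_sum, hcdef]
    ring
  have hAf : (X.adjMatrix ℝ) *ᵥ f = ∑ i, (μ i * c i) • w i := by
    conv_lhs => rw [hfeq]
    rw [mulVec_sum']
    refine Finset.sum_congr rfl fun i _ => ?_
    rw [Matrix.mulVec_smul, hbasis i, smul_smul, mul_comm]
  have hw0 : ∀ i, w i ≠ 0 := by
    intro i h
    have hb0 : b i = 0 := by
      have : (WithLp.equiv 2 (V → ℝ)).symm (w i) = b i := Equiv.symm_apply_apply _ _
      rw [← this, h]
      simp
    have := b.orthonormal.1 i
    rw [hb0] at this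
    simp at this
  have hc0 : ∀ i, μ i = (k : ℝ) → c i = 0 := by
    intro i hik
    have hconst : ∀ u u' : V, w i u = w i u' := by
      intro u u'
      exact eig_k_const X hconn hreg (w i) (by rw [hbasis i, hik]) u u'
    have hne : Nonempty V := hconn.nonempty
    obtain ⟨u0⟩ := hne
    have : c i = w i u0 * ∑ u, f u := by
      rw [hcdef, Finset.mul_sum]
      exact Finset.sum_congr rfl fun u _ => by rw [hconst u u0]
    rw [this, hsum, mul_zero]
  have hbdd : BddAbove {l : ℝ | (X.adjMatrix ℝ).IsEigenvalue l ∧ l ≠ (k : ℝ)} :=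
    ⟨(k : ℝ), fun l hl => eig_le X hreg hl.1⟩
  have hterm : ∀ i, c i * (μ i * c i) ≤ X.lambdaOne k * (c i * c i) := by
    intro i
    by_cases h : c i = 0
    · simp [h]
    · have hik : μ i ≠ (k : ℝ) := fun hik => h (hc0 i hik)
      have hmem : μ i ∈ {l : ℝ | (X.adjMatrix ℝ).IsEigenvalue l ∧ l ≠ (k : ℝ)} :=
        ⟨⟨w i, hw0 i, hbasis i⟩, hik⟩
      have hle : μ i ≤ X.lambdaOne k := le_csSup hbdd hmem
      have hcc : 0 < c i * c i := mul_self_pos.mpr h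
      nlinarith [mul_le_mul_of_nonneg_right hle (le_of_lt hcc)]
  calc ∑ u, f u * ((X.adjMatrix ℝ) *ᵥ f) u = ∑ i, c i * (μ i * c i) := by
        rw [hAf]; exact key _
    _ ≤ ∑ i, X.lambdaOne k * (c i * c i) := Finset.sum_le_sum fun i _ => hterm i
    _ = X.lambdaOne k * ∑ i, c i * c i := by rw [Finset.mul_sum]
    _ = X.lambdaOne k * ∑ u, f u * f u := by
        congr 1
        have := key c
        conv_lhs => rw [← this]
        rw [← hfeq]

end Aux

/-- Easy direction of the Cheeger inequality: `k - λ₁(X) ≤ 2 h(X)`. -/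
theorem cheeger_easy_direction {V : Type*} [Fintype V] [DecidableEq V] (k : ℕ) (hk : 3 ≤ k)
    (X : SimpleGraph V) [DecidableRel X.Adj]
    (hconn : X.Connected) (hreg : X.IsRegularOfDegree k) :
    (k : ℝ) - X.lambdaOne k ≤ 2 * X.cheegerConstant := by
  classical
  obtain ⟨a0⟩ : Nonempty V := hconn.nonempty
  have hcard : k + 1 ≤ Fintype.card V := by
    have h1 : (insert a0 (X.neighborFinset a0)).card ≤ Fintype.card V :=
      Finset.card_le_univ _
    rwa [Finset.card_insert_of_notMem (by simp), SimpleGraph.card_neighborFinset_eq_degree,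
      hreg a0] at h1
  -- the Cheeger infimum is attained
  have hSne : Set.Nonempty {r : ℝ | ∃ Y : Finset V, Y.Nonempty ∧
      2 * Y.card ≤ Fintype.card V ∧ r = (X.edgeBoundary Y : ℝ) / (Y.card : ℝ)} := by
    refine ⟨(X.edgeBoundary {a0} : ℝ) / (({a0} : Finset V).card : ℝ), {a0},
      Finset.singleton_nonempty a0, ?_, rfl⟩
    simp only [Finset.card_singleton, mul_one]
    omega
  have hSfin : Set.Finite {r : ℝ | ∃ Y : Finset V, Y.Nonempty ∧
      2 * Y.card ≤ Fintype.card V ∧ r = (X.edgeBoundary Y : ℝ) / (Y.card : ℝ)} := by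
    apply Set.Finite.subset (Set.finite_range
      (fun Y : Finset V => (X.edgeBoundary Y : ℝ) / (Y.card : ℝ)))
    rintro r ⟨Y, -, -, hr⟩
    exact ⟨Y, hr.symm⟩
  have hmem := hSne.csInf_mem hSfin
  rw [show sInf {r : ℝ | ∃ Y : Finset V, Y.Nonempty ∧
      2 * Y.card ≤ Fintype.card V ∧ r = (X.edgeBoundary Y : ℝ) / (Y.card : ℝ)}
      = X.cheegerConstant from rfl] at hmem
  obtain ⟨Y, hYne, hY2, hYr⟩ := hmem
  set A := X.adjMatrix ℝ with hAdef
  set m : ℝ := (Y.card : ℝ) with hmdef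
  set am : ℝ := ((Yᶜ : Finset V).card : ℝ) with hamdef
  set e : ℝ := (X.edgeBoundary Y : ℝ) with hedef
  set n : ℝ := (Fintype.card V : ℝ) with hndef
  have hm1 : (1 : ℝ) ≤ m := by
    rw [hmdef]; exact_mod_cast Finset.card_pos.mpr hYne
  have hma : m + am = n := by
    rw [hmdef, hamdef, hndef]; exact_mod_cast Finset.card_add_card_compl Y
  have h2m : 2 * m ≤ n := by
    rw [hmdef, hndef]; exact_mod_cast hY2
  have he0 : (0 : ℝ) ≤ e := Nat.cast_nonneg _
  set f : V → ℝ := fun u => if u ∈ Y then am else -m with hfdef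
  have hfY : ∀ u ∈ Y, f u = am := fun u hu => if_pos hu
  have hfYc : ∀ u ∈ Yᶜ, f u = -m := fun u hu => if_neg (Finset.mem_compl.mp hu)
  have hsplit : ∀ g : V → ℝ, ∑ u, g u = ∑ u ∈ Y, g u + ∑ u ∈ Yᶜ, g u :=
    fun g => (Finset.sum_add_sum_compl Y g).symm
  have hsum : ∑ u, f u = 0 := by
    rw [hsplit f, Finset.sum_congr rfl hfY, Finset.sum_congr rfl hfYc,
      Finset.sum_const, Finset.sum_const, nsmul_eq_mul, nsmul_eq_mul, ← hmdef, ← hamdef]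
    ring
  have hff : ∑ u, f u * f u = m * am * n := by
    have hsY : ∑ u ∈ Y, f u * f u = ∑ _u ∈ Y, am * am :=
      Finset.sum_congr rfl (fun u hu => by rw [hfY u hu])
    have hsYc : ∑ u ∈ Yᶜ, f u * f u = ∑ _u ∈ Yᶜ, m * m :=
      Finset.sum_congr rfl (fun u hu => by rw [hfYc u hu]; ring)
    rw [hsplit (fun u => f u * f u), hsY, hsYc,
      Finset.sum_const, Finset.sum_const, nsmul_eq_mul, nsmul_eq_mul, ← hmdef, ← hamdef,
      ← hma]
    ring
  -- row and column sums of the adjacency matrix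
  have hmv : ∀ u, (A.mulVec f) u = ∑ v, A u v * f v := fun u => rfl
  have hrow : ∀ u, ∑ v, A u v = (k : ℝ) := by
    intro u
    have h := X.adjMatrix_mulVec_apply u (fun _ => (1 : ℝ))
    simp only [Matrix.mulVec, dotProduct, mul_one] at h
    rw [hAdef, h, Finset.sum_const, SimpleGraph.card_neighborFinset_eq_degree, hreg u,
      nsmul_eq_mul, mul_one]
  have hsymm : ∀ u v, A u v = A v u := fun u v => by
    simp [hAdef, SimpleGraph.adjMatrix_apply, SimpleGraph.adj_comm]
  have hcol : ∀ v, ∑ u, A u v = (k : ℝ) := by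
    intro v
    rw [Finset.sum_congr rfl fun u _ => hsymm u v]
    exact hrow v
  -- the quadratic form identity
  have huT : ∀ u, ∑ v, A u v * (f u - f v) ^ 2
      = (k : ℝ) * (f u * f u) - 2 * (f u * (A.mulVec f) u) + ∑ v, A u v * (f v * f v) := by
    intro u
    have hpt : ∀ v, A u v * (f u - f v) ^ 2
        = (f u * f u) * A u v - 2 * (f u * (A u v * f v)) + A u v * (f v * f v) :=
      fun v => by ring
    rw [Finset.sum_congr rfl fun v _ => hpt v, Finset.sum_add_distrib,
      Finset.sum_sub_distrib, ← Finset.mul_sum, hrow u, ← Finset.mul_sum, ← Finset.mul_sum,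
      ← hmv u]
    ring
  have hlast : ∑ u, ∑ v, A u v * (f v * f v) = (k : ℝ) * ∑ v, f v * f v := by
    rw [Finset.sum_comm, Finset.sum_congr rfl
      (fun v (_ : v ∈ Finset.univ) => by rw [← Finset.sum_mul, hcol v]), ← Finset.mul_sum]
  have hT1 : ∑ u, ∑ v, A u v * (f u - f v) ^ 2
      = 2 * (k : ℝ) * (∑ u, f u * f u) - 2 * ∑ u, f u * (A.mulVec f) u := by
    rw [Finset.sum_congr rfl fun u _ => huT u, Finset.sum_add_distrib,
      Finset.sum_sub_distrib, hlast, ← Finset.mul_sum, ← Finset.mul_sum]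
    ring
  -- counting the boundary
  have hcount1 : ∑ u ∈ Y, ∑ v ∈ Yᶜ, A u v = e := by
    rw [← Finset.sum_product' (f := fun u v => A u v)]
    simp only [hAdef, SimpleGraph.adjMatrix_apply]
    rw [Finset.sum_boole]
    rw [hedef, SimpleGraph.edgeBoundary]
  have hcount2 : ∑ u ∈ Yᶜ, ∑ v ∈ Y, A u v = e := by
    rw [Finset.sum_comm (f := fun u v => A u v), Finset.sum_congr rfl (fun v (_ : v ∈ Y) =>
      Finset.sum_congr rfl fun u _ => hsymm u v)]
    exact hcount1
  have hconstmul : ∀ (s t : Finset V), ∑ u ∈ s, ∑ v ∈ t, A u v * n ^ 2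
      = (∑ u ∈ s, ∑ v ∈ t, A u v) * n ^ 2 := by
    intro s t
    rw [Finset.sum_mul]
    exact Finset.sum_congr rfl fun u _ => by rw [Finset.sum_mul]
  have hT2 : ∑ u, ∑ v, A u v * (f u - f v) ^ 2 = 2 * e * n ^ 2 := by
    have hYY : ∑ u ∈ Y, ∑ v, A u v * (f u - f v) ^ 2
        = ∑ u ∈ Y, ∑ v ∈ Yᶜ, A u v * n ^ 2 := by
      refine Finset.sum_congr rfl fun u hu => ?_
      rw [← Finset.sum_add_sum_compl Y (fun v => A u v * (f u - f v) ^ 2),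
        Finset.sum_eq_zero (fun v hv => by rw [hfY u hu, hfY v hv]; ring), zero_add]
      refine Finset.sum_congr rfl fun v hv => ?_
      rw [hfY u hu, hfYc v hv, show am - -m = n by rw [← hma]; ring]
    have hYcc : ∑ u ∈ Yᶜ, ∑ v, A u v * (f u - f v) ^ 2
        = ∑ u ∈ Yᶜ, ∑ v ∈ Y, A u v * n ^ 2 := by
      refine Finset.sum_congr rfl fun u hu => ?_
      have hz : ∑ v ∈ Yᶜ, A u v * (f u - f v) ^ 2 = 0 :=
        Finset.sum_eq_zero (fun v hv => by rw [hfYc u hu, hfYc v hv]; ring)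
      rw [← Finset.sum_add_sum_compl Y (fun v => A u v * (f u - f v) ^ 2), hz, add_zero]
      refine Finset.sum_congr rfl fun v hv => ?_
      rw [hfYc u hu, hfY v hv, show -m - am = -n by rw [← hma]; ring]
      ring
    rw [hsplit (fun u => ∑ v, A u v * (f u - f v) ^ 2), hYY, hYcc,
      hconstmul Y Yᶜ, hconstmul Yᶜ Y, hcount1, hcount2]
    ring
  -- Rayleigh bound
  have hray := rayleigh X hconn hreg f hsum
  rw [← hAdef] at hray
  rw [hff] at hray
  have hG : ∑ u, f u * (A.mulVec f) u = (k : ℝ) * (m * am * n) - e * n ^ 2 := by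
    have h := hT1.symm.trans hT2
    rw [hff] at h
    linarith
  rw [hG] at hray
  -- final arithmetic
  rw [hYr]
  have hm0 : (0 : ℝ) < m := lt_of_lt_of_le one_pos hm1
  have ham : m ≤ am := by linarith
  have hn0 : (0 : ℝ) < n := by linarith
  have hpos : (0 : ℝ) < m * am * n := mul_pos (mul_pos hm0 (lt_of_lt_of_le hm0 ham)) hn0
  have hfin : ((k : ℝ) - X.lambdaOne k) * (m * am * n)
      ≤ (2 * (e / m)) * (m * am * n) := by
    have h2 : (2 * (e / m)) * (m * am * n) = 2 * e * am * n := by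
      field_simp
    rw [h2]
    nlinarith [mul_le_mul_of_nonneg_left (show n ≤ 2 * am by linarith)
      (mul_nonneg he0 (le_of_lt hn0))]
  exact le_of_mul_le_mul_right hfin hpos
end

section
/- Let X be a finite connected k-regular graph and let λ₁(X) be the largest adjacency eigenvalue different from k. Then h(X)² / (2k) ≤ k − λ₁(X), where h(X) is the Cheeger constant. -/
open SimpleGraph Finset

open SimpleGraph Finset
set_option linter.unusedSectionVars false

section
variable {V : Type*} [Fintype V] [DecidableEq V] (X : SimpleGraph V) [DecidableRel X.Adj]

lemma cheeger_bddBelow : BddBelow {r : ℝ | ∃ Y : Finset V, Y.Nonempty ∧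
    2 * Y.card ≤ Fintype.card V ∧ r = (X.edgeBoundary Y : ℝ) / (Y.card : ℝ)} := by
  refine ⟨0, ?_⟩
  rintro r ⟨Y, -, -, rfl⟩
  positivity

lemma cheeger_nonneg : 0 ≤ X.cheegerConstant := by
  apply Real.sInf_nonneg
  rintro r ⟨Y, -, -, rfl⟩
  positivity

lemma eb_eq_sum (Y : Finset V) :
    (X.edgeBoundary Y : ℝ) = ∑ x ∈ Y, ∑ y ∈ Yᶜ, X.adjMatrix ℝ x y := by
  rw [SimpleGraph.edgeBoundary, Finset.card_filter, Nat.cast_sum, Finset.sum_product]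
  refine Finset.sum_congr rfl fun x _ => Finset.sum_congr rfl fun y _ => ?_
  simp [SimpleGraph.adjMatrix_apply]

lemma cheeger_mul_card_le (Y : Finset V) (hY : Y.Nonempty)
    (h2 : 2 * Y.card ≤ Fintype.card V) :
    X.cheegerConstant * Y.card ≤ (X.edgeBoundary Y : ℝ) := by
  have hc : (0:ℝ) < Y.card := by exact_mod_cast hY.card_pos
  have hle : X.cheegerConstant ≤ (X.edgeBoundary Y : ℝ) / Y.card :=
    csInf_le (cheeger_bddBelow X) ⟨Y, hY, h2, rfl⟩
  calc X.cheegerConstant * Y.card ≤ ((X.edgeBoundary Y : ℝ) / Y.card) * Y.card :=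
        mul_le_mul_of_nonneg_right hle hc.le
    _ = (X.edgeBoundary Y : ℝ) := div_mul_cancel₀ _ hc.ne'

lemma adjM_nonneg' (x y : V) : (0:ℝ) ≤ X.adjMatrix ℝ x y := by
  by_cases h : X.Adj x y <;> simp [SimpleGraph.adjMatrix_apply, h]

lemma adjM_symm (x y : V) : X.adjMatrix ℝ x y = X.adjMatrix ℝ y x := by
  simp [SimpleGraph.adjMatrix_apply, SimpleGraph.adj_comm]

lemma adjM_idem (x y : V) : X.adjMatrix ℝ x y * X.adjMatrix ℝ x y = X.adjMatrix ℝ x y := by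
  by_cases h : X.Adj x y <;> simp [SimpleGraph.adjMatrix_apply, h]

lemma rowsum' {k : ℕ} (hreg : X.IsRegularOfDegree k) (x : V) :
    ∑ y, X.adjMatrix ℝ x y = (k : ℝ) := by
  have h := hreg x
  simp only [SimpleGraph.adjMatrix_apply, Finset.sum_boole]
  rw [← SimpleGraph.neighborFinset_eq_filter]
  rw [← SimpleGraph.card_neighborFinset_eq_degree] at h
  exact_mod_cast congrArg Nat.cast h

lemma cheeger_le_deg {k : ℕ} (hreg : X.IsRegularOfDegree k) :
    X.cheegerConstant ≤ (k : ℝ) := by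
  rcases Set.eq_empty_or_nonempty {r : ℝ | ∃ Y : Finset V, Y.Nonempty ∧
      2 * Y.card ≤ Fintype.card V ∧ r = (X.edgeBoundary Y : ℝ) / (Y.card : ℝ)} with he | ⟨r, Y, hY, h2, hr⟩
  · rw [SimpleGraph.cheegerConstant, he, Real.sInf_empty]
    positivity
  · have hc : (0:ℝ) < Y.card := by exact_mod_cast hY.card_pos
    have heb : (X.edgeBoundary Y : ℝ) ≤ k * Y.card := by
      rw [eb_eq_sum]
      calc ∑ x ∈ Y, ∑ y ∈ Yᶜ, X.adjMatrix ℝ x y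
          ≤ ∑ x ∈ Y, ∑ y, X.adjMatrix ℝ x y := by
            refine Finset.sum_le_sum fun x _ => ?_
            exact Finset.sum_le_sum_of_subset_of_nonneg (Finset.subset_univ _)
              (fun y _ _ => adjM_nonneg' X x y)
        _ = ∑ _x ∈ Y, (k:ℝ) := Finset.sum_congr rfl fun x _ => rowsum' X hreg x
        _ = (k:ℝ) * Y.card := by rw [Finset.sum_const, nsmul_eq_mul, mul_comm]
    have : X.cheegerConstant ≤ r := csInf_le (cheeger_bddBelow X) ⟨Y, hY, h2, hr⟩
    rw [hr] at this
    calc X.cheegerConstant ≤ (X.edgeBoundary Y : ℝ) / Y.card := this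
      _ ≤ (k * Y.card) / Y.card := by gcongr
      _ = (k:ℝ) := by field_simp

lemma coarea :
    ∀ (c : ℕ) (f : V → ℝ), (univ.filter fun x => 0 < f x).card = c →
      (∀ x, 0 ≤ f x) → 2 * (univ.filter fun x => 0 < f x).card ≤ Fintype.card V →
      2 * X.cheegerConstant * ∑ x, f x ≤
        ∑ x, ∑ y, X.adjMatrix ℝ x y * |f x - f y| := by
  intro c
  induction c using Nat.strong_induction_on with
  | _ c ih =>
  intro f hc hf hsize
  set S := univ.filter fun x => 0 < f x with hSdef
  have hmemS : ∀ x, x ∈ S ↔ 0 < f x := by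
    intro x; simp [hSdef]
  have hfnS : ∀ x, x ∉ S → f x = 0 := by
    intro x hx
    have := (hmemS x).not.mp hx
    linarith [hf x]
  rcases S.eq_empty_or_nonempty with hSe | hSne
  · have hsum0 : ∑ x, f x = 0 := by
      apply Finset.sum_eq_zero
      intro x _
      exact hfnS x (by simp [hSe])
    rw [hsum0, mul_zero]
    exact Finset.sum_nonneg fun x _ => Finset.sum_nonneg fun y _ =>
      mul_nonneg (adjM_nonneg' X x y) (abs_nonneg _)
  · -- minimum positive value
    have himne : (S.image f).Nonempty := hSne.image f
    set m := (S.image f).min' himne with hmdef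
    obtain ⟨x₀, hx₀S, hx₀⟩ := Finset.mem_image.mp ((S.image f).min'_mem himne)
    have hmpos : 0 < m := by rw [hmdef, ← hx₀]; exact (hmemS x₀).mp hx₀S
    have hmle : ∀ x ∈ S, m ≤ f x := fun x hx =>
      Finset.min'_le _ _ (Finset.mem_image_of_mem f hx)
    set f' : V → ℝ := fun x => if 0 < f x then f x - m else 0 with hf'def
    have hf'S : ∀ x ∈ S, f' x = f x - m := by
      intro x hx; simp only [hf'def]; rw [if_pos ((hmemS x).mp hx)]
    have hf'nS : ∀ x, x ∉ S → f' x = 0 := by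
      intro x hx; simp only [hf'def]; rw [if_neg ((hmemS x).not.mp hx)]
    have hf'0 : ∀ x, 0 ≤ f' x := by
      intro x
      by_cases hx : x ∈ S
      · rw [hf'S x hx]; linarith [hmle x hx]
      · rw [hf'nS x hx]
    set S' := univ.filter fun x => 0 < f' x with hS'def
    have hS'sub : S' ⊆ S := by
      intro x hx
      rw [hS'def, Finset.mem_filter] at hx
      by_contra hxS
      rw [hf'nS x hxS] at hx
      exact lt_irrefl 0 hx.2
    have hx₀not : x₀ ∉ S' := by
      rw [hS'def, Finset.mem_filter]
      rw [not_and]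
      intro _
      rw [hf'S x₀ hx₀S, hx₀]
      exact fun h => by linarith [hmdef]
    have hcard : S'.card < c := hc ▸ Finset.card_lt_card ⟨hS'sub, fun hsub => hx₀not (hsub hx₀S)⟩
    have hsz' : 2 * (univ.filter fun x => 0 < f' x).card ≤ Fintype.card V := by
      rw [← hS'def]
      have := Finset.card_le_card hS'sub
      omega
    have IH := ih S'.card hcard f' (by rw [← hS'def]) hf'0 hsz'
    -- sum identity
    have hsum_f : ∑ x, f x = (∑ x, f' x) + m * S.card := by
      have e1 : ∑ x, f x = ∑ x ∈ S, f x :=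
        (Finset.sum_subset (Finset.subset_univ S) (fun x _ hx => hfnS x hx)).symm
      have e2 : ∑ x, f' x = ∑ x ∈ S, f' x :=
        (Finset.sum_subset (Finset.subset_univ S) (fun x _ hx => hf'nS x hx)).symm
      have e3 : ∑ x ∈ S, f x = ∑ x ∈ S, (f' x + m) :=
        Finset.sum_congr rfl fun x hx => by rw [hf'S x hx]; ring
      rw [e1, e2, e3, Finset.sum_add_distrib, Finset.sum_const, nsmul_eq_mul]
      ring
    -- splitting double sums
    have split : ∀ F : V → V → ℝ, ∑ x, ∑ y, F x y =
        ((∑ x ∈ S, ∑ y ∈ S, F x y + ∑ x ∈ S, ∑ y ∈ Sᶜ, F x y) +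
         (∑ x ∈ Sᶜ, ∑ y ∈ S, F x y + ∑ x ∈ Sᶜ, ∑ y ∈ Sᶜ, F x y)) := by
      intro F
      rw [← Finset.sum_add_sum_compl S (fun x => ∑ y, F x y)]
      congr 1 <;>
        · rw [← Finset.sum_add_distrib]
          exact Finset.sum_congr rfl fun x _ => (Finset.sum_add_sum_compl S (F x)).symm
    have hmemSc : ∀ x, x ∈ Sᶜ ↔ x ∉ S := fun x => Finset.mem_compl
    have ebS : (X.edgeBoundary S : ℝ) = ∑ x ∈ S, ∑ y ∈ Sᶜ, X.adjMatrix ℝ x y := eb_eq_sum X S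
    have ebS' : ∑ x ∈ Sᶜ, ∑ y ∈ S, X.adjMatrix ℝ x y = (X.edgeBoundary S : ℝ) := by
      rw [ebS]; refine Finset.sum_comm.trans ?_
      exact Finset.sum_congr rfl fun x _ => Finset.sum_congr rfl fun y _ => adjM_symm X y x
    have hms : ∀ T U : Finset V, ∑ x ∈ T, ∑ y ∈ U, m * X.adjMatrix ℝ x y =
        m * ∑ x ∈ T, ∑ y ∈ U, X.adjMatrix ℝ x y := by
      intro T U
      rw [Finset.mul_sum]
      exact Finset.sum_congr rfl fun x _ => (Finset.mul_sum _ _ _).symm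
    -- blocks
    have B1 : ∑ x ∈ S, ∑ y ∈ S, X.adjMatrix ℝ x y * |f x - f y| =
        ∑ x ∈ S, ∑ y ∈ S, X.adjMatrix ℝ x y * |f' x - f' y| := by
      refine Finset.sum_congr rfl fun x hx => Finset.sum_congr rfl fun y hy => ?_
      rw [hf'S x hx, hf'S y hy]
      congr 1
      congr 1
      ring
    have B4 : ∑ x ∈ Sᶜ, ∑ y ∈ Sᶜ, X.adjMatrix ℝ x y * |f x - f y| =
        ∑ x ∈ Sᶜ, ∑ y ∈ Sᶜ, X.adjMatrix ℝ x y * |f' x - f' y| := by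
      refine Finset.sum_congr rfl fun x hx => Finset.sum_congr rfl fun y hy => ?_
      rw [hfnS x ((hmemSc x).mp hx), hfnS y ((hmemSc y).mp hy),
        hf'nS x ((hmemSc x).mp hx), hf'nS y ((hmemSc y).mp hy)]
    have B2 : ∑ x ∈ S, ∑ y ∈ Sᶜ, X.adjMatrix ℝ x y * |f x - f y| =
        (∑ x ∈ S, ∑ y ∈ Sᶜ, X.adjMatrix ℝ x y * |f' x - f' y|) +
          m * (X.edgeBoundary S : ℝ) := by
      have : ∀ x ∈ S, ∀ y ∈ Sᶜ, X.adjMatrix ℝ x y * |f x - f y| =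
          X.adjMatrix ℝ x y * |f' x - f' y| + m * X.adjMatrix ℝ x y := by
        intro x hx y hy
        rw [hfnS y ((hmemSc y).mp hy), hf'nS y ((hmemSc y).mp hy), hf'S x hx,
          sub_zero, sub_zero, abs_of_nonneg (hf x), abs_of_nonneg (by linarith [hmle x hx])]
        ring
      rw [Finset.sum_congr rfl fun x hx => Finset.sum_congr rfl fun y hy => this x hx y hy]
      rw [Finset.sum_congr rfl fun x (hx : x ∈ S) => Finset.sum_add_distrib]
      rw [Finset.sum_add_distrib, hms S Sᶜ, ebS]
    have B3 : ∑ x ∈ Sᶜ, ∑ y ∈ S, X.adjMatrix ℝ x y * |f x - f y| =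
        (∑ x ∈ Sᶜ, ∑ y ∈ S, X.adjMatrix ℝ x y * |f' x - f' y|) +
          m * (X.edgeBoundary S : ℝ) := by
      have : ∀ x ∈ Sᶜ, ∀ y ∈ S, X.adjMatrix ℝ x y * |f x - f y| =
          X.adjMatrix ℝ x y * |f' x - f' y| + m * X.adjMatrix ℝ x y := by
        intro x hx y hy
        rw [hfnS x ((hmemSc x).mp hx), hf'nS x ((hmemSc x).mp hx), hf'S y hy,
          zero_sub, zero_sub, abs_neg, abs_neg, abs_of_nonneg (hf y),
          abs_of_nonneg (by linarith [hmle y hy])]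
        ring
      rw [Finset.sum_congr rfl fun x hx => Finset.sum_congr rfl fun y hy => this x hx y hy]
      rw [Finset.sum_congr rfl fun x (hx : x ∈ Sᶜ) => Finset.sum_add_distrib]
      rw [Finset.sum_add_distrib, hms Sᶜ S, ebS']
    have total : ∑ x, ∑ y, X.adjMatrix ℝ x y * |f x - f y| =
        (∑ x, ∑ y, X.adjMatrix ℝ x y * |f' x - f' y|) +
          2 * (m * (X.edgeBoundary S : ℝ)) := by
      rw [split (fun x y => X.adjMatrix ℝ x y * |f x - f y|),
        split (fun x y => X.adjMatrix ℝ x y * |f' x - f' y|), B1, B2, B3, B4]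
      ring
    have hcheeg : X.cheegerConstant * S.card ≤ (X.edgeBoundary S : ℝ) :=
      cheeger_mul_card_le X S hSne hsize
    have hstep : 2 * X.cheegerConstant * (m * S.card) ≤ 2 * (m * (X.edgeBoundary S : ℝ)) := by
      have := mul_le_mul_of_nonneg_left hcheeg (by positivity : (0:ℝ) ≤ 2 * m)
      nlinarith [this]
    calc 2 * X.cheegerConstant * ∑ x, f x
        = 2 * X.cheegerConstant * ∑ x, f' x
          + 2 * X.cheegerConstant * (m * S.card) := by rw [hsum_f]; ring
      _ ≤ (∑ x, ∑ y, X.adjMatrix ℝ x y * |f' x - f' y|)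
          + 2 * (m * (X.edgeBoundary S : ℝ)) := add_le_add IH hstep
      _ = ∑ x, ∑ y, X.adjMatrix ℝ x y * |f x - f y| := total.symm


lemma mulVec_apply' (v : V → ℝ) (x : V) :
    (X.adjMatrix ℝ).mulVec v x = ∑ y, X.adjMatrix ℝ x y * v y := by
  simp [Matrix.mulVec, dotProduct]

lemma core {k : ℕ} (hreg : X.IsRegularOfDegree k) (l : ℝ) (v : V → ℝ)
    (hv : (X.adjMatrix ℝ).mulVec v = l • v)
    (hW : (univ.filter fun x => 0 < v x).Nonempty)
    (h2 : 2 * (univ.filter fun x => 0 < v x).card ≤ Fintype.card V) :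
    X.cheegerConstant ^ 2 ≤ 2 * k * ((k:ℝ) - l) := by
  set W := univ.filter fun x => 0 < v x with hWdef
  set g : V → ℝ := fun x => max (v x) 0 with hgdef
  have hg0 : ∀ x, 0 ≤ g x := fun x => le_max_right _ _
  have hgv : ∀ x, v x ≤ g x := fun x => le_max_left _ _
  have hgW : ∀ x ∈ W, g x = v x := by
    intro x hx
    have hvx : 0 < v x := (Finset.mem_filter.mp hx).2
    simp [hgdef, max_eq_left hvx.le]
  have hgnW : ∀ x ∉ W, g x = 0 := by
    intro x hx
    have hvx : ¬ 0 < v x := fun h => hx (Finset.mem_filter.mpr ⟨Finset.mem_univ x, h⟩)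
    simp [hgdef, max_eq_right (le_of_not_gt hvx)]
  set N := ∑ x, g x ^ 2 with hNdef
  have hN0 : ∀ x : V, 0 ≤ g x ^ 2 := fun x => sq_nonneg _
  obtain ⟨w, hwW⟩ := hW
  have hNpos : 0 < N := by
    have h1 : 0 < g w ^ 2 := by
      have h2' : 0 < g w := by rw [hgW w hwW]; exact (Finset.mem_filter.mp hwW).2
      positivity
    calc (0:ℝ) < g w ^ 2 := h1
      _ ≤ N := hNdef ▸ Finset.single_le_sum (fun x _ => hN0 x) (Finset.mem_univ w)
  have hfilter : (univ.filter fun x => 0 < g x ^ 2) = W := by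
    ext x
    simp only [Finset.mem_filter, Finset.mem_univ, true_and, hWdef]
    constructor
    · intro hx
      by_contra hv0
      have hxW : x ∉ W := by simp [hWdef, hv0]
      rw [hgnW x hxW] at hx
      norm_num at hx
    · intro hx
      have h3 : 0 < g x := lt_of_lt_of_le hx (hgv x)
      positivity
  have hrow := rowsum' X hreg
  have hcol : ∀ y, ∑ x, X.adjMatrix ℝ x y = (k:ℝ) := by
    intro y
    rw [Finset.sum_congr rfl fun x _ => adjM_symm X x y]
    exact hrow y
  set T := ∑ x, ∑ y, X.adjMatrix ℝ x y * |g x ^ 2 - g y ^ 2| with hT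
  set D := ∑ x, ∑ y, X.adjMatrix ℝ x y * (g x - g y) ^ 2 with hD
  set Q := ∑ x, ∑ y, X.adjMatrix ℝ x y * (g x + g y) ^ 2 with hQ
  have hcoarea : 2 * X.cheegerConstant * N ≤ T := by
    have := coarea X W.card (fun x => g x ^ 2) (by rw [hfilter]) (fun x => hN0 x)
      (by rw [hfilter]; exact h2)
    exact this
  have dsum_add : ∀ F G : V → V → ℝ, ∑ x, ∑ y, (F x y + G x y) =
      (∑ x, ∑ y, F x y) + (∑ x, ∑ y, G x y) := by
    intro F G
    rw [← Finset.sum_add_distrib]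
    exact Finset.sum_congr rfl fun x _ => Finset.sum_add_distrib
  have dsum_sub : ∀ F G : V → V → ℝ, ∑ x, ∑ y, (F x y - G x y) =
      (∑ x, ∑ y, F x y) - (∑ x, ∑ y, G x y) := by
    intro F G
    rw [← Finset.sum_sub_distrib]
    exact Finset.sum_congr rfl fun x _ => Finset.sum_sub_distrib _ _
  have dsum_two : ∀ (a : ℝ) (F : V → V → ℝ), ∑ x, ∑ y, a * F x y = a * ∑ x, ∑ y, F x y := by
    intro a F
    rw [Finset.mul_sum]
    exact Finset.sum_congr rfl fun x _ => (Finset.mul_sum _ _ _).symm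
  -- Cauchy-Schwarz
  have hCS : T ^ 2 ≤ D * Q := by
    have key := Finset.sum_mul_sq_le_sq_mul_sq Finset.univ
      (fun p : V × V => X.adjMatrix ℝ p.1 p.2 * |g p.1 - g p.2|)
      (fun p : V × V => X.adjMatrix ℝ p.1 p.2 * (g p.1 + g p.2))
    have e1 : ∑ p : V × V, (X.adjMatrix ℝ p.1 p.2 * |g p.1 - g p.2|) *
        (X.adjMatrix ℝ p.1 p.2 * (g p.1 + g p.2)) = T := by
      rw [hT, Fintype.sum_prod_type]
      refine Finset.sum_congr rfl fun x _ => Finset.sum_congr rfl fun y _ => ?_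
      have habs : |g x - g y| * (g x + g y) = |g x ^ 2 - g y ^ 2| := by
        rw [← abs_of_nonneg (add_nonneg (hg0 x) (hg0 y)), ← abs_mul]
        congr 1
        ring
      calc (X.adjMatrix ℝ x y * |g x - g y|) * (X.adjMatrix ℝ x y * (g x + g y))
          = (X.adjMatrix ℝ x y * X.adjMatrix ℝ x y) * (|g x - g y| * (g x + g y)) := by ring
        _ = X.adjMatrix ℝ x y * |g x ^ 2 - g y ^ 2| := by rw [adjM_idem, habs]
    have e2 : ∑ p : V × V, (X.adjMatrix ℝ p.1 p.2 * |g p.1 - g p.2|) ^ 2 = D := by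
      rw [hD, Fintype.sum_prod_type]
      refine Finset.sum_congr rfl fun x _ => Finset.sum_congr rfl fun y _ => ?_
      calc (X.adjMatrix ℝ x y * |g x - g y|) ^ 2
          = (X.adjMatrix ℝ x y * X.adjMatrix ℝ x y) * |g x - g y| ^ 2 := by ring
        _ = X.adjMatrix ℝ x y * (g x - g y) ^ 2 := by rw [adjM_idem, sq_abs]
    have e3 : ∑ p : V × V, (X.adjMatrix ℝ p.1 p.2 * (g p.1 + g p.2)) ^ 2 = Q := by
      rw [hQ, Fintype.sum_prod_type]
      refine Finset.sum_congr rfl fun x _ => Finset.sum_congr rfl fun y _ => ?_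
      have hle : X.adjMatrix ℝ x y ^ 2 = X.adjMatrix ℝ x y * X.adjMatrix ℝ x y := sq _
      calc (X.adjMatrix ℝ x y * (g x + g y)) ^ 2
          = (X.adjMatrix ℝ x y * X.adjMatrix ℝ x y) * (g x + g y) ^ 2 := by ring
        _ = X.adjMatrix ℝ x y * (g x + g y) ^ 2 := by rw [adjM_idem]
    rw [e1, e2, e3] at key
    exact key
  have hAg2x : ∑ x, ∑ y, X.adjMatrix ℝ x y * g x ^ 2 = k * N := by
    rw [hNdef, Finset.mul_sum]
    refine Finset.sum_congr rfl fun x _ => ?_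
    rw [← Finset.sum_mul, hrow x]
  have hAg2y : ∑ x, ∑ y, X.adjMatrix ℝ x y * g y ^ 2 = k * N := by
    rw [Finset.sum_comm, hNdef, Finset.mul_sum]
    refine Finset.sum_congr rfl fun y _ => ?_
    rw [← Finset.sum_mul, hcol y]
  have hQbound : Q ≤ 4 * k * N := by
    have step : Q ≤ ∑ x, ∑ y, X.adjMatrix ℝ x y * (2 * (g x ^ 2 + g y ^ 2)) := by
      refine Finset.sum_le_sum fun x _ => Finset.sum_le_sum fun y _ => ?_
      refine mul_le_mul_of_nonneg_left ?_ (adjM_nonneg' X x y)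
      nlinarith [sq_nonneg (g x - g y)]
    have eq2 : ∑ x, ∑ y, X.adjMatrix ℝ x y * (2 * (g x ^ 2 + g y ^ 2)) = 4 * k * N := by
      calc ∑ x, ∑ y, X.adjMatrix ℝ x y * (2 * (g x ^ 2 + g y ^ 2))
          = ∑ x, ∑ y, (2 * (X.adjMatrix ℝ x y * g x ^ 2) + 2 * (X.adjMatrix ℝ x y * g y ^ 2)) := by
            exact Finset.sum_congr rfl fun x _ => Finset.sum_congr rfl fun y _ => by ring
        _ = 2 * (k * N) + 2 * (k * N) := by
            rw [dsum_add, dsum_two, dsum_two, hAg2x, hAg2y]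
        _ = 4 * k * N := by ring
    linarith [step, eq2.le, eq2.ge]
  -- D bound
  set C := ∑ x, ∑ y, X.adjMatrix ℝ x y * (g x * g y) with hC
  have hDexp : D = 2 * (k * N) - 2 * C := by
    calc D = ∑ x, ∑ y, (X.adjMatrix ℝ x y * g x ^ 2 + X.adjMatrix ℝ x y * g y ^ 2
            - 2 * (X.adjMatrix ℝ x y * (g x * g y))) := by
          rw [hD]
          exact Finset.sum_congr rfl fun x _ => Finset.sum_congr rfl fun y _ => by ring
      _ = ((∑ x, ∑ y, X.adjMatrix ℝ x y * g x ^ 2) + ∑ x, ∑ y, X.adjMatrix ℝ x y * g y ^ 2)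
            - 2 * C := by
          rw [← dsum_two 2 (fun x y => X.adjMatrix ℝ x y * (g x * g y)), ← dsum_add, ← dsum_sub]
      _ = 2 * (k * N) - 2 * C := by rw [hAg2x, hAg2y]; ring
  have hAv : ∀ x, ∑ y, X.adjMatrix ℝ x y * v y = l * v x := by
    intro x
    have h5 := congrFun hv x
    rw [mulVec_apply'] at h5
    rw [h5]
    simp
  have claimA : k * N - C ≤ ((k:ℝ) - l) * N := by
    have hC' : C = ∑ x, g x * ∑ y, X.adjMatrix ℝ x y * g y := by
      rw [hC]
      refine Finset.sum_congr rfl fun x _ => ?_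
      rw [Finset.mul_sum]
      exact Finset.sum_congr rfl fun y _ => by ring
    have hkey : ∀ x, g x * (k * g x - ∑ y, X.adjMatrix ℝ x y * g y) ≤ ((k:ℝ) - l) * g x ^ 2 := by
      intro x
      by_cases hx : x ∈ W
      · have hgx : g x = v x := hgW x hx
        have hvx : 0 < v x := (Finset.mem_filter.mp hx).2
        have hmono : ∑ y, X.adjMatrix ℝ x y * v y ≤ ∑ y, X.adjMatrix ℝ x y * g y :=
          Finset.sum_le_sum fun y _ => mul_le_mul_of_nonneg_left (hgv y) (adjM_nonneg' X x y)
        rw [hgx]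
        have hin : k * v x - ∑ y, X.adjMatrix ℝ x y * g y ≤ k * v x - l * v x := by
          have := hAv x
          linarith [hmono]
        calc v x * (k * v x - ∑ y, X.adjMatrix ℝ x y * g y)
            ≤ v x * (k * v x - l * v x) := mul_le_mul_of_nonneg_left hin hvx.le
          _ = ((k:ℝ) - l) * v x ^ 2 := by ring
      · rw [hgnW x hx]
        simp
    have hsplit : k * N - C = ∑ x, g x * (k * g x - ∑ y, X.adjMatrix ℝ x y * g y) := by
      rw [hC', hNdef, Finset.mul_sum, ← Finset.sum_sub_distrib]
      exact Finset.sum_congr rfl fun x _ => by ring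
    rw [hsplit]
    calc ∑ x, g x * (k * g x - ∑ y, X.adjMatrix ℝ x y * g y)
        ≤ ∑ x, ((k:ℝ) - l) * g x ^ 2 := Finset.sum_le_sum fun x _ => hkey x
      _ = ((k:ℝ) - l) * N := by rw [hNdef, Finset.mul_sum]
  have hDbound : D ≤ 2 * ((k:ℝ) - l) * N := by
    rw [hDexp]
    nlinarith [claimA]
  have hQ0 : (0:ℝ) ≤ Q := by
    rw [hQ]
    exact Finset.sum_nonneg fun x _ => Finset.sum_nonneg fun y _ =>
      mul_nonneg (adjM_nonneg' X x y) (sq_nonneg _)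
  have hD0 : (0:ℝ) ≤ D := by
    rw [hD]
    exact Finset.sum_nonneg fun x _ => Finset.sum_nonneg fun y _ =>
      mul_nonneg (adjM_nonneg' X x y) (sq_nonneg _)
  have hklN0 : (0:ℝ) ≤ 2 * ((k:ℝ) - l) * N := le_trans hD0 hDbound
  have hch0 : (0:ℝ) ≤ 2 * X.cheegerConstant * N := by
    have h0 := cheeger_nonneg X
    positivity
  have hchain : (2 * X.cheegerConstant * N) ^ 2 ≤ (2 * ((k:ℝ) - l) * N) * (4 * k * N) :=
    calc (2 * X.cheegerConstant * N) ^ 2 ≤ T ^ 2 := pow_le_pow_left₀ hch0 hcoarea 2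
      _ ≤ D * Q := hCS
      _ ≤ (2 * ((k:ℝ) - l) * N) * (4 * k * N) := mul_le_mul hDbound hQbound hQ0 hklN0
  have hN2 : (0:ℝ) < N ^ 2 := by positivity
  have h4 : X.cheegerConstant ^ 2 * N ^ 2 ≤ (2 * k * ((k:ℝ) - l)) * N ^ 2 := by
    nlinarith [hchain]
  exact le_of_mul_le_mul_right h4 hN2


lemma sum_eigvec_zero {k : ℕ} (hreg : X.IsRegularOfDegree k) (l : ℝ) (v : V → ℝ)
    (hv : (X.adjMatrix ℝ).mulVec v = l • v) (hlk : l ≠ (k:ℝ)) : ∑ x, v x = 0 := by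
  have h1 : ∑ x, (X.adjMatrix ℝ).mulVec v x = (k:ℝ) * ∑ x, v x := by
    calc ∑ x, (X.adjMatrix ℝ).mulVec v x = ∑ x, ∑ y, X.adjMatrix ℝ x y * v y :=
          Finset.sum_congr rfl fun x _ => mulVec_apply' X v x
      _ = ∑ y, ∑ x, X.adjMatrix ℝ x y * v y := Finset.sum_comm
      _ = ∑ y, (k:ℝ) * v y := by
          refine Finset.sum_congr rfl fun y _ => ?_
          rw [← Finset.sum_mul]
          rw [Finset.sum_congr rfl fun x _ => adjM_symm X x y, rowsum' X hreg y]
      _ = (k:ℝ) * ∑ y, v y := (Finset.mul_sum _ _ _).symm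
  have h2 : ∑ x, (X.adjMatrix ℝ).mulVec v x = l * ∑ x, v x := by
    rw [hv]
    simp [Finset.mul_sum]
  have h3 : ((k:ℝ) - l) * ∑ x, v x = 0 := by linarith [h1, h2]
  rcases mul_eq_zero.mp h3 with h | h
  · exact absurd (by linarith : l = (k:ℝ)) hlk
  · exact h

end

/-- Hard direction of the Cheeger inequality: `h(X)² / (2k) ≤ k - λ₁(X)`. -/
theorem cheeger_hard_direction {V : Type*} [Fintype V] [DecidableEq V] (k : ℕ)
    (X : SimpleGraph V) [DecidableRel X.Adj]
    (hconn : X.Connected) (hreg : X.IsRegularOfDegree k) :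
    X.cheegerConstant ^ 2 / (2 * k) ≤ (k : ℝ) - X.lambdaOne k := by
  rcases Nat.eq_zero_or_pos k with hk0 | hkpos
  · subst hk0
    have hA : X.adjMatrix ℝ = 0 := by
      ext x y
      simp only [SimpleGraph.adjMatrix_apply, Matrix.zero_apply, ite_eq_right_iff]
      intro hadj
      have hd := hreg x
      rw [← SimpleGraph.card_neighborFinset_eq_degree] at hd
      have : y ∈ X.neighborFinset x := (SimpleGraph.mem_neighborFinset X x y).mpr hadj
      rw [Finset.card_eq_zero.mp hd] at this
      simp at this
    have hset : {l : ℝ | (X.adjMatrix ℝ).IsEigenvalue l ∧ l ≠ ((0:ℕ):ℝ)} = ∅ := by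
      ext l
      simp only [Set.mem_setOf_eq, Set.mem_empty_iff_false, iff_false, not_and]
      rintro ⟨w, hw0, hwl⟩
      rw [hA, Matrix.zero_mulVec] at hwl
      rcases smul_eq_zero.mp hwl.symm with h | h
      · simp [h]
      · exact absurd h hw0
    rw [SimpleGraph.lambdaOne, hset, Real.sSup_empty]
    norm_num
  · have hk : (0:ℝ) < k := by exact_mod_cast hkpos
    rw [SimpleGraph.lambdaOne]
    rcases Set.eq_empty_or_nonempty
        {l : ℝ | (X.adjMatrix ℝ).IsEigenvalue l ∧ l ≠ (k:ℝ)} with hMe | hMne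
    · rw [hMe, Real.sSup_empty]
      have h0 := cheeger_nonneg X
      have hle := cheeger_le_deg X hreg
      rw [div_le_iff₀ (by positivity)]
      nlinarith
    · have hub : ∀ l ∈ {l : ℝ | (X.adjMatrix ℝ).IsEigenvalue l ∧ l ≠ (k:ℝ)},
          l ≤ (k:ℝ) - X.cheegerConstant ^ 2 / (2 * k) := by
        rintro l ⟨⟨v, hv0, hvl⟩, hlk⟩
        have hsum : ∑ x, v x = 0 := sum_eigvec_zero X hreg l v hvl hlk
        set P := univ.filter fun x => 0 < v x with hPdef
        set Nn := univ.filter fun x => 0 < (-v) x with hNdef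
        have hPne : P.Nonempty := by
          rw [Finset.nonempty_iff_ne_empty]
          intro hPe
          have hnp : ∀ x, v x ≤ 0 := by
            intro x
            by_contra hx
            have : x ∈ P := Finset.mem_filter.mpr ⟨Finset.mem_univ x, lt_of_not_ge hx⟩
            simp [hPe] at this
          have : ∀ x ∈ (univ : Finset V), v x = 0 :=
            (Finset.sum_eq_zero_iff_of_nonpos fun x _ => hnp x).mp hsum
          exact hv0 (funext fun x => this x (Finset.mem_univ x))
        have hNne : Nn.Nonempty := by
          rw [Finset.nonempty_iff_ne_empty]
          intro hNe
          have hnp : ∀ x, 0 ≤ v x := by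
            intro x
            by_contra hx
            have : x ∈ Nn := Finset.mem_filter.mpr ⟨Finset.mem_univ x,
              by simpa using neg_pos.mpr (lt_of_not_ge hx)⟩
            simp [hNe] at this
          have : ∀ x ∈ (univ : Finset V), v x = 0 :=
            (Finset.sum_eq_zero_iff_of_nonneg fun x _ => hnp x).mp hsum
          exact hv0 (funext fun x => this x (Finset.mem_univ x))
        have hdisj : Disjoint P Nn := by
          rw [Finset.disjoint_left]
          intro x hxP hxN
          have h1 : 0 < v x := (Finset.mem_filter.mp hxP).2
          have h2 : 0 < -v x := by simpa using (Finset.mem_filter.mp hxN).2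
          linarith
        have hcards : P.card + Nn.card ≤ Fintype.card V := by
          rw [← Finset.card_union_of_disjoint hdisj]
          exact Finset.card_le_univ _
        have hcore : X.cheegerConstant ^ 2 ≤ 2 * k * ((k:ℝ) - l) := by
          by_cases hsplit : 2 * P.card ≤ Fintype.card V
          · exact core X hreg l v hvl hPne hsplit
          · have h2N : 2 * Nn.card ≤ Fintype.card V := by omega
            have hvl' : (X.adjMatrix ℝ).mulVec (-v) = l • (-v) := by
              rw [Matrix.mulVec_neg, hvl, smul_neg]
            exact core X hreg l (-v) hvl' hNne h2N
        have : X.cheegerConstant ^ 2 / (2 * k) ≤ (k:ℝ) - l := by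
          rw [div_le_iff₀ (by positivity)]
          calc X.cheegerConstant ^ 2 ≤ 2 * k * ((k:ℝ) - l) := hcore
            _ = ((k:ℝ) - l) * (2 * k) := by ring
        linarith
      have hsle := csSup_le hMne hub
      linarith
end

section
/- (Alon–Boppana) For every k ≥ 3 and every ε > 0, there exists N such that every finite connected k-regular graph X with more than N vertices satisfies λ₁(X) ≥ 2√(k−1) − ε, where λ₁(X) is the largest adjacency eigenvalue different from k. -/
open SimpleGraph

open Finset
open scoped RealInnerProductSpace

set_option linter.unusedSectionVars false
set_option maxHeartbeats 1600000

namespace AB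

variable {V : Type*} [Fintype V] {X : SimpleGraph V} [DecidableRel X.Adj] {k : ℕ}

lemma abs_eig_le (hreg : X.IsRegularOfDegree k) {l : ℝ}
    (h : (X.adjMatrix ℝ).IsEigenvalue l) : |l| ≤ k := by
  classical
  obtain ⟨v, hv0, hv⟩ := h
  cases isEmpty_or_nonempty V with
  | inl hE => exact absurd (funext fun x => (hE.false x).elim) hv0
  | inr hNE =>
  obtain ⟨x, -, hx⟩ := Finset.exists_max_image univ (fun z => |v z|) univ_nonempty
  have hxpos : 0 < |v x| := by
    rcases lt_or_eq_of_le (abs_nonneg (v x)) with h' | h'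
    · exact h'
    · exfalso; apply hv0; funext z
      have h2 := hx z (mem_univ z)
      rw [← h'] at h2
      simpa using le_antisymm h2 (abs_nonneg _)
  have h1 : (X.adjMatrix ℝ).mulVec v x = l * v x := by rw [hv]; simp
  rw [adjMatrix_mulVec_apply] at h1
  have h2 : |l| * |v x| ≤ (k : ℝ) * |v x| := by
    rw [← abs_mul, ← h1]
    calc |∑ u ∈ X.neighborFinset x, v u| ≤ ∑ u ∈ X.neighborFinset x, |v u| :=
          Finset.abs_sum_le_sum_abs _ _
      _ ≤ ∑ u ∈ X.neighborFinset x, |v x| :=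
          Finset.sum_le_sum fun u _ => hx u (mem_univ u)
      _ = (k : ℝ) * |v x| := by
          rw [Finset.sum_const, card_neighborFinset_eq_degree, hreg x, nsmul_eq_mul]
  exact le_of_mul_le_mul_right h2 hxpos

lemma eigvec_k_const (hconn : X.Connected) (hreg : X.IsRegularOfDegree k) {v : V → ℝ}
    (hv : (X.adjMatrix ℝ).mulVec v = (k : ℝ) • v) : ∀ x y, v x = v y := by
  classical
  have : Nonempty V := hconn.nonempty
  obtain ⟨x₀, -, hx₀⟩ := Finset.exists_max_image univ v univ_nonempty
  suffices h : ∀ x, v x = v x₀ by intro x y; rw [h x, h y]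
  have key : ∀ x, v x = v x₀ → ∀ y, X.Adj x y → v y = v x₀ := by
    intro x hx y hxy
    have h1 : (X.adjMatrix ℝ).mulVec v x = (k : ℝ) * v x := by rw [hv]; simp
    rw [adjMatrix_mulVec_apply] at h1
    have h3 : ∑ z ∈ X.neighborFinset x, (v x₀ - v z) = 0 := by
      rw [Finset.sum_sub_distrib, h1, Finset.sum_const, card_neighborFinset_eq_degree, hreg x,
        nsmul_eq_mul, hx]
      ring
    have h4 := (Finset.sum_eq_zero_iff_of_nonneg
      (fun z _ => sub_nonneg.mpr (hx₀ z (mem_univ z)))).mp h3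
    have := h4 y (by rwa [mem_neighborFinset])
    linarith
  have walkprop : ∀ (a b : V) (p : X.Walk a b), v a = v x₀ → v b = v x₀ := by
    intro a b p
    induction p with
    | nil => exact id
    | cons h p ih => intro ha; exact ih (key _ ha _ h)
  intro x
  obtain ⟨p⟩ := hconn x₀ x
  exact walkprop _ _ p rfl

lemma adj_isHermitian : (X.adjMatrix ℝ).IsHermitian := by
  ext i j
  simp [Matrix.conjTranspose_apply, X.adj_comm]

lemma exists_eig_ge (hconn : X.Connected) (hreg : X.IsRegularOfDegree k)
    {f : V → ℝ} (hf0 : f ≠ 0) (hsum : ∑ x, f x = 0) {c : ℝ}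
    (hray : c * (∑ x, f x * f x) ≤ ∑ x, (X.adjMatrix ℝ).mulVec f x * f x) :
    ∃ l, (X.adjMatrix ℝ).IsEigenvalue l ∧ l ≠ (k : ℝ) ∧ c ≤ l := by
  classical
  have : Nonempty V := hconn.nonempty
  set A := X.adjMatrix ℝ with hAdef
  have hA : A.IsHermitian := adj_isHermitian
  set b := hA.eigenvectorBasis with hbdef
  set μ := hA.eigenvalues with hμdef
  set fE : EuclideanSpace ℝ V := (WithLp.equiv 2 (V → ℝ)).symm f with hfE
  have hfEapp : ∀ x, fE x = f x := fun x => rfl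
  set cc : V → ℝ := fun i => b.repr fE i with hcc
  have hinner : ∀ (u w : EuclideanSpace ℝ V), ⟪u, w⟫ = ∑ x, u x * w x := by
    intro u w
    simp [PiLp.inner_apply, RCLike.inner_apply, conj_trivial]
    exact Finset.sum_congr rfl fun x _ => mul_comm _ _
  have hccinner : ∀ i, cc i = ∑ x, (b i) x * f x := by
    intro i
    show b.repr fE i = _
    rw [b.repr_apply_apply fE i, hinner]
    exact Finset.sum_congr rfl fun x _ => rfl
  -- Parseval
  have hpars : ∑ i, cc i * cc i = ∑ x, f x * f x := by
    have h1 : ⟪b.repr fE, b.repr fE⟫ = ⟪fE, fE⟫ := b.repr.inner_map_map fE fE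
    rw [hinner, hinner] at h1
    exact h1
  -- spectral expansion of the quadratic form
  have hAfE : ∀ i, b.repr ((WithLp.equiv 2 (V → ℝ)).symm (A.mulVec f)) i = μ i * cc i := by
    intro i
    rw [b.repr_apply_apply, hinner]
    have hsym : ∀ x y : V, A x y = A y x := by
      intro x y; simp [hAdef, X.adj_comm]
    calc ∑ x, (b i) x * A.mulVec f x
        = ∑ x, ∑ y, (b i) x * (A x y * f y) := by
          refine Finset.sum_congr rfl fun x _ => ?_
          rw [show A.mulVec f x = ∑ y, A x y * f y from rfl, Finset.mul_sum]
      _ = ∑ y, ∑ x, (b i) x * (A x y * f y) := Finset.sum_comm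
      _ = ∑ y, (A.mulVec (b i)) y * f y := by
          refine Finset.sum_congr rfl fun y _ => ?_
          rw [show (A.mulVec (b i)) y = ∑ x, A y x * (b i) x from rfl, Finset.sum_mul]
          refine Finset.sum_congr rfl fun x _ => ?_
          rw [hsym x y]; ring
      _ = ∑ y, μ i * (b i) y * f y := by
          refine Finset.sum_congr rfl fun y _ => ?_
          have h3 : (A.mulVec (b i)) y = μ i * (b i) y := congrFun (hA.mulVec_eigenvectorBasis i) y
          rw [h3]
      _ = μ i * cc i := by
          rw [hccinner, Finset.mul_sum]
          refine Finset.sum_congr rfl fun y _ => by ring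
  have hquad : ∑ x, A.mulVec f x * f x = ∑ i, μ i * (cc i * cc i) := by
    have h1 : ⟪b.repr ((WithLp.equiv 2 (V → ℝ)).symm (A.mulVec f)), b.repr fE⟫
        = ⟪(WithLp.equiv 2 (V → ℝ)).symm (A.mulVec f), fE⟫ := b.repr.inner_map_map _ _
    rw [hinner, hinner] at h1
    calc ∑ x, A.mulVec f x * f x = ∑ i, b.repr ((WithLp.equiv 2 (V → ℝ)).symm (A.mulVec f)) i * cc i := by
          exact h1.symm
      _ = ∑ i, μ i * (cc i * cc i) := by
          refine Finset.sum_congr rfl fun i _ => ?_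
          rw [hAfE i]; ring
  -- coefficients along eigenvalue k vanish
  have hkzero : ∀ i, μ i = (k : ℝ) → cc i = 0 := by
    intro i hik
    have hev : (X.adjMatrix ℝ).mulVec (fun y => (b i) y) = (k : ℝ) • (fun y => (b i) y) := by
      rw [← hik]
      exact hA.mulVec_eigenvectorBasis i
    have hconst := eigvec_k_const hconn hreg hev
    obtain ⟨x₀⟩ := ‹Nonempty V›
    rw [hccinner]
    calc ∑ x, (b i) x * f x = ∑ x, (b i) x₀ * f x := by
          refine Finset.sum_congr rfl fun x _ => by rw [hconst x x₀]
      _ = (b i) x₀ * ∑ x, f x := by rw [Finset.mul_sum]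
      _ = 0 := by rw [hsum, mul_zero]
  -- positivity of the norm
  have hpos : 0 < ∑ x, f x * f x := by
    obtain ⟨x, hx⟩ := Function.ne_iff.mp hf0
    exact Finset.sum_pos' (fun i _ => mul_self_nonneg _)
      ⟨x, Finset.mem_univ x, mul_self_pos.mpr hx⟩
  -- some nonzero coefficient
  have hex : ∃ i, cc i ≠ 0 := by
    by_contra h
    push_neg at h
    rw [← hpars] at hpos
    have : (∑ i, cc i * cc i) = 0 := Finset.sum_eq_zero fun i _ => by rw [h i, mul_zero]
    rw [this] at hpos; exact lt_irrefl 0 hpos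
  obtain ⟨i₀, hi₀⟩ := hex
  -- main contradiction argument
  by_contra hcon
  push_neg at hcon
  have hlt : ∀ i, μ i ≠ (k : ℝ) → μ i < c := by
    intro i hik
    exact hcon (μ i) ⟨⇑(b i), fun h => b.orthonormal.ne_zero i (by ext x; simpa using congrFun h x), hA.mulVec_eigenvectorBasis i⟩ hik
  have hi₀k : μ i₀ ≠ (k : ℝ) := fun h => hi₀ (hkzero i₀ h)
  have hstrict : ∑ i, μ i * (cc i * cc i) < ∑ i, c * (cc i * cc i) := by
    refine Finset.sum_lt_sum (fun i _ => ?_) ⟨i₀, Finset.mem_univ i₀, ?_⟩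
    · by_cases hik : μ i = (k : ℝ)
      · rw [hkzero i hik]; simp
      · have := (hlt i hik).le
        nlinarith [mul_self_nonneg (cc i)]
    · have h1 : 0 < cc i₀ * cc i₀ := mul_self_pos.mpr hi₀
      exact mul_lt_mul_of_pos_right (hlt i₀ hi₀k) h1
  rw [← hquad] at hstrict
  have : ∑ i, c * (cc i * cc i) = c * ∑ x, f x * f x := by
    rw [← Finset.mul_sum, hpars]
  rw [this] at hstrict
  linarith

lemma lambdaOne_ge (hconn : X.Connected) (hreg : X.IsRegularOfDegree k)
    {f : V → ℝ} (hf0 : f ≠ 0) (hsum : ∑ x, f x = 0) {c : ℝ}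
    (hray : c * (∑ x, f x * f x) ≤ ∑ x, (X.adjMatrix ℝ).mulVec f x * f x) :
    c ≤ X.lambdaOne k := by
  obtain ⟨l, hl, hlk, hcl⟩ := exists_eig_ge hconn hreg hf0 hsum hray
  have hbdd : BddAbove {l : ℝ | (X.adjMatrix ℝ).IsEigenvalue l ∧ l ≠ (k : ℝ)} :=
    ⟨(k : ℝ), fun m hm => (abs_le.mp (abs_eig_le hreg hm.1)).2⟩
  exact hcl.trans (le_csSup hbdd ⟨hl, hlk⟩)

variable {u1 u2 : V}

noncomputable def dd (X : SimpleGraph V) (u1 u2 x : V) : ℕ :=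
  min (X.dist u1 x) (X.dist u2 x)

variable {u1 u2 : V}

lemma dd_lip (hconn : X.Connected) {x y : V} (hxy : X.Adj x y) :
    dd X u1 u2 y ≤ dd X u1 u2 x + 1 := by
  have h1 : X.dist u1 y ≤ X.dist u1 x + 1 := by
    have := hconn.dist_triangle (u := u1) (v := x) (w := y)
    rwa [(dist_eq_one_iff_adj).mpr hxy] at this
  have h2 : X.dist u2 y ≤ X.dist u2 x + 1 := by
    have := hconn.dist_triangle (u := u2) (v := x) (w := y)
    rwa [(dist_eq_one_iff_adj).mpr hxy] at this
  unfold dd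
  rcases min_cases (X.dist u1 x) (X.dist u2 x) with ⟨h, -⟩ | ⟨h, -⟩ <;> rw [h] <;> omega

lemma dd_zero_iff (hconn : X.Connected) {x : V} :
    dd X u1 u2 x = 0 ↔ x = u1 ∨ x = u2 := by
  unfold dd
  rw [Nat.min_eq_zero_iff]
  rw [hconn.dist_eq_zero_iff, hconn.dist_eq_zero_iff]
  constructor
  · rintro (h | h) <;> [left; right] <;> exact h.symm
  · rintro (h | h) <;> [left; right] <;> exact h.symm

lemma dd_self : dd X u1 u2 u1 = 0 := by
  unfold dd; rw [SimpleGraph.dist_self]; omega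

/-- every vertex at positive distance has a neighbour strictly closer -/
lemma exists_down (hconn : X.Connected) {x : V} (hx : dd X u1 u2 x ≠ 0) :
    ∃ y, X.Adj x y ∧ dd X u1 u2 y + 1 = dd X u1 u2 x := by
  -- pick the endpoint achieving the min
  obtain ⟨u, hu, hud⟩ : ∃ u, (u = u1 ∨ u = u2) ∧ X.dist u x = dd X u1 u2 x := by
    unfold dd
    rcases min_cases (X.dist u1 x) (X.dist u2 x) with ⟨h, -⟩ | ⟨h, -⟩
    · exact ⟨u1, Or.inl rfl, h.symm⟩
    · exact ⟨u2, Or.inr rfl, h.symm⟩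
  have hdist : X.dist x u ≠ 0 := by rwa [SimpleGraph.dist_comm, hud]
  obtain ⟨p, hp⟩ := SimpleGraph.exists_walk_of_dist_ne_zero hdist
  have hxu : x ≠ u := by
    intro h; rw [h] at hdist; exact hdist (SimpleGraph.dist_self)
  obtain ⟨y, hadj, p', hp'⟩ := p.exists_eq_cons_of_ne hxu
  have hlen : p'.length + 1 = dd X u1 u2 x := by
    have h5 : p.length = p'.length + 1 := by rw [hp']; simp
    rw [h5, SimpleGraph.dist_comm, hud] at hp
    exact hp
  have hdy : X.dist u y ≤ p'.length := by
    rw [SimpleGraph.dist_comm]; exact SimpleGraph.dist_le p'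
  have hddy : dd X u1 u2 y ≤ p'.length := by
    unfold dd
    rcases hu with h | h <;> subst h
    · exact le_trans (min_le_left _ _) hdy
    · exact le_trans (min_le_right _ _) hdy
  have hup : dd X u1 u2 x ≤ dd X u1 u2 y + 1 := dd_lip hconn (X.adj_symm hadj)
  exact ⟨y, hadj, by omega⟩

/-- every vertex has a neighbour not farther away -/
lemma exists_nonup (hconn : X.Connected) (h12 : X.Adj u1 u2) (x : V) :
    ∃ y, X.Adj x y ∧ dd X u1 u2 y ≤ dd X u1 u2 x := by
  by_cases hx : dd X u1 u2 x = 0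
  · rcases (dd_zero_iff hconn).mp hx with h | h
    · subst h
      exact ⟨u2, h12, by rw [hx]; unfold dd; rw [SimpleGraph.dist_self]; omega⟩
    · subst h
      exact ⟨u1, X.adj_symm h12, by rw [hx]; unfold dd; rw [SimpleGraph.dist_self]; omega⟩
  · obtain ⟨y, hy, hd⟩ := exists_down hconn hx
    exact ⟨y, hy, by omega⟩

noncomputable def nn (X : SimpleGraph V) (u1 u2 : V) [DecidableRel X.Adj] (j : ℕ) : ℕ :=
  (Finset.univ.filter (fun x => dd X u1 u2 x = j)).card

omit [Fintype V] in
lemma nn_zero_le [Fintype V] (hconn : X.Connected) : nn X u1 u2 0 ≤ 2 := by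
  classical
  unfold nn
  have : (Finset.univ.filter (fun x => dd X u1 u2 x = 0)) ⊆ {u1, u2} := by
    intro x hx
    simp only [Finset.mem_filter] at hx
    rcases (dd_zero_iff hconn).mp hx.2 with h | h <;> simp [h]
  exact (Finset.card_le_card this).trans ((Finset.card_insert_le _ _).trans (by simp))

lemma nn_succ_le (hconn : X.Connected) (h12 : X.Adj u1 u2)
    (hreg : X.IsRegularOfDegree k) (j : ℕ) :
    nn X u1 u2 (j + 1) ≤ (k - 1) * nn X u1 u2 j := by
  classical
  unfold nn
  set S1 := Finset.univ.filter (fun x => dd X u1 u2 x = j + 1) with hS1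
  set S0 := Finset.univ.filter (fun x => dd X u1 u2 x = j) with hS0
  -- the chosen "non-up" neighbour
  have hch : ∀ y : V, ∃ z, X.Adj y z ∧ dd X u1 u2 z ≤ dd X u1 u2 y :=
    fun y => exists_nonup hconn h12 y
  choose ch hch1 hch2 using hch
  have hsub : S1 ⊆ S0.biUnion (fun y => (X.neighborFinset y).erase (ch y)) := by
    intro x hx
    rw [hS1, Finset.mem_filter] at hx
    obtain ⟨y, hyadj, hyd⟩ := exists_down hconn (by omega : dd X u1 u2 x ≠ 0)
    rw [hx.2] at hyd
    rw [Finset.mem_biUnion]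
    refine ⟨y, ?_, ?_⟩
    · rw [hS0, Finset.mem_filter]; exact ⟨Finset.mem_univ _, by omega⟩
    · rw [Finset.mem_erase, mem_neighborFinset]
      refine ⟨?_, X.adj_symm hyadj⟩
      intro h
      have h2 := hch2 y
      rw [← h] at h2
      omega
  calc S1.card ≤ ∑ y ∈ S0, ((X.neighborFinset y).erase (ch y)).card :=
        le_trans (Finset.card_le_card hsub) (Finset.card_biUnion_le)
    _ ≤ ∑ _y ∈ S0, (k - 1) := by
        refine Finset.sum_le_sum fun y _ => ?_
        rw [Finset.card_erase_of_mem (by rw [mem_neighborFinset]; exact hch1 y)]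
        rw [card_neighborFinset_eq_degree, hreg y]
    _ = (k - 1) * S0.card := by rw [Finset.sum_const, smul_eq_mul, mul_comm]

lemma nn_growth (hconn : X.Connected) (h12 : X.Adj u1 u2)
    (hreg : X.IsRegularOfDegree k) (j : ℕ) :
    nn X u1 u2 j ≤ 2 * (k - 1) ^ j := by
  induction j with
  | zero => simpa using nn_zero_le hconn
  | succ j ih =>
    calc nn X u1 u2 (j + 1) ≤ (k - 1) * nn X u1 u2 j := nn_succ_le hconn h12 hreg j
      _ ≤ (k - 1) * (2 * (k - 1) ^ j) := Nat.mul_le_mul_left _ ih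
      _ = 2 * (k - 1) ^ (j + 1) := by ring

lemma ball_bound (hconn : X.Connected) (h12 : X.Adj u1 u2)
    (hreg : X.IsRegularOfDegree k) (hk : 3 ≤ k) (R : ℕ) :
    (Finset.univ.filter (fun x => dd X u1 u2 x ≤ R)).card ≤ 2 * k ^ (R + 1) := by
  classical
  have hsub : Finset.univ.filter (fun x => dd X u1 u2 x ≤ R) ⊆
      (Finset.range (R + 1)).biUnion
        (fun j => Finset.univ.filter (fun x => dd X u1 u2 x = j)) := by
    intro x hx
    rw [Finset.mem_filter] at hx
    rw [Finset.mem_biUnion]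
    exact ⟨dd X u1 u2 x, Finset.mem_range.mpr (by omega), by simp⟩
  have hgeom : ∀ R : ℕ, ∑ j ∈ Finset.range (R + 1), (k - 1) ^ j ≤ k ^ (R + 1) := by
    intro R
    induction R with
    | zero => simpa using by omega
    | succ R ih =>
      rw [Finset.sum_range_succ]
      have h1 : (k - 1) ^ (R + 1) ≤ k ^ (R + 1) := Nat.pow_le_pow_left (by omega) _
      have h2 : k ^ (R + 1) + k ^ (R + 1) ≤ k ^ (R + 1 + 1) := by
        have h3 : 2 * k ^ (R + 1) ≤ k * k ^ (R + 1) := Nat.mul_le_mul_right _ (by omega)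
        have h4 : k ^ (R + 1 + 1) = k * k ^ (R + 1) := by rw [pow_succ]; ring
        omega
      omega
  calc (Finset.univ.filter (fun x => dd X u1 u2 x ≤ R)).card
      ≤ ∑ j ∈ Finset.range (R + 1), nn X u1 u2 j :=
        le_trans (Finset.card_le_card hsub) Finset.card_biUnion_le
    _ ≤ ∑ j ∈ Finset.range (R + 1), 2 * (k - 1) ^ j :=
        Finset.sum_le_sum fun j _ => nn_growth hconn h12 hreg j
    _ = 2 * ∑ j ∈ Finset.range (R + 1), (k - 1) ^ j := by rw [Finset.mul_sum]
    _ ≤ 2 * k ^ (R + 1) := Nat.mul_le_mul_left _ (hgeom R)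

noncomputable def qq (k : ℕ) : ℝ := Real.sqrt ((k : ℝ) - 1)

noncomputable def ww (k r j : ℕ) : ℝ := if j ≤ r then ((qq k)⁻¹) ^ j else 0

noncomputable def gg (X : SimpleGraph V) (u1 u2 : V) (k r : ℕ) (x : V) : ℝ :=
  ww k r (dd X u1 u2 x)

lemma qq_sq (hk : 3 ≤ k) : qq k ^ 2 = (k : ℝ) - 1 := by
  have : (0:ℝ) ≤ (k:ℝ) - 1 := by
    have : (3:ℝ) ≤ (k:ℝ) := by exact_mod_cast hk
    linarith
  rw [qq, Real.sq_sqrt this]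

lemma qq_gt_one (hk : 3 ≤ k) : 1 < qq k := by
  have h1 : (2:ℝ) ≤ (k:ℝ) - 1 := by
    have : (3:ℝ) ≤ (k:ℝ) := by exact_mod_cast hk
    linarith
  have h2 : (1:ℝ)^2 < (k:ℝ) - 1 := by nlinarith
  exact (Real.lt_sqrt (by linarith)).mpr h2

lemma qq_pos (hk : 3 ≤ k) : 0 < qq k := lt_trans one_pos (qq_gt_one hk)

lemma ww_nonneg (r j : ℕ) (hk : 3 ≤ k) : 0 ≤ ww k r j := by
  have hq := qq_pos hk
  unfold ww
  split
  · positivity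
  · exact le_refl 0

lemma ww_zero {r j : ℕ} (h : r < j) : ww k r j = 0 := by
  unfold ww; rw [if_neg (by omega)]

lemma ww_start (r : ℕ) : ww k r 0 = 1 := by
  unfold ww; rw [if_pos (Nat.zero_le r)]; norm_num

lemma ww_succ {r j : ℕ} (h : j + 1 ≤ r) : ww k r (j + 1) = ww k r j * (qq k)⁻¹ := by
  unfold ww
  rw [if_pos h, if_pos (by omega)]
  ring

/-- pointwise spectral gain at each level -/
lemma phi_ge (hk : 3 ≤ k) (r j : ℕ) :
    2 * qq k * ww k r j ^ 2 - (if j = r then (2 * qq k - 1) * ww k r r ^ 2 else 0)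
      ≤ (k : ℝ) * ww k r j ^ 2 - ((k : ℝ) - 1) * (ww k r j - ww k r (j + 1)) ^ 2 := by
  have hq := qq_pos hk
  have hq2 := qq_sq hk
  rcases lt_trichotomy j r with hj | hj | hj
  · -- interior level: equality with gain 2q
    rw [if_neg (by omega)]
    rw [ww_succ (by omega : j + 1 ≤ r)]
    have key : ((k:ℝ) - 1) * (ww k r j - ww k r j * (qq k)⁻¹) ^ 2
        = (qq k * ww k r j - ww k r j) ^ 2 := by
      rw [← hq2]
      have : qq k * (ww k r j - ww k r j * (qq k)⁻¹) = qq k * ww k r j - ww k r j := by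
        field_simp
      calc qq k ^ 2 * (ww k r j - ww k r j * (qq k)⁻¹) ^ 2
          = (qq k * (ww k r j - ww k r j * (qq k)⁻¹)) ^ 2 := by ring
        _ = (qq k * ww k r j - ww k r j) ^ 2 := by rw [this]
    rw [key]
    have hkq : (k : ℝ) = qq k ^ 2 + 1 := by rw [hq2]; ring
    rw [hkq]
    ring_nf
    nlinarith [sq_nonneg (ww k r j)]
  · -- boundary level r
    rw [if_pos hj, hj, ww_zero (by omega : r < r + 1)]
    ring_nf
    nlinarith [sq_nonneg (ww k r r)]
  · -- outside
    rw [if_neg (by omega), ww_zero hj, ww_zero (by omega : r < j + 1)]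
    norm_num

lemma rayleigh (hconn : X.Connected) (h12 : X.Adj u1 u2) (hreg : X.IsRegularOfDegree k)
    (hk : 3 ≤ k) (r : ℕ) :
    (2 * qq k - (2 * qq k - 1) / (r + 1)) * (∑ x, gg X u1 u2 k r x ^ 2)
      ≤ ∑ x, ∑ y, (if X.Adj x y then gg X u1 u2 k r x * gg X u1 u2 k r y else 0) := by
  classical
  have hq := qq_pos hk
  have hq1 := qq_gt_one hk
  have hkR : (3:ℝ) ≤ (k:ℝ) := by exact_mod_cast hk
  unfold gg
  set q := qq k with hqdef
  set w : ℕ → ℝ := ww k r with hwdef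
  set d : V → ℕ := dd X u1 u2 with hddef
  set S2 := ∑ x, w (d x) ^ 2 with hS2
  set P := ∑ x, ∑ y, (if X.Adj x y then w (d x) * w (d y) else 0) with hP
  set L := ∑ x, ∑ y, (if X.Adj x y then w (d x) * (w (d x) - w (d y)) else 0) with hL
  have e1 : ∀ (x : V) (F : V → ℝ),
      (∑ y, if X.Adj x y then F y else 0) = ∑ y ∈ X.neighborFinset x, F y := by
    intro x F; rw [neighborFinset_eq_filter, Finset.sum_filter]
  have hdeg : ∀ x : V, ((X.neighborFinset x).card : ℝ) = k := by
    intro x; rw [card_neighborFinset_eq_degree, hreg x]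
  -- Laplacian identity
  have hLkP : L = k * S2 - P := by
    rw [hL, hP, hS2, Finset.mul_sum, ← Finset.sum_sub_distrib]
    refine Finset.sum_congr rfl fun x _ => ?_
    rw [e1, e1]
    calc ∑ y ∈ X.neighborFinset x, w (d x) * (w (d x) - w (d y))
        = ∑ y ∈ X.neighborFinset x, (w (d x) ^ 2 - w (d x) * w (d y)) := by
          refine Finset.sum_congr rfl fun y _ => by ring
      _ = ∑ _y ∈ X.neighborFinset x, w (d x) ^ 2
            - ∑ y ∈ X.neighborFinset x, w (d x) * w (d y) := Finset.sum_sub_distrib _ _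
      _ = (k:ℝ) * w (d x) ^ 2 - ∑ y ∈ X.neighborFinset x, w (d x) * w (d y) := by
          rw [Finset.sum_const, nsmul_eq_mul, hdeg x]
  -- symmetrization
  have hswap : (∑ x, ∑ y, if X.Adj x y then (w (d x) - w (d y)) ^ 2 else 0) = 2 * L := by
    have h1 : L = ∑ x, ∑ y, (if X.Adj x y then w (d y) * (w (d y) - w (d x)) else 0) := by
      rw [hL, Finset.sum_comm]
      refine Finset.sum_congr rfl fun x _ => Finset.sum_congr rfl fun y _ => ?_
      exact if_congr (X.adj_comm y x) rfl rfl
    calc ∑ x, ∑ y, (if X.Adj x y then (w (d x) - w (d y)) ^ 2 else 0)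
        = ∑ x, ∑ y, ((if X.Adj x y then w (d x) * (w (d x) - w (d y)) else 0)
            + (if X.Adj x y then w (d y) * (w (d y) - w (d x)) else 0)) := by
          refine Finset.sum_congr rfl fun x _ => Finset.sum_congr rfl fun y _ => ?_
          by_cases h : X.Adj x y <;> simp [h] <;> ring
      _ = (∑ x, ∑ y, (if X.Adj x y then w (d x) * (w (d x) - w (d y)) else 0))
            + ∑ x, ∑ y, (if X.Adj x y then w (d y) * (w (d y) - w (d x)) else 0) := by
          rw [← Finset.sum_add_distrib]
          exact Finset.sum_congr rfl fun x _ => Finset.sum_add_distrib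
      _ = 2 * L := by rw [← hL, ← h1]; ring
  -- reduction to "up" pairs
  have hU2 : (∑ x, ∑ y, if X.Adj x y then (w (d x) - w (d y)) ^ 2 else 0)
      = 2 * ∑ x, ∑ y, (if X.Adj x y ∧ d x < d y then (w (d x) - w (d y)) ^ 2 else 0) := by
    have hpt : ∀ x y : V, (if X.Adj x y then (w (d x) - w (d y)) ^ 2 else 0)
        = (if X.Adj x y ∧ d x < d y then (w (d x) - w (d y)) ^ 2 else 0)
          + (if X.Adj y x ∧ d y < d x then (w (d y) - w (d x)) ^ 2 else 0) := by
      intro x y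
      by_cases h : X.Adj x y
      · have h' : X.Adj y x := X.adj_symm h
        rcases lt_trichotomy (d x) (d y) with hd | hd | hd
        · rw [if_pos h, if_pos ⟨h, hd⟩, if_neg (by omega ∘ And.right)]
          ring
        · have hw : w (d x) = w (d y) := by rw [hd]
          rw [if_pos h, if_neg (by omega ∘ And.right), if_neg (by omega ∘ And.right), hw]
          ring
        · rw [if_pos h, if_neg (by omega ∘ And.right), if_pos ⟨h', hd⟩]
          ring
      · have h' : ¬ X.Adj y x := fun hc => h (X.adj_symm hc)
        simp [h, h']
    calc ∑ x, ∑ y, (if X.Adj x y then (w (d x) - w (d y)) ^ 2 else 0)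
        = ∑ x, ∑ y, ((if X.Adj x y ∧ d x < d y then (w (d x) - w (d y)) ^ 2 else 0)
            + (if X.Adj y x ∧ d y < d x then (w (d y) - w (d x)) ^ 2 else 0)) := by
          exact Finset.sum_congr rfl fun x _ => Finset.sum_congr rfl fun y _ => hpt x y
      _ = (∑ x, ∑ y, (if X.Adj x y ∧ d x < d y then (w (d x) - w (d y)) ^ 2 else 0))
            + ∑ x, ∑ y, (if X.Adj y x ∧ d y < d x then (w (d y) - w (d x)) ^ 2 else 0) := by
          rw [← Finset.sum_add_distrib]
          exact Finset.sum_congr rfl fun x _ => Finset.sum_add_distrib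
      _ = 2 * ∑ x, ∑ y, (if X.Adj x y ∧ d x < d y then (w (d x) - w (d y)) ^ 2 else 0) := by
          rw [Finset.sum_comm (s := univ) (t := univ)
            (f := fun x y => if X.Adj y x ∧ d y < d x then (w (d y) - w (d x)) ^ 2 else 0)]
          ring
  -- bound on the up-sum for each vertex
  have hUbound : ∀ x : V, (∑ y, if X.Adj x y ∧ d x < d y then (w (d x) - w (d y)) ^ 2 else 0)
      ≤ ((k:ℝ) - 1) * (w (d x) - w (d x + 1)) ^ 2 := by
    intro x
    have hUx : ∀ y : V, (if X.Adj x y ∧ d x < d y then (w (d x) - w (d y)) ^ 2 else 0)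
        = (if X.Adj x y ∧ d x < d y then (w (d x) - w (d x + 1)) ^ 2 else 0) := by
      intro y
      by_cases h : X.Adj x y ∧ d x < d y
      · rw [if_pos h, if_pos h]
        have hlip : d y ≤ d x + 1 := dd_lip hconn h.1
        have : d y = d x + 1 := by omega
        rw [this]
      · rw [if_neg h, if_neg h]
    rw [Finset.sum_congr rfl fun y _ => hUx y, ← Finset.sum_filter, Finset.sum_const,
      nsmul_eq_mul]
    obtain ⟨y₀, hy₀a, hy₀d⟩ := exists_nonup hconn h12 x
    have hsub : univ.filter (fun y => X.Adj x y ∧ d x < d y) ⊆ (X.neighborFinset x).erase y₀ := by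
      intro y hy
      rw [Finset.mem_filter] at hy
      rw [Finset.mem_erase, mem_neighborFinset]
      refine ⟨fun h => ?_, hy.2.1⟩
      rw [h] at hy
      have hy₀d' : d y₀ ≤ d x := hy₀d
      omega
    have hcard : ((univ.filter (fun y => X.Adj x y ∧ d x < d y)).card : ℝ) ≤ (k:ℝ) - 1 := by
      have h1 : (univ.filter (fun y => X.Adj x y ∧ d x < d y)).card ≤ k - 1 := by
        refine le_trans (Finset.card_le_card hsub) ?_
        rw [Finset.card_erase_of_mem (by rw [mem_neighborFinset]; exact hy₀a),
          card_neighborFinset_eq_degree, hreg x]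
      have h2 := (Nat.cast_le (α := ℝ)).mpr h1
      rwa [Nat.cast_sub (by omega), Nat.cast_one] at h2
    exact mul_le_mul_of_nonneg_right hcard (sq_nonneg _)
  -- lower bound for P via the level potentials
  have hPlow : ∑ x, ((k:ℝ) * w (d x) ^ 2 - ((k:ℝ) - 1) * (w (d x) - w (d x + 1)) ^ 2) ≤ P := by
    have hLU : 2 * L = 2 * ∑ x, ∑ y, (if X.Adj x y ∧ d x < d y then (w (d x) - w (d y)) ^ 2 else 0) := by
      rw [← hswap, hU2]
    have hLU2 : L = ∑ x, ∑ y, (if X.Adj x y ∧ d x < d y then (w (d x) - w (d y)) ^ 2 else 0) := by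
      linarith
    have hsum : ∑ x, ∑ y, (if X.Adj x y ∧ d x < d y then (w (d x) - w (d y)) ^ 2 else 0)
        ≤ ∑ x, ((k:ℝ) - 1) * (w (d x) - w (d x + 1)) ^ 2 :=
      Finset.sum_le_sum fun x _ => hUbound x
    have hexp : ∑ x, ((k:ℝ) * w (d x) ^ 2 - ((k:ℝ) - 1) * (w (d x) - w (d x + 1)) ^ 2)
        = (k:ℝ) * S2 - ∑ x, ((k:ℝ) - 1) * (w (d x) - w (d x + 1)) ^ 2 := by
      rw [hS2, Finset.mul_sum, ← Finset.sum_sub_distrib]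
    rw [hexp]
    have hPL : P = (k:ℝ) * S2 - L := by linarith [hLkP]
    rw [hPL, hLU2]
    linarith
  -- apply the pointwise potential estimate
  have hphi : ∀ x : V, 2 * q * w (d x) ^ 2 - (if d x = r then (2 * q - 1) * w r ^ 2 else 0)
      ≤ (k:ℝ) * w (d x) ^ 2 - ((k:ℝ) - 1) * (w (d x) - w (d x + 1)) ^ 2 :=
    fun x => phi_ge hk r (d x)
  have hdefsum : ∑ x, (if d x = r then (2 * q - 1) * w r ^ 2 else 0)
      = (nn X u1 u2 r : ℝ) * ((2 * q - 1) * w r ^ 2) := by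
    rw [← Finset.sum_filter, Finset.sum_const, nsmul_eq_mul]
    rfl
  have h2 : 2 * q * S2 - (nn X u1 u2 r : ℝ) * ((2 * q - 1) * w r ^ 2)
      ≤ ∑ x, ((k:ℝ) * w (d x) ^ 2 - ((k:ℝ) - 1) * (w (d x) - w (d x + 1)) ^ 2) := by
    have := Finset.sum_le_sum fun x (_ : x ∈ univ) => hphi x
    rw [Finset.sum_sub_distrib, hdefsum, ← Finset.mul_sum, ← hS2] at this
    exact this
  -- mass bound
  have hmass : ((r:ℝ) + 1) * ((nn X u1 u2 r : ℝ) * w r ^ 2) ≤ S2 := by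
    set a : ℕ → ℝ := fun j => (nn X u1 u2 j : ℝ) * w j ^ 2 with hadef
    have hk1 : (0:ℝ) < (k:ℝ) - 1 := by linarith
    have hstep : ∀ j, j + 1 ≤ r → a (j + 1) ≤ a j := by
      intro j hj
      have hn : ((nn X u1 u2 (j+1) : ℕ) : ℝ) ≤ ((k:ℝ) - 1) * (nn X u1 u2 j : ℝ) := by
        have h1 := nn_succ_le hconn h12 hreg j
        have h2 := (Nat.cast_le (α := ℝ)).mpr h1
        rwa [Nat.cast_mul, Nat.cast_sub (by omega), Nat.cast_one] at h2
      have hw2 : w (j + 1) ^ 2 = w j ^ 2 / ((k:ℝ) - 1) := by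
        rw [hwdef]
        rw [ww_succ hj, ← qq_sq hk]
        have : qq k ≠ 0 := ne_of_gt hq
        field_simp
      show (nn X u1 u2 (j+1) : ℝ) * w (j+1) ^ 2 ≤ (nn X u1 u2 j : ℝ) * w j ^ 2
      rw [hw2]
      rw [div_eq_mul_inv, ← mul_assoc]
      have hinv : (0:ℝ) ≤ (((k:ℝ) - 1))⁻¹ := by positivity
      calc (nn X u1 u2 (j+1) : ℝ) * w j ^ 2 * ((k:ℝ) - 1)⁻¹
          ≤ (((k:ℝ) - 1) * (nn X u1 u2 j : ℝ)) * w j ^ 2 * ((k:ℝ) - 1)⁻¹ := by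
            have := mul_le_mul_of_nonneg_right (mul_le_mul_of_nonneg_right hn (sq_nonneg (w j))) hinv
            exact this
        _ = (nn X u1 u2 j : ℝ) * w j ^ 2 * (((k:ℝ) - 1) * ((k:ℝ) - 1)⁻¹) := by ring
        _ = (nn X u1 u2 j : ℝ) * w j ^ 2 := by
            rw [mul_inv_cancel₀ (ne_of_gt hk1), mul_one]
    have hchain : ∀ m j, j + m ≤ r → a (j + m) ≤ a j := by
      intro m
      induction m with
      | zero => intro j _; simp
      | succ m ih =>
        intro j h
        calc a (j + (m + 1)) = a ((j + 1) + m) := by rw [show j + (m+1) = (j+1)+m by omega]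
          _ ≤ a (j + 1) := ih (j + 1) (by omega)
          _ ≤ a j := hstep j (by omega)
    have hmono : ∀ j, j ≤ r → a r ≤ a j := by
      intro j hj
      have := hchain (r - j) j (by omega)
      rwa [show j + (r - j) = r by omega] at this
    have hlevels : ∑ j ∈ Finset.range (r + 1), a j ≤ S2 := by
      have hdisj : ∀ j1 ∈ Finset.range (r+1), ∀ j2 ∈ Finset.range (r+1), j1 ≠ j2 →
          Disjoint (univ.filter (fun x => d x = j1)) (univ.filter (fun x => d x = j2)) := by
        intro j1 _ j2 _ hne
        rw [Finset.disjoint_filter]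
        intro x _ h1 h2
        omega
      calc ∑ j ∈ Finset.range (r + 1), a j
          = ∑ j ∈ Finset.range (r + 1), ∑ x ∈ univ.filter (fun x => d x = j), w (d x) ^ 2 := by
            refine Finset.sum_congr rfl fun j _ => ?_
            rw [hadef]
            have : ∑ x ∈ univ.filter (fun x => d x = j), w (d x) ^ 2
                = ∑ _x ∈ univ.filter (fun x => d x = j), w j ^ 2 := by
              refine Finset.sum_congr rfl fun x hx => ?_
              rw [Finset.mem_filter] at hx
              rw [hx.2]
            rw [this, Finset.sum_const, nsmul_eq_mul]
            rfl
        _ = ∑ x ∈ (Finset.range (r+1)).biUnion (fun j => univ.filter (fun x => d x = j)),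
              w (d x) ^ 2 := (Finset.sum_biUnion hdisj).symm
        _ ≤ S2 := by
            rw [hS2]
            exact Finset.sum_le_sum_of_subset_of_nonneg (Finset.subset_univ _)
              (fun x _ _ => sq_nonneg _)
    have hsumlow : ((r:ℝ) + 1) * a r ≤ ∑ j ∈ Finset.range (r + 1), a j := by
      have := Finset.sum_le_sum fun j (hj : j ∈ Finset.range (r+1)) =>
        hmono j (by rw [Finset.mem_range] at hj; omega)
      rw [Finset.sum_const, Finset.card_range, nsmul_eq_mul] at this
      calc ((r:ℝ) + 1) * a r = ((r + 1 : ℕ) : ℝ) * a r := by push_cast; ring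
        _ ≤ ∑ j ∈ Finset.range (r + 1), a j := this
    exact le_trans hsumlow hlevels
  -- final combination
  have hr1 : (0:ℝ) < (r:ℝ) + 1 := by positivity
  have hD : (0:ℝ) ≤ 2 * q - 1 := by linarith
  set M := (nn X u1 u2 r : ℝ) * w r ^ 2 with hM
  have hMnonneg : 0 ≤ M := by
    rw [hM]
    have : 0 ≤ w r := by rw [hwdef]; exact ww_nonneg r r hk
    positivity
  have hdiv : (2 * q - 1) * M ≤ (2 * q - 1) / ((r:ℝ) + 1) * S2 := by
    rw [div_mul_eq_mul_div, le_div_iff₀ hr1]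
    calc (2 * q - 1) * M * ((r:ℝ) + 1) = (2 * q - 1) * (((r:ℝ) + 1) * M) := by ring
      _ ≤ (2 * q - 1) * S2 := mul_le_mul_of_nonneg_left hmass hD
  have hfin : (2 * q - (2 * q - 1) / ((r:ℝ) + 1)) * S2 = 2 * q * S2 - (2 * q - 1) / ((r:ℝ) + 1) * S2 := by
    ring
  have hPfinal : 2 * q * S2 - (nn X u1 u2 r : ℝ) * ((2 * q - 1) * w r ^ 2) ≤ P :=
    le_trans h2 hPlow
  have hMrw : (nn X u1 u2 r : ℝ) * ((2 * q - 1) * w r ^ 2) = (2 * q - 1) * M := by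
    rw [hM]; ring
  rw [hMrw] at hPfinal
  calc (2 * q - (2 * q - 1) / ((r:ℝ) + 1)) * S2
      = 2 * q * S2 - (2 * q - 1) / ((r:ℝ) + 1) * S2 := hfin
    _ ≤ 2 * q * S2 - (2 * q - 1) * M := by linarith
    _ ≤ P := hPfinal

lemma gg_nonneg (hk : 3 ≤ k) (u1 u2 x : V) (r : ℕ) : 0 ≤ gg X u1 u2 k r x :=
  ww_nonneg r _ hk

lemma gg_supp {r : ℕ} {x : V} (h : gg X u1 u2 k r x ≠ 0) : dd X u1 u2 x ≤ r := by
  by_contra hc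
  exact h (ww_zero (by omega))

lemma gg_base (r : ℕ) : gg X u1 u2 k r u1 = 1 := by
  unfold gg
  rw [dd_self, ww_start]

lemma combined (hconn : X.Connected) (hreg : X.IsRegularOfDegree k) (hk : 3 ≤ k)
    {u1 u2 u3 u4 : V} (h12 : X.Adj u1 u2) (h34 : X.Adj u3 u4) (r : ℕ)
    (hfar : ∀ x y : V, dd X u1 u2 x ≤ r → dd X u3 u4 y ≤ r → x ≠ y ∧ ¬ X.Adj x y) :
    ∃ f : V → ℝ, f ≠ 0 ∧ ∑ x, f x = 0 ∧
      (2 * qq k - (2 * qq k - 1) / (r + 1)) * (∑ x, f x * f x)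
        ≤ ∑ x, (X.adjMatrix ℝ).mulVec f x * f x := by
  classical
  set g1 : V → ℝ := gg X u1 u2 k r with hg1
  set g2 : V → ℝ := gg X u3 u4 k r with hg2
  set A := ∑ x, g1 x with hA
  set B := ∑ x, g2 x with hB
  have hg1n : ∀ x, 0 ≤ g1 x := fun x => gg_nonneg hk u1 u2 x r
  have hg2n : ∀ x, 0 ≤ g2 x := fun x => gg_nonneg hk u3 u4 x r
  have hApos : 0 < A := by
    rw [hA]
    refine Finset.sum_pos' (fun x _ => hg1n x) ⟨u1, Finset.mem_univ u1, ?_⟩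
    rw [hg1, gg_base]; norm_num
  have hBpos : 0 < B := by
    rw [hB]
    refine Finset.sum_pos' (fun x _ => hg2n x) ⟨u3, Finset.mem_univ u3, ?_⟩
    rw [hg2, gg_base]; norm_num
  set f : V → ℝ := fun x => B * g1 x - A * g2 x with hf
  have hfx : ∀ x, f x = B * g1 x - A * g2 x := fun x => rfl
  have hzero : ∀ x : V, g1 x = 0 ∨ g2 x = 0 := by
    intro x
    by_contra hc
    push_neg at hc
    exact (hfar x x (gg_supp hc.1) (gg_supp hc.2)).1 rfl
  have hcross0 : ∀ x, g1 x * g2 x = 0 := by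
    intro x
    rcases hzero x with h | h <;> rw [h] <;> ring
  -- f ≠ 0
  have hg2u1 : g2 u1 = 0 := by
    rcases hzero u1 with h | h
    · rw [hg1, gg_base] at h; norm_num at h
    · exact h
  have hfne : f ≠ 0 := by
    intro hc
    have h1 : f u1 = 0 := by rw [hc]; rfl
    rw [hfx, hg2u1] at h1
    rw [hg1, gg_base] at h1
    simp at h1
    linarith
  -- sum zero
  have hsum0 : ∑ x, f x = 0 := by
    calc ∑ x, f x = ∑ x, (B * g1 x - A * g2 x) := rfl
      _ = B * ∑ x, g1 x - A * ∑ x, g2 x := by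
          rw [Finset.sum_sub_distrib, Finset.mul_sum, Finset.mul_sum]
      _ = 0 := by rw [← hA, ← hB]; ring
  -- norm of f
  have hS2f : ∑ x, f x * f x = B^2 * (∑ x, g1 x ^ 2) + A^2 * (∑ x, g2 x ^ 2) := by
    rw [Finset.mul_sum, Finset.mul_sum, ← Finset.sum_add_distrib]
    refine Finset.sum_congr rfl fun x _ => ?_
    rw [hfx]
    linear_combination (-(2*A*B)) * hcross0 x
  -- quadratic form of f
  have pw : ∀ x y : V, (if X.Adj x y then f x * f y else 0)
      = B^2 * (if X.Adj x y then g1 x * g1 y else 0)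
        + A^2 * (if X.Adj x y then g2 x * g2 y else 0) := by
    intro x y
    by_cases h : X.Adj x y
    · rw [if_pos h, if_pos h, if_pos h]
      have hc1 : g1 x * g2 y = 0 := by
        by_cases h1 : g1 x = 0
        · rw [h1]; ring
        · by_cases h2 : g2 y = 0
          · rw [h2]; ring
          · exact absurd h (hfar x y (gg_supp h1) (gg_supp h2)).2
      have hc2 : g1 y * g2 x = 0 := by
        by_cases h1 : g1 y = 0
        · rw [h1]; ring
        · by_cases h2 : g2 x = 0
          · rw [h2]; ring
          · exact absurd (X.adj_symm h) (hfar y x (gg_supp h1) (gg_supp h2)).2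
      rw [hfx, hfx]
      linear_combination (-(A*B)) * hc1 + (-(A*B)) * hc2
    · rw [if_neg h, if_neg h, if_neg h]; ring
  have hmv : ∑ x, (X.adjMatrix ℝ).mulVec f x * f x
      = ∑ x, ∑ y, (if X.Adj x y then f x * f y else 0) := by
    refine Finset.sum_congr rfl fun x _ => ?_
    rw [adjMatrix_mulVec_apply, Finset.sum_mul, neighborFinset_eq_filter, Finset.sum_filter]
    refine Finset.sum_congr rfl fun y _ => ?_
    by_cases h : X.Adj x y
    · rw [if_pos h, if_pos h]; ring
    · rw [if_neg h, if_neg h]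
  have hP : ∑ x, ∑ y, (if X.Adj x y then f x * f y else 0)
      = B^2 * (∑ x, ∑ y, (if X.Adj x y then g1 x * g1 y else 0))
        + A^2 * (∑ x, ∑ y, (if X.Adj x y then g2 x * g2 y else 0)) := by
    rw [Finset.mul_sum, Finset.mul_sum, ← Finset.sum_add_distrib]
    refine Finset.sum_congr rfl fun x _ => ?_
    rw [Finset.mul_sum, Finset.mul_sum, ← Finset.sum_add_distrib]
    exact Finset.sum_congr rfl fun y _ => pw x y
  refine ⟨f, hfne, hsum0, ?_⟩
  have hr1 := rayleigh hconn h12 hreg hk r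
  have hr2 := rayleigh hconn h34 hreg hk r
  rw [hmv, hP, hS2f]
  have hB2 : (0:ℝ) ≤ B^2 := sq_nonneg B
  have hA2 : (0:ℝ) ≤ A^2 := sq_nonneg A
  have t1 := mul_le_mul_of_nonneg_left hr1 hB2
  have t2 := mul_le_mul_of_nonneg_left hr2 hA2
  rw [← hg1] at t1
  rw [← hg2] at t2
  nlinarith [t1, t2]

lemma far_helper (hconn : X.Connected) {r : ℕ} {x y u u' : V}
    (h1 : X.dist u x ≤ r) (h2 : X.dist u' y ≤ r) (h3 : 2 * r + 2 ≤ X.dist u u') :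
    x ≠ y ∧ ¬ X.Adj x y := by
  constructor
  · intro he
    have t1 := hconn.dist_triangle (u := u) (v := x) (w := u')
    have t2 : X.dist x u' = X.dist u' y := by rw [he, SimpleGraph.dist_comm]
    omega
  · intro hadj
    have t1 := hconn.dist_triangle (u := u) (v := x) (w := u')
    have t2 := hconn.dist_triangle (u := x) (v := y) (w := u')
    have t3 : X.dist x y = 1 := SimpleGraph.dist_eq_one_iff_adj.mpr hadj
    have t4 : X.dist y u' = X.dist u' y := SimpleGraph.dist_comm
    omega

end AB

/-- Alon–Boppana: for every `k ≥ 3` and `ε > 0` there is `N` such that every finite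
connected `k`-regular graph on more than `N` vertices has `λ₁ ≥ 2√(k-1) - ε`. -/
theorem alon_boppana (k : ℕ) (hk : 3 ≤ k) (ε : ℝ) (hε : 0 < ε) :
    ∃ N : ℕ, ∀ (V : Type) (_ : Fintype V) (X : SimpleGraph V)
      (_ : DecidableRel X.Adj),
      X.Connected → X.IsRegularOfDegree k → N < Fintype.card V →
      2 * Real.sqrt ((k : ℝ) - 1) - ε ≤ X.lambdaOne k := by
  classical
  set q : ℝ := Real.sqrt ((k : ℝ) - 1) with hqdef
  have hqq : AB.qq k = q := rfl
  have hq1 : 1 < q := AB.qq_gt_one hk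
  set r : ℕ := ⌈(2 * q - 1) / ε⌉₊ with hrdef
  refine ⟨2 * k ^ (2 * r + 2 + 1) + 2, ?_⟩
  intro V instV X instAdj hconn hreg hcard
  have hNpos : 0 < Fintype.card V := by omega
  have hne : Nonempty V := Fintype.card_pos_iff.mp hNpos
  obtain ⟨u1⟩ := hne
  have hdeg : 0 < (X.neighborFinset u1).card := by
    rw [card_neighborFinset_eq_degree, hreg u1]; omega
  obtain ⟨u2, hu2⟩ := Finset.card_pos.mp hdeg
  have h12 : X.Adj u1 u2 := by rwa [SimpleGraph.mem_neighborFinset] at hu2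
  have hball := AB.ball_bound hconn h12 hreg hk (2 * r + 2)
  have hz : ∃ z : V, ¬ (AB.dd X u1 u2 z ≤ 2 * r + 2) := by
    by_contra hc
    push_neg at hc
    have heq : (Finset.univ.filter (fun x => AB.dd X u1 u2 x ≤ 2 * r + 2)) = Finset.univ :=
      Finset.filter_true_of_mem fun x _ => hc x
    rw [heq, Finset.card_univ] at hball
    omega
  obtain ⟨z, hz⟩ := hz
  have hz' : 2 * r + 3 ≤ AB.dd X u1 u2 z := by omega
  obtain ⟨u4, h34, hd4⟩ := AB.exists_down hconn (show AB.dd X u1 u2 z ≠ 0 by omega)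
  have hd4' : 2 * r + 2 ≤ AB.dd X u1 u2 u4 := by omega
  have hfar : ∀ x y : V, AB.dd X u1 u2 x ≤ r → AB.dd X z u4 y ≤ r →
      x ≠ y ∧ ¬ X.Adj x y := by
    intro x y h1 h2
    have h1' : X.dist u1 x ≤ r ∨ X.dist u2 x ≤ r := min_le_iff.mp h1
    have h2' : X.dist z y ≤ r ∨ X.dist u4 y ≤ r := min_le_iff.mp h2
    have hc3 : 2 * r + 3 ≤ X.dist u1 z ∧ 2 * r + 3 ≤ X.dist u2 z := le_min_iff.mp hz'
    have hc4 : 2 * r + 2 ≤ X.dist u1 u4 ∧ 2 * r + 2 ≤ X.dist u2 u4 := le_min_iff.mp hd4'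
    rcases h1' with ha | ha <;> rcases h2' with hb | hb
    · exact AB.far_helper hconn ha (by rwa [SimpleGraph.dist_comm] at hb) (by omega)
    · exact AB.far_helper hconn ha (by rwa [SimpleGraph.dist_comm] at hb) (by omega)
    · exact AB.far_helper hconn ha (by rwa [SimpleGraph.dist_comm] at hb) (by omega)
    · exact AB.far_helper hconn ha (by rwa [SimpleGraph.dist_comm] at hb) (by omega)
  obtain ⟨f, hf0, hsum, hray⟩ := AB.combined hconn hreg hk h12 h34 r hfar
  have hl := AB.lambdaOne_ge hconn hreg hf0 hsum hray
  rw [hqq] at hl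
  have hrge : (2 * q - 1) / ε ≤ (r : ℝ) := Nat.le_ceil _
  have hrb : (2 * q - 1) / ((r : ℝ) + 1) ≤ ε := by
    rw [div_le_iff₀ (by positivity)]
    have h1 : 2 * q - 1 ≤ ε * (r : ℝ) := by
      rw [div_le_iff₀ hε] at hrge
      linarith
    nlinarith
  linarith
end

section
/- For any infinite sequence (X_n) of finite connected k-regular graphs with |X_n| → ∞, one has liminf λ₁(X_n) ≥ 2√(k−1), where λ₁ denotes the largest nontrivial adjacency eigenvalue. -/
open SimpleGraph Filter

set_option linter.unusedSectionVars false

namespace AlonBoppanaAux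

open Finset Matrix

variable {V : Type*} [Fintype V] [DecidableEq V] {G : SimpleGraph V} [DecidableRel G.Adj]
variable {k : ℕ}

/-- Swapping the roles of the two endpoints in a sum over ordered adjacent pairs. -/
lemma nbr_sum_comm (G : SimpleGraph V) [DecidableRel G.Adj] (h : V → V → ℝ) :
    ∑ y, ∑ z ∈ G.neighborFinset y, h y z = ∑ y, ∑ z ∈ G.neighborFinset y, h z y := by
  have key : ∀ h' : V → V → ℝ,
      ∑ y, ∑ z ∈ G.neighborFinset y, h' y z
        = ∑ y : V, ∑ z : V, if G.Adj y z then h' y z else 0 := by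
    intro h'
    refine Finset.sum_congr rfl fun y _ => ?_
    rw [neighborFinset_eq_filter, Finset.sum_filter]
  rw [key, key]
  rw [Finset.sum_comm]
  refine Finset.sum_congr rfl fun y _ => Finset.sum_congr rfl fun z _ => ?_
  simp only [G.adj_comm y z]

lemma bilin_comm (G : SimpleGraph V) [DecidableRel G.Adj] (v w : V → ℝ) :
    ∑ y, (G.adjMatrix ℝ *ᵥ v) y * w y = ∑ y, v y * (G.adjMatrix ℝ *ᵥ w) y := by
  have h1 : ∑ y, (G.adjMatrix ℝ *ᵥ v) y * w y
      = ∑ y, ∑ z ∈ G.neighborFinset y, v z * w y := by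
    refine Finset.sum_congr rfl fun y _ => ?_
    rw [adjMatrix_mulVec_apply, Finset.sum_mul]
  have h2 : ∑ y, v y * (G.adjMatrix ℝ *ᵥ w) y
      = ∑ y, ∑ z ∈ G.neighborFinset y, v y * w z := by
    refine Finset.sum_congr rfl fun y _ => ?_
    rw [adjMatrix_mulVec_apply, Finset.mul_sum]
  rw [h1, h2, nbr_sum_comm]

/-- every eigenvalue of the adjacency matrix of a `k`-regular graph is at most `k`. -/
lemma eigenvalue_le (hreg : G.IsRegularOfDegree k) {l : ℝ}
    (h : (G.adjMatrix ℝ).IsEigenvalue l) : l ≤ (k : ℝ) := by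
  obtain ⟨v, hv0, hv⟩ := h
  obtain ⟨x0, hx0⟩ : ∃ x, v x ≠ 0 := Function.ne_iff.mp hv0
  obtain ⟨x, -, hx⟩ := Finset.exists_max_image Finset.univ (fun z => |v z|) ⟨x0, mem_univ x0⟩
  have hvx : 0 < |v x| := lt_of_lt_of_le (abs_pos.mpr hx0) (hx x0 (mem_univ x0))
  have h1 : (G.adjMatrix ℝ *ᵥ v) x = l * v x := by rw [hv]; rfl
  have h2 : |l| * |v x| ≤ (k : ℝ) * |v x| := by
    rw [← abs_mul, ← h1, adjMatrix_mulVec_apply]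
    calc |∑ z ∈ G.neighborFinset x, v z| ≤ ∑ z ∈ G.neighborFinset x, |v z| :=
          Finset.abs_sum_le_sum_abs _ _
      _ ≤ ∑ _z ∈ G.neighborFinset x, |v x| :=
          Finset.sum_le_sum fun z _ => hx z (mem_univ z)
      _ = (k : ℝ) * |v x| := by
          rw [Finset.sum_const, nsmul_eq_mul]
          congr 1
          exact_mod_cast congrArg Nat.cast (hreg x)
  have hl : |l| ≤ (k : ℝ) := le_of_mul_le_mul_right (by simpa [mul_comm] using h2) hvx
  exact (le_abs_self l).trans hl

lemma lambdaOne_le (hreg : G.IsRegularOfDegree k) : G.lambdaOne k ≤ (k : ℝ) :=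
  Real.sSup_le (fun _ hl => eigenvalue_le hreg hl.1) (Nat.cast_nonneg k)

lemma bddAbove_eigs (hreg : G.IsRegularOfDegree k) :
    BddAbove {l : ℝ | (G.adjMatrix ℝ).IsEigenvalue l ∧ l ≠ (k : ℝ)} :=
  ⟨(k : ℝ), fun _ hl => eigenvalue_le hreg hl.1⟩

/-- maximum principle: an eigenvector for eigenvalue `k` of a connected `k`-regular graph is
constant. -/
lemma eigenvector_constant (hconn : G.Connected) (hreg : G.IsRegularOfDegree k)
    {v : V → ℝ} (hv : G.adjMatrix ℝ *ᵥ v = (k : ℝ) • v) :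
    ∀ x y, v x = v y := by
  have hne : Nonempty V := hconn.nonempty
  obtain ⟨x, -, hx⟩ := Finset.exists_max_image Finset.univ v univ_nonempty
  -- every neighbor of a maximizer is a maximizer
  have step : ∀ y, v y = v x → ∀ z, G.Adj y z → v z = v x := by
    intro y hy z hz
    by_contra hlt
    have hzlt : v z < v x := lt_of_le_of_ne (hx z (mem_univ z)) hlt
    have h1 : (G.adjMatrix ℝ *ᵥ v) y = (k : ℝ) * v y := by rw [hv]; rfl
    have h2 : ∑ w ∈ G.neighborFinset y, v w < ∑ _w ∈ G.neighborFinset y, v x := by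
      refine Finset.sum_lt_sum (fun w _ => hx w (mem_univ w)) ⟨z, ?_, hzlt⟩
      exact (G.mem_neighborFinset y z).mpr hz
    rw [adjMatrix_mulVec_apply] at h1
    have h3 : ∑ _w ∈ G.neighborFinset y, v x = (k : ℝ) * v x := by
      rw [Finset.sum_const, nsmul_eq_mul]
      congr 1
      exact_mod_cast congrArg Nat.cast (hreg y)
    rw [h1, h3, hy] at h2
    exact lt_irrefl _ h2
  -- propagate along walks
  have walkstep : ∀ (u y : V) (_ : G.Walk u y), v u = v x → v y = v x := by
    intro u y w
    induction w with
    | nil => exact fun h => h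
    | cons h p ih => exact fun hu => ih (step _ hu _ h)
  intro y z
  have hy := walkstep x y ((hconn x y).some) rfl
  have hz := walkstep x z ((hconn x z).some) rfl
  rw [hy, hz]

/-- Rayleigh quotient bound: for any `g` orthogonal to constants,
`⟨Ag, g⟩ ≤ λ₁ ‖g‖²`. -/
lemma rayleigh (hconn : G.Connected) (hreg : G.IsRegularOfDegree k)
    (g : V → ℝ) (hg : ∑ y, g y = 0) :
    ∑ y, (G.adjMatrix ℝ *ᵥ g) y * g y ≤ G.lambdaOne k * ∑ y, g y ^ 2 := by
  have hA : (G.adjMatrix ℝ).IsHermitian := by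
    ext i j
    simp [Matrix.conjTranspose_apply, G.adj_comm i j]
  have hne : Nonempty V := hconn.nonempty
  obtain ⟨y0⟩ := hne
  set b := hA.eigenvectorBasis with hb
  set μ := hA.eigenvalues with hμ
  have key : ∀ x y : EuclideanSpace ℝ V, (inner ℝ x y : ℝ) = ∑ i, x i * y i := by
    intro x y; simp [PiLp.inner_apply, mul_comm]
  let g' : EuclideanSpace ℝ V := WithLp.toLp 2 g
  let Ag : EuclideanSpace ℝ V := WithLp.toLp 2 (G.adjMatrix ℝ *ᵥ g)
  have hAui : ∀ i, (inner ℝ Ag (b i) : ℝ) = μ i * (inner ℝ g' (b i) : ℝ) := by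
    intro i
    rw [key, key]
    calc ∑ y, Ag y * (b i) y = ∑ y, g y * ((G.adjMatrix ℝ) *ᵥ ⇑(b i)) y :=
          bilin_comm G g (b i)
      _ = ∑ y, g y * (μ i * (b i) y) := by rw [hA.mulVec_eigenvectorBasis i]; rfl
      _ = μ i * ∑ y, g y * (b i) y := by
          rw [Finset.mul_sum]; exact Finset.sum_congr rfl fun y _ => by ring
  have hterm : ∀ i, μ i * (inner ℝ g' (b i) : ℝ) ^ 2 ≤ G.lambdaOne k * (inner ℝ g' (b i) : ℝ) ^ 2 := by
    intro i
    by_cases hc : (inner ℝ g' (b i) : ℝ) = 0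
    · simp [hc]
    · have hik : μ i ≠ (k : ℝ) := by
        intro hik
        apply hc
        have hconst := eigenvector_constant hconn hreg (v := ⇑(b i))
          (by rw [hA.mulVec_eigenvectorBasis i,
                show hA.eigenvalues i = (k : ℝ) from hik])
        rw [key]
        calc ∑ y, g' y * (b i) y = ∑ y, g y * (b i) y0 :=
              Finset.sum_congr rfl fun y _ => congrArg (g y * ·) (hconst y y0)
          _ = (∑ y, g y) * (b i) y0 := by rw [Finset.sum_mul]
          _ = 0 := by rw [hg, zero_mul]
      have hbne : ⇑(b i) ≠ (0 : V → ℝ) := by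
        intro hfun
        apply b.orthonormal.ne_zero i
        apply PiLp.ext
        intro y
        exact congrFun hfun y
      have hmem : μ i ∈ {l : ℝ | (G.adjMatrix ℝ).IsEigenvalue l ∧ l ≠ (k : ℝ)} :=
        ⟨⟨⇑(b i), hbne, hA.mulVec_eigenvectorBasis i⟩, hik⟩
      exact mul_le_mul_of_nonneg_right (le_csSup (bddAbove_eigs hreg) hmem) (sq_nonneg _)
  have expand := b.sum_inner_mul_inner Ag g'
  have expand2 := b.sum_inner_mul_inner g' g'
  have lhs_eq : ∑ y, (G.adjMatrix ℝ *ᵥ g) y * g y = ∑ i, μ i * (inner ℝ g' (b i) : ℝ) ^ 2 := by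
    have h0 : ∑ y, (G.adjMatrix ℝ *ᵥ g) y * g y = (inner ℝ Ag g' : ℝ) := (key Ag g').symm
    rw [h0, ← expand]
    refine Finset.sum_congr rfl fun i _ => ?_
    rw [hAui i, real_inner_comm (b i) g', sq]
    ring
  have rhs_eq : ∑ y, g y ^ 2 = ∑ i, (inner ℝ g' (b i) : ℝ) ^ 2 := by
    have h0 : ∑ y, g y ^ 2 = (inner ℝ g' g' : ℝ) := by
      rw [key]; refine Finset.sum_congr rfl fun y _ => (sq (g y)) ▸ rfl
    rw [h0, ← expand2]
    refine Finset.sum_congr rfl fun i _ => ?_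
    rw [real_inner_comm (b i) g', sq]
  rw [lhs_eq, rhs_eq, Finset.mul_sum]
  exact Finset.sum_le_sum fun i _ => hterm i

/-! ### Distance to an edge, spheres -/

variable (G) in
/-- distance to the pair `{a, b}`. -/
noncomputable def mdist (a b y : V) : ℕ := min (G.dist a y) (G.dist b y)

variable (G) in
/-- sphere of radius `i` around the pair `{a, b}`. -/
noncomputable def sphereB (a b : V) (i : ℕ) : Finset V :=
  univ.filter (fun y => mdist G a b y = i)

lemma dist_le_one_of_adj {y z : V} (h : G.Adj y z) : G.dist y z ≤ 1 := by
  simpa using SimpleGraph.dist_le (SimpleGraph.Walk.cons h SimpleGraph.Walk.nil)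

lemma mdist_adj_le (hconn : G.Connected) {a b y z : V} (h : G.Adj y z) :
    mdist G a b z ≤ mdist G a b y + 1 := by
  have h1 : G.dist a z ≤ G.dist a y + 1 := by
    have ht := hconn.dist_triangle (u := a) (v := y) (w := z)
    have := dist_le_one_of_adj h; omega
  have h2 : G.dist b z ≤ G.dist b y + 1 := by
    have ht := hconn.dist_triangle (u := b) (v := y) (w := z)
    have := dist_le_one_of_adj h; omega
  have := min_le_min h1 h2
  calc mdist G a b z ≤ min (G.dist a y + 1) (G.dist b y + 1) := this
    _ = mdist G a b y + 1 := Nat.succ_min_succ _ _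

lemma exists_adj_dist_pred (hconn : G.Connected) {a y : V} {i : ℕ}
    (h : G.dist a y = i + 1) : ∃ z, G.Adj y z ∧ G.dist a z = i := by
  have hne : y ≠ a := by
    rintro rfl
    simp [SimpleGraph.dist_self] at h
  obtain ⟨p, hp⟩ := SimpleGraph.exists_walk_of_dist_ne_zero
    (show G.dist a y ≠ 0 by omega)
  obtain ⟨z, hadj, q, hq⟩ := SimpleGraph.Walk.exists_eq_cons_of_ne hne p.reverse
  have hlq : q.length = i := by
    have := congrArg SimpleGraph.Walk.length hq
    rw [SimpleGraph.Walk.length_reverse, hp, h, SimpleGraph.Walk.length_cons] at this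
    omega
  have h1 : G.dist a z ≤ i := by
    rw [SimpleGraph.dist_comm]
    exact hlq ▸ SimpleGraph.dist_le q
  have h2 : i ≤ G.dist a z := by
    have ht := hconn.dist_triangle (u := a) (v := z) (w := y)
    have hzy : G.dist z y ≤ 1 := by
      rw [SimpleGraph.dist_comm]; exact dist_le_one_of_adj hadj
    omega
  exact ⟨z, hadj, le_antisymm h1 h2⟩

lemma exists_adj_mdist_pred (hconn : G.Connected) {a b y : V} {i : ℕ}
    (h : mdist G a b y = i + 1) : ∃ z, G.Adj y z ∧ mdist G a b z = i := by
  have hstep : ∀ z, G.Adj y z → mdist G a b z ≤ i → mdist G a b z = i := by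
    intro z hadj hle
    have := mdist_adj_le hconn (a := a) (b := b) hadj.symm
    omega
  rcases min_cases (G.dist a y) (G.dist b y) with ⟨heq, -⟩ | ⟨heq, -⟩
  · obtain ⟨z, hadj, hz⟩ := exists_adj_dist_pred hconn (a := a)
      (show G.dist a y = i + 1 by rw [← heq]; exact h)
    exact ⟨z, hadj, hstep z hadj (le_trans (min_le_left _ _) hz.le)⟩
  · obtain ⟨z, hadj, hz⟩ := exists_adj_dist_pred hconn (a := b)
      (show G.dist b y = i + 1 by rw [← heq]; exact h)
    exact ⟨z, hadj, hstep z hadj (le_trans (min_le_right _ _) hz.le)⟩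

lemma mdist_self_left (hab : G.Adj a b) : mdist G a b a = 0 := by
  simp [mdist, SimpleGraph.dist_self]

lemma exists_adj_mdist_le (hconn : G.Connected) {a b : V} (hab : G.Adj a b) (y : V) :
    ∃ z, G.Adj y z ∧ mdist G a b z ≤ mdist G a b y := by
  cases h : mdist G a b y with
  | zero =>
    rcases Nat.min_eq_zero_iff.mp h with ha | hb
    · have hya : a = y := hconn.dist_eq_zero_iff.mp ha
      subst hya
      exact ⟨b, hab, by simp [mdist, SimpleGraph.dist_self]⟩
    · have hyb : b = y := hconn.dist_eq_zero_iff.mp hb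
      subst hyb
      exact ⟨a, hab.symm, by simp [mdist, SimpleGraph.dist_self]⟩
  | succ i =>
    obtain ⟨z, hadj, hz⟩ := exists_adj_mdist_pred hconn h
    exact ⟨z, hadj, by omega⟩

lemma card_nbr_sphere_le (hconn : G.Connected) (hreg : G.IsRegularOfDegree k)
    {a b : V} (hab : G.Adj a b) (y : V) :
    ((G.neighborFinset y) ∩ sphereB G a b (mdist G a b y + 1)).card ≤ k - 1 := by
  obtain ⟨z, hadj, hz⟩ := exists_adj_mdist_le hconn hab y
  have hzmem : z ∈ G.neighborFinset y := (G.mem_neighborFinset y z).mpr hadj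
  have hznot : z ∉ sphereB G a b (mdist G a b y + 1) := by
    simp only [sphereB, mem_filter, mem_univ, true_and]
    omega
  have hsub : (G.neighborFinset y) ∩ sphereB G a b (mdist G a b y + 1)
      ⊆ (G.neighborFinset y).erase z := by
    intro w hw
    rw [mem_inter] at hw
    refine Finset.mem_erase.mpr ⟨?_, hw.1⟩
    rintro rfl
    exact hznot hw.2
  calc ((G.neighborFinset y) ∩ sphereB G a b (mdist G a b y + 1)).card
      ≤ ((G.neighborFinset y).erase z).card := Finset.card_le_card hsub
    _ = (G.neighborFinset y).card - 1 := Finset.card_erase_of_mem hzmem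
    _ = k - 1 := by rw [G.card_neighborFinset_eq_degree, hreg y]

lemma card_sphere_succ_le (hconn : G.Connected) (hreg : G.IsRegularOfDegree k)
    {a b : V} (hab : G.Adj a b) (i : ℕ) :
    (sphereB G a b (i + 1)).card ≤ (k - 1) * (sphereB G a b i).card := by
  have hsub : sphereB G a b (i + 1) ⊆
      (sphereB G a b i).biUnion (fun y => G.neighborFinset y ∩ sphereB G a b (i + 1)) := by
    intro z hz
    have hz' : mdist G a b z = i + 1 := (mem_filter.mp hz).2
    obtain ⟨w, hadj, hw⟩ := exists_adj_mdist_pred hconn hz'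
    refine Finset.mem_biUnion.mpr ⟨w, ?_, ?_⟩
    · exact mem_filter.mpr ⟨mem_univ w, hw⟩
    · exact mem_inter.mpr ⟨(G.mem_neighborFinset w z).mpr hadj.symm, hz⟩
  calc (sphereB G a b (i + 1)).card
      ≤ ∑ y ∈ sphereB G a b i, (G.neighborFinset y ∩ sphereB G a b (i + 1)).card :=
        (Finset.card_le_card hsub).trans (Finset.card_biUnion_le)
    _ ≤ ∑ _y ∈ sphereB G a b i, (k - 1) := by
        refine Finset.sum_le_sum fun y hy => ?_
        have hyd : mdist G a b y = i := (mem_filter.mp hy).2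
        have := card_nbr_sphere_le hconn hreg hab y
        rwa [hyd] at this
    _ = (k - 1) * (sphereB G a b i).card := by
        rw [Finset.sum_const, smul_eq_mul, mul_comm]

lemma card_sphere_zero_le (hconn : G.Connected) {a b : V} :
    (sphereB G a b 0).card ≤ 2 := by
  have hsub : sphereB G a b 0 ⊆ {a, b} := by
    intro y hy
    have hy' : mdist G a b y = 0 := (mem_filter.mp hy).2
    rcases Nat.min_eq_zero_iff.mp hy' with ha | hb
    · have := hconn.dist_eq_zero_iff.mp ha
      simp [← this]
    · have := hconn.dist_eq_zero_iff.mp hb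
      simp [← this]
  have h2 : ({a, b} : Finset V).card ≤ 2 :=
    (Finset.card_insert_le _ _).trans (by simp)
  exact (Finset.card_le_card hsub).trans h2

lemma card_sphere_le (hconn : G.Connected) (hreg : G.IsRegularOfDegree k)
    {a b : V} (hab : G.Adj a b) (i : ℕ) :
    (sphereB G a b i).card ≤ 2 * (k - 1) ^ i := by
  induction i with
  | zero => simpa using card_sphere_zero_le hconn
  | succ i ih =>
    calc (sphereB G a b (i + 1)).card ≤ (k - 1) * (sphereB G a b i).card :=
          card_sphere_succ_le hconn hreg hab i
      _ ≤ (k - 1) * (2 * (k - 1) ^ i) := Nat.mul_le_mul_left _ ih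
      _ = 2 * (k - 1) ^ (i + 1) := by ring

lemma sum_card_sphere_le (hconn : G.Connected) (hreg : G.IsRegularOfDegree k)
    (hk : 3 ≤ k) {a b : V} (hab : G.Adj a b) (R : ℕ) :
    ∑ i ∈ range (R + 1), (sphereB G a b i).card ≤ 4 * (k - 1) ^ R := by
  induction R with
  | zero => simpa using (card_sphere_zero_le hconn (a := a) (b := b)).trans (by norm_num)
  | succ R ih =>
    rw [Finset.sum_range_succ]
    have h1 : (sphereB G a b (R + 1)).card ≤ 2 * (k - 1) ^ (R + 1) :=
      card_sphere_le hconn hreg hab (R + 1)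
    have h2 : 4 * (k - 1) ^ R + 2 * (k - 1) ^ (R + 1) ≤ 4 * (k - 1) ^ (R + 1) := by
      have hp : (k - 1) ^ (R + 1) = (k - 1) ^ R * (k - 1) := pow_succ _ _
      have h3 : 2 ≤ k - 1 := by omega
      nlinarith [Nat.one_le_two_pow (n := R), pow_pos (show 0 < k - 1 by omega) R]
    omega

lemma card_sphere_mono (hconn : G.Connected) (hreg : G.IsRegularOfDegree k)
    {a b : V} (hab : G.Adj a b) {i j : ℕ} (hij : i ≤ j) :
    (sphereB G a b j).card ≤ (k - 1) ^ (j - i) * (sphereB G a b i).card := by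
  obtain ⟨t, rfl⟩ := Nat.exists_eq_add_of_le hij
  rw [Nat.add_sub_cancel_left]
  clear hij
  induction t with
  | zero => simp
  | succ t ih =>
    have h1 : (sphereB G a b (i + t + 1)).card ≤ (k - 1) * (sphereB G a b (i + t)).card :=
      card_sphere_succ_le hconn hreg hab (i + t)
    calc (sphereB G a b (i + (t + 1))).card
        = (sphereB G a b (i + t + 1)).card := by ring_nf
      _ ≤ (k - 1) * (sphereB G a b (i + t)).card := h1
      _ ≤ (k - 1) * ((k - 1) ^ t * (sphereB G a b i).card) := Nat.mul_le_mul_left _ ih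
      _ = (k - 1) ^ (t + 1) * (sphereB G a b i).card := by ring

lemma card_univ_le_of_mdist_le (hconn : G.Connected) (hreg : G.IsRegularOfDegree k)
    (hk : 3 ≤ k) {a b : V} (hab : G.Adj a b) (R : ℕ)
    (h : ∀ y, mdist G a b y ≤ R) : Fintype.card V ≤ 4 * (k - 1) ^ R := by
  have hsub : (univ : Finset V) ⊆ (range (R + 1)).biUnion (fun i => sphereB G a b i) := by
    intro y _
    refine Finset.mem_biUnion.mpr ⟨mdist G a b y, ?_, ?_⟩
    · exact mem_range.mpr (by have := h y; omega)
    · exact mem_filter.mpr ⟨mem_univ y, rfl⟩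
  calc Fintype.card V = (univ : Finset V).card := rfl
    _ ≤ ((range (R + 1)).biUnion (fun i => sphereB G a b i)).card := Finset.card_le_card hsub
    _ ≤ ∑ i ∈ range (R + 1), (sphereB G a b i).card := Finset.card_biUnion_le
    _ ≤ 4 * (k - 1) ^ R := sum_card_sphere_le hconn hreg hk hab R

variable (G) in
/-- The Nilli test function: radially decaying from the edge `{a,b}`. -/
noncomputable def testFn (k : ℕ) (a b : V) (m : ℕ) : V → ℝ := fun y =>
  if mdist G a b y ≤ m then ((Real.sqrt ((k : ℝ) - 1))⁻¹) ^ (mdist G a b y) else 0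

lemma sum_mdist_fn {a b : V} (m : ℕ) (F : ℕ → ℝ) (hF : ∀ i, m < i → F i = 0) :
    ∑ y, F (mdist G a b y)
      = ∑ i ∈ range (m + 1), ((sphereB G a b i).card : ℝ) * F i := by
  rw [← Finset.sum_filter_add_sum_filter_not univ (fun y => mdist G a b y ≤ m)
    (fun y => F (mdist G a b y))]
  have h2 : ∑ y ∈ univ.filter (fun y => ¬ mdist G a b y ≤ m), F (mdist G a b y) = 0 :=
    Finset.sum_eq_zero fun y hy => hF _ (by have := (mem_filter.mp hy).2; omega)
  rw [h2, add_zero]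
  rw [← Finset.sum_fiberwise_of_maps_to (g := fun y => mdist G a b y) (t := range (m + 1))
      (fun y hy => by
        simp only [mem_filter] at hy
        refine mem_range.mpr ?_
        show mdist G a b y < m + 1
        omega)
      (fun y => F (mdist G a b y))]
  refine Finset.sum_congr rfl fun i hi => ?_
  have hi' : i ≤ m := by have := mem_range.mp hi; omega
  have hfe : (univ.filter (fun y => mdist G a b y ≤ m)).filter
      (fun y => mdist G a b y = i) = sphereB G a b i := by
    ext y
    simp only [sphereB, mem_filter, mem_univ, true_and, Finset.filter_filter]
    omega
  rw [hfe]
  rw [Finset.sum_congr rfl (fun y hy => by rw [(mem_filter.mp hy).2])]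
  rw [Finset.sum_const, nsmul_eq_mul]

lemma main_estimate (hconn : G.Connected) (hreg : G.IsRegularOfDegree k) (hk : 3 ≤ k)
    {a b : V} (hab : G.Adj a b) (m : ℕ) :
    2 * Real.sqrt ((k : ℝ) - 1) * (1 - 1 / (m + 1)) * ∑ y, (testFn G k a b m) y ^ 2
      ≤ ∑ y, (G.adjMatrix ℝ *ᵥ testFn G k a b m) y * (testFn G k a b m) y := by
  set r := Real.sqrt ((k : ℝ) - 1) with hrdef
  have hk2 : (2 : ℝ) ≤ (k : ℝ) - 1 := by
    have : (3 : ℝ) ≤ (k : ℝ) := by exact_mod_cast hk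
    linarith
  have hr0 : 0 < r := Real.sqrt_pos.mpr (by linarith)
  have hrsq : r ^ 2 = (k : ℝ) - 1 := Real.sq_sqrt (by linarith)
  have hr1 : 1 ≤ r := by nlinarith
  set c : ℝ := r⁻¹ with hcdef
  have hc0 : 0 < c := inv_pos.mpr hr0
  have hc1 : c ≤ 1 := by
    rw [hcdef]
    exact inv_le_one_of_one_le₀ hr1
  set q : ℝ := c ^ 2 with hqdef
  have hq : q = ((k : ℝ) - 1)⁻¹ := by
    rw [hqdef, hcdef, ← hrsq]
    rw [inv_pow]
  have hq0 : 0 < q := by positivity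
  set fv : ℕ → ℝ := fun i => if i ≤ m then c ^ i else 0 with hfv
  set f : V → ℝ := testFn G k a b m with hfdef
  have hfval : ∀ y, f y = fv (mdist G a b y) := fun y => rfl
  set bR : ℕ → ℝ := fun i => ((sphereB G a b i).card : ℝ) with hbR
  have hbR0 : ∀ i, 0 ≤ bR i := fun i => Nat.cast_nonneg _
  -- the squared norm
  set W : ℝ := ∑ y, f y ^ 2 with hWdef
  have hW : W = ∑ i ∈ range (m + 1), bR i * fv i ^ 2 := by
    have hF0 : ∀ i, m < i → (fun j => fv j ^ 2) i = 0 := by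
      intro i hi
      simp only [hfv]
      rw [if_neg (by omega)]
      norm_num
    have hsum := sum_mdist_fn (G := G) (a := a) (b := b) m (fun j => fv j ^ 2) hF0
    rw [hWdef, show (∑ y, f y ^ 2) = ∑ y, (fun j => fv j ^ 2) (mdist G a b y) from
      Finset.sum_congr rfl fun y _ => by rw [hfval y], hsum]
  set A' : ℝ := ∑ i ∈ range m, bR i * q ^ i with hA'
  set B' : ℝ := bR m * q ^ m with hB'
  have hB'0 : 0 ≤ B' := mul_nonneg (hbR0 m) (by positivity)
  have hA'0 : 0 ≤ A' := Finset.sum_nonneg fun i _ => mul_nonneg (hbR0 i) (by positivity)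
  have hWAB : W = A' + B' := by
    rw [hW, Finset.sum_range_succ]
    congr 1
    · refine Finset.sum_congr rfl fun i hi => ?_
      have hi' : i ≤ m := by have := mem_range.mp hi; omega
      rw [hfv]
      simp only [if_pos hi']
      rw [hqdef, ← pow_mul, ← pow_mul]
      ring
    · rw [hfv]
      simp only [if_pos le_rfl]
      rw [hB', hqdef, ← pow_mul, ← pow_mul]
      ring
  -- key decreasing property
  have hmono : ∀ i ∈ range m, B' ≤ bR i * q ^ i := by
    intro i hi
    have hi' : i ≤ m := (mem_range.mp hi).le
    have hcard := card_sphere_mono hconn hreg hab hi'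
    have hcast : bR m ≤ ((k : ℝ) - 1) ^ (m - i) * bR i := by
      have h := (Nat.cast_le (α := ℝ)).mpr hcard
      push_cast [Nat.cast_sub (show 1 ≤ k by omega)] at h
      exact h
    calc B' = bR m * (q ^ i * q ^ (m - i)) := by
          rw [hB', ← pow_add]
          congr 2
          omega
      _ ≤ (((k : ℝ) - 1) ^ (m - i) * bR i) * (q ^ i * q ^ (m - i)) :=
          mul_le_mul_of_nonneg_right hcast (by positivity)
      _ = (bR i * q ^ i) * (((k : ℝ) - 1) ^ (m - i) * q ^ (m - i)) := by ring
      _ = bR i * q ^ i := by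
          rw [hq, ← mul_pow, mul_inv_cancel₀ (by linarith), one_pow, mul_one]
  have hAm : (m : ℝ) * B' ≤ A' := by
    calc (m : ℝ) * B' = ∑ _i ∈ range m, B' := by
          rw [Finset.sum_const, card_range, nsmul_eq_mul]
      _ ≤ A' := Finset.sum_le_sum hmono
  -- adjacency sum identities
  set S2 : ℝ := ∑ y, ∑ z ∈ G.neighborFinset y, f z * f y with hS2
  have hLHS : ∑ y, (G.adjMatrix ℝ *ᵥ f) y * f y = S2 := by
    rw [hS2]
    refine Finset.sum_congr rfl fun y _ => ?_
    rw [adjMatrix_mulVec_apply, Finset.sum_mul]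
  set T : ℝ := ∑ y, ∑ z ∈ G.neighborFinset y, (f y - f z) ^ 2 with hTdef
  have hkW : ∀ y : V, ∑ _z ∈ G.neighborFinset y, f y ^ 2 = (k : ℝ) * f y ^ 2 := by
    intro y
    rw [Finset.sum_const, nsmul_eq_mul]
    congr 1
    exact_mod_cast congrArg Nat.cast (hreg y)
  have hT : T = 2 * (k : ℝ) * W - 2 * S2 := by
    have e1 : T = (∑ y, ∑ z ∈ G.neighborFinset y, f y ^ 2)
        + (∑ y, ∑ z ∈ G.neighborFinset y, f z ^ 2) - 2 * S2 := by
      rw [hTdef, hS2, ← Finset.sum_add_distrib, Finset.mul_sum, ← Finset.sum_sub_distrib]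
      refine Finset.sum_congr rfl fun y _ => ?_
      rw [← Finset.sum_add_distrib, Finset.mul_sum, ← Finset.sum_sub_distrib]
      exact Finset.sum_congr rfl fun z _ => by ring
    have e2 : ∑ y, ∑ z ∈ G.neighborFinset y, f z ^ 2
        = ∑ y, ∑ z ∈ G.neighborFinset y, f y ^ 2 :=
      nbr_sum_comm G (fun y z => f z ^ 2)
    rw [e1, e2, Finset.sum_congr rfl fun y _ => hkW y, ← Finset.mul_sum, ← hWdef]
    ring
  set P : ℝ := ∑ y, ∑ z ∈ G.neighborFinset y,
      (if mdist G a b z = mdist G a b y + 1 then (f y - f z) ^ 2 else 0) with hPdef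
  have hTP : T = 2 * P := by
    have hsplit : ∀ y z, G.Adj y z → (f y - f z) ^ 2 =
        (if mdist G a b z = mdist G a b y + 1 then (f y - f z) ^ 2 else 0)
        + (if mdist G a b y = mdist G a b z + 1 then (f y - f z) ^ 2 else 0) := by
      intro y z hadj
      have h1 := mdist_adj_le hconn (a := a) (b := b) hadj
      have h2 := mdist_adj_le hconn (a := a) (b := b) hadj.symm
      rcases Nat.lt_trichotomy (mdist G a b y) (mdist G a b z) with hlt | heq | hgt
      · rw [if_pos (by omega), if_neg (by omega)]; ring
      · have hfz : f y = f z := by rw [hfval, hfval, heq]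
        rw [if_neg (by omega), if_neg (by omega), hfz]; ring
      · rw [if_neg (by omega), if_pos (by omega)]; ring
    have hTsum : T = P + ∑ y, ∑ z ∈ G.neighborFinset y,
        (if mdist G a b y = mdist G a b z + 1 then (f y - f z) ^ 2 else 0) := by
      rw [hTdef, hPdef, ← Finset.sum_add_distrib]
      refine Finset.sum_congr rfl fun y _ => ?_
      rw [← Finset.sum_add_distrib]
      exact Finset.sum_congr rfl fun z hz => hsplit y z ((G.mem_neighborFinset y z).mp hz)
    have hdown : ∑ y, ∑ z ∈ G.neighborFinset y,
        (if mdist G a b y = mdist G a b z + 1 then (f y - f z) ^ 2 else 0) = P := by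
      rw [hPdef, nbr_sum_comm G
        (fun y z => if mdist G a b y = mdist G a b z + 1 then (f y - f z) ^ 2 else 0)]
      refine Finset.sum_congr rfl fun y _ => Finset.sum_congr rfl fun z _ => ?_
      by_cases hcond : mdist G a b z = mdist G a b y + 1
      · rw [if_pos hcond, if_pos hcond, ← neg_sub (f y) (f z), neg_sq]
      · rw [if_neg hcond, if_neg hcond]
    rw [hTsum, hdown]; ring
  set δ : ℕ → ℝ := fun i => (fv i - fv (i + 1)) ^ 2 with hδdef
  have hPle : P ≤ ((k : ℝ) - 1) * ∑ i ∈ range (m + 1), bR i * δ i := by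
    have hinner : ∀ y : V, ∑ z ∈ G.neighborFinset y,
        (if mdist G a b z = mdist G a b y + 1 then (f y - f z) ^ 2 else 0)
        ≤ ((k : ℝ) - 1) * δ (mdist G a b y) := by
      intro y
      have e1 : ∀ z ∈ G.neighborFinset y,
          (if mdist G a b z = mdist G a b y + 1 then (f y - f z) ^ 2 else 0)
          = (if mdist G a b z = mdist G a b y + 1 then δ (mdist G a b y) else 0) := by
        intro z _
        by_cases hz : mdist G a b z = mdist G a b y + 1
        · rw [if_pos hz, if_pos hz, hδdef]
          simp only
          rw [hfval y, hfval z, hz]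
        · rw [if_neg hz, if_neg hz]
      rw [Finset.sum_congr rfl e1, ← Finset.sum_filter, Finset.sum_const, nsmul_eq_mul]
      have hcard : (G.neighborFinset y).filter
          (fun z => mdist G a b z = mdist G a b y + 1)
          = G.neighborFinset y ∩ sphereB G a b (mdist G a b y + 1) := by
        ext z
        simp [sphereB, mem_inter, mem_filter, mem_univ, true_and]
      rw [hcard]
      have hle := card_nbr_sphere_le hconn hreg hab y
      have hcast : ((G.neighborFinset y ∩ sphereB G a b (mdist G a b y + 1)).card : ℝ)
          ≤ (k : ℝ) - 1 := by
        have h := (Nat.cast_le (α := ℝ)).mpr hle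
        push_cast [Nat.cast_sub (show 1 ≤ k by omega)] at h
        exact h
      exact mul_le_mul_of_nonneg_right hcast (sq_nonneg _)
    have hδ0 : ∀ i, m < i → δ i = 0 := by
      intro i hi
      simp only [hδdef, hfv]
      rw [if_neg (by omega), if_neg (by omega)]
      norm_num
    calc P ≤ ∑ y, ((k : ℝ) - 1) * δ (mdist G a b y) := Finset.sum_le_sum fun y _ => hinner y
      _ = ((k : ℝ) - 1) * ∑ y, δ (mdist G a b y) := by rw [Finset.mul_sum]
      _ = ((k : ℝ) - 1) * ∑ i ∈ range (m + 1), bR i * δ i := by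
          rw [sum_mdist_fn (G := G) (a := a) (b := b) m δ hδ0]
  have hδsum : ∑ i ∈ range (m + 1), bR i * δ i = (1 - c) ^ 2 * A' + B' := by
    rw [Finset.sum_range_succ]
    congr 1
    · rw [hA', Finset.mul_sum]
      refine Finset.sum_congr rfl fun i hi => ?_
      have hi' : i < m := mem_range.mp hi
      have hδi : δ i = (1 - c) ^ 2 * q ^ i := by
        simp only [hδdef, hfv]
        rw [if_pos (by omega : i ≤ m), if_pos (by omega : i + 1 ≤ m), hqdef]
        ring
      rw [hδi]; ring
    · have hδm : δ m = q ^ m := by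
        simp only [hδdef, hfv]
        rw [if_pos le_rfl, if_neg (by omega), hqdef]
        ring
      rw [hB', hδm]
  have hconst2 : ((k : ℝ) - 1) * (1 - c) ^ 2 = (k : ℝ) - 2 * r := by
    have h1 : r * (1 - c) = r - 1 := by
      rw [hcdef]
      field_simp
    calc ((k : ℝ) - 1) * (1 - c) ^ 2 = (r * (1 - c)) ^ 2 := by rw [mul_pow, hrsq]
      _ = (r - 1) ^ 2 := by rw [h1]
      _ = (k : ℝ) - 2 * r := by rw [sub_sq, hrsq]; ring
  have hPfinal : P ≤ ((k : ℝ) - 2 * r) * A' + ((k : ℝ) - 1) * B' := by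
    calc P ≤ ((k : ℝ) - 1) * ((1 - c) ^ 2 * A' + B') := by rw [← hδsum]; exact hPle
      _ = ((k : ℝ) - 1) * (1 - c) ^ 2 * A' + ((k : ℝ) - 1) * B' := by ring
      _ = ((k : ℝ) - 2 * r) * A' + ((k : ℝ) - 1) * B' := by rw [hconst2]
  have hm1 : (0 : ℝ) < (m : ℝ) + 1 := by positivity
  have hWm : ((m : ℝ) + 1) * B' ≤ W := by
    rw [hWAB]; linarith [hAm]
  have hεW : B' ≤ (1 / ((m : ℝ) + 1)) * W := by
    rw [div_mul_eq_mul_div, one_mul, le_div_iff₀ hm1, mul_comm]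
    exact hWm
  have h2ru : 2 * r * B' ≤ 2 * r * ((1 / ((m : ℝ) + 1)) * W) :=
    mul_le_mul_of_nonneg_left hεW (by linarith)
  have hgoal : 2 * r * (1 - 1 / ((m : ℝ) + 1)) * W ≤ (k : ℝ) * W - P := by
    nlinarith [hPfinal, h2ru, hB'0, hWAB]
  have hS2eq : S2 = (k : ℝ) * W - P / 1 := by
    have := hT
    rw [hTP] at this
    linarith
  rw [hLHS]
  linarith [hgoal, hS2eq]

lemma lambdaOne_ge (hconn : G.Connected) (hreg : G.IsRegularOfDegree k) (hk : 3 ≤ k)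
    (m : ℕ) (hbig : 4 * (k - 1) ^ (2 * m + 4) < Fintype.card V) :
    2 * Real.sqrt ((k : ℝ) - 1) * (1 - 1 / (m + 1)) ≤ G.lambdaOne k := by
  have hne : Nonempty V := hconn.nonempty
  obtain ⟨x⟩ := hne
  have hdeg : 0 < (G.neighborFinset x).card := by
    rw [G.card_neighborFinset_eq_degree, hreg x]; omega
  obtain ⟨b0, hb0⟩ := Finset.card_pos.mp hdeg
  have hxb : G.Adj x b0 := (G.mem_neighborFinset x b0).mp hb0
  have hfar : ∃ y, 2 * m + 4 < mdist G x b0 y := by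
    by_contra h
    push_neg at h
    exact absurd (card_univ_le_of_mdist_le hconn hreg hk hxb (2 * m + 4) h) (by omega)
  obtain ⟨y, hy⟩ := hfar
  have hdeg2 : 0 < (G.neighborFinset y).card := by
    rw [G.card_neighborFinset_eq_degree, hreg y]; omega
  obtain ⟨b1, hb1⟩ := Finset.card_pos.mp hdeg2
  have hyb : G.Adj y b1 := (G.mem_neighborFinset y b1).mp hb1
  set f : V → ℝ := testFn G k x b0 m with hfdef
  set f' : V → ℝ := testFn G k y b1 m with hf'def
  have hsupp : ∀ z, f z ≠ 0 → mdist G x b0 z ≤ m := by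
    intro z hz
    by_contra hgt
    exact hz (by rw [hfdef]; unfold testFn; rw [if_neg (by omega)])
  have hsupp' : ∀ z, f' z ≠ 0 → mdist G y b1 z ≤ m := by
    intro z hz
    by_contra hgt
    exact hz (by rw [hf'def]; unfold testFn; rw [if_neg (by omega)])
  have hdball : ∀ (u v : V), G.Adj u v → ∀ z, mdist G u v z ≤ m → G.dist u z ≤ m + 1 := by
    intro u v huv z hz
    rcases min_cases (G.dist u z) (G.dist v z) with ⟨heq, -⟩ | ⟨heq, -⟩
    · unfold mdist at hz; omega
    · have ht := hconn.dist_triangle (u := u) (v := v) (w := z)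
      have h1 : G.dist u v ≤ 1 := dist_le_one_of_adj huv
      unfold mdist at hz; omega
  have hdist_xy : 2 * m + 4 < G.dist x y := lt_of_lt_of_le hy (min_le_left _ _)
  have hsep : ∀ u w, f u ≠ 0 → f' w ≠ 0 → ¬ G.Adj u w ∧ u ≠ w := by
    intro u w hu hw
    have h1 := hdball x b0 hxb u (hsupp u hu)
    have h2 := hdball y b1 hyb w (hsupp' w hw)
    have ht1 := hconn.dist_triangle (u := x) (v := u) (w := y)
    constructor
    · intro hadj
      have ht2 := hconn.dist_triangle (u := u) (v := w) (w := y)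
      have h3 : G.dist u w ≤ 1 := dist_le_one_of_adj hadj
      have h4 : G.dist w y = G.dist y w := SimpleGraph.dist_comm
      omega
    · rintro rfl
      have h4 : G.dist u y = G.dist y u := SimpleGraph.dist_comm
      omega
  have hc0 : (0 : ℝ) ≤ (Real.sqrt ((k : ℝ) - 1))⁻¹ := by positivity
  have hf0 : ∀ z, 0 ≤ f z := by
    intro z
    rw [hfdef]; unfold testFn
    split
    · positivity
    · exact le_rfl
  have hf'0 : ∀ z, 0 ≤ f' z := by
    intro z
    rw [hf'def]; unfold testFn
    split
    · positivity
    · exact le_rfl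
  have hfx : f x = 1 := by
    rw [hfdef]; unfold testFn
    rw [mdist_self_left hxb, if_pos (Nat.zero_le m), pow_zero]
  have hf'y : f' y = 1 := by
    rw [hf'def]; unfold testFn
    rw [mdist_self_left hyb, if_pos (Nat.zero_le m), pow_zero]
  have hsf : (0 : ℝ) < ∑ z, f z := by
    have := Finset.single_le_sum (fun z _ => hf0 z) (mem_univ x)
    rw [hfx] at this
    linarith
  have hsf' : (0 : ℝ) < ∑ z, f' z := by
    have := Finset.single_le_sum (fun z _ => hf'0 z) (mem_univ y)
    rw [hf'y] at this
    linarith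
  set t : ℝ := (∑ z, f z) / (∑ z, f' z) with htdef
  have ht0 : 0 ≤ t := div_nonneg hsf.le hsf'.le
  set g : V → ℝ := fun z => f z - t * f' z with hgdef
  have hg0 : ∑ z, g z = 0 := by
    rw [hgdef]
    rw [Finset.sum_sub_distrib, ← Finset.mul_sum, htdef,
      div_mul_cancel₀ _ (ne_of_gt hsf'), sub_self]
  have hcross1 : ∑ z, (G.adjMatrix ℝ *ᵥ f) z * f' z = 0 := by
    refine Finset.sum_eq_zero fun z _ => ?_
    rw [adjMatrix_mulVec_apply, Finset.sum_mul]
    refine Finset.sum_eq_zero fun w hw => ?_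
    by_cases hfw : f w = 0
    · rw [hfw, zero_mul]
    by_cases hfz : f' z = 0
    · rw [hfz, mul_zero]
    exact absurd (((G.mem_neighborFinset z w).mp hw).symm) ((hsep w z hfw hfz).1)
  have hcross2 : ∑ z, (G.adjMatrix ℝ *ᵥ f') z * f z = 0 := by
    refine Finset.sum_eq_zero fun z _ => ?_
    rw [adjMatrix_mulVec_apply, Finset.sum_mul]
    refine Finset.sum_eq_zero fun w hw => ?_
    by_cases hfz : f z = 0
    · rw [hfz, mul_zero]
    by_cases hfw : f' w = 0
    · rw [hfw, zero_mul]
    exact absurd ((G.mem_neighborFinset z w).mp hw) ((hsep z w hfz hfw).1)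
  have hdisj : ∑ z, f z * f' z = 0 := by
    refine Finset.sum_eq_zero fun z _ => ?_
    by_cases hfz : f z = 0
    · rw [hfz, zero_mul]
    by_cases hfz' : f' z = 0
    · rw [hfz', mul_zero]
    exact absurd rfl ((hsep z z hfz hfz').2)
  -- quadratic form of g
  have hAg : ∑ z, (G.adjMatrix ℝ *ᵥ g) z * g z
      = ∑ z, (G.adjMatrix ℝ *ᵥ f) z * f z
        + t ^ 2 * ∑ z, (G.adjMatrix ℝ *ᵥ f') z * f' z := by
    have hmv : ∀ z, (G.adjMatrix ℝ *ᵥ g) z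
        = (G.adjMatrix ℝ *ᵥ f) z - t * (G.adjMatrix ℝ *ᵥ f') z := by
      intro z
      rw [hgdef]
      rw [show (fun z => f z - t * f' z) = f - t • f' from by funext w; simp]
      rw [Matrix.mulVec_sub, Matrix.mulVec_smul]
      simp
    have expand : ∀ z, (G.adjMatrix ℝ *ᵥ g) z * g z
        = (G.adjMatrix ℝ *ᵥ f) z * f z
          - t * ((G.adjMatrix ℝ *ᵥ f) z * f' z)
          - t * ((G.adjMatrix ℝ *ᵥ f') z * f z)
          + t ^ 2 * ((G.adjMatrix ℝ *ᵥ f') z * f' z) := by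
      intro z
      rw [hmv z, hgdef]
      ring
    rw [Finset.sum_congr rfl fun z _ => expand z]
    rw [Finset.sum_add_distrib, Finset.sum_sub_distrib, Finset.sum_sub_distrib,
      ← Finset.mul_sum, ← Finset.mul_sum, ← Finset.mul_sum, hcross1, hcross2]
    ring
  have hgsq : ∑ z, g z ^ 2 = ∑ z, f z ^ 2 + t ^ 2 * ∑ z, f' z ^ 2 := by
    have expand : ∀ z, g z ^ 2 = f z ^ 2 - 2 * t * (f z * f' z) + t ^ 2 * f' z ^ 2 := by
      intro z
      rw [hgdef]
      ring
    rw [Finset.sum_congr rfl fun z _ => expand z]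
    rw [Finset.sum_add_distrib, Finset.sum_sub_distrib, ← Finset.mul_sum, ← Finset.mul_sum,
      hdisj]
    ring
  have hest1 := main_estimate hconn hreg hk hxb m
  have hest2 := main_estimate hconn hreg hk hyb m
  have hray := rayleigh hconn hreg g hg0
  set s : ℝ := 2 * Real.sqrt ((k : ℝ) - 1) * (1 - 1 / (m + 1)) with hsdef
  have hs2 : t ^ 2 * (s * ∑ z, f' z ^ 2) ≤ t ^ 2 * ∑ z, (G.adjMatrix ℝ *ᵥ f') z * f' z :=
    mul_le_mul_of_nonneg_left hest2 (sq_nonneg t)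
  have hSpos : (0 : ℝ) < ∑ z, f z ^ 2 + t ^ 2 * ∑ z, f' z ^ 2 := by
    have h1 : (1 : ℝ) ≤ ∑ z, f z ^ 2 := by
      have := Finset.single_le_sum (fun z _ => sq_nonneg (f z)) (mem_univ x)
      rw [hfx] at this
      simpa using this
    have h2 : (0 : ℝ) ≤ t ^ 2 * ∑ z, f' z ^ 2 :=
      mul_nonneg (sq_nonneg t) (Finset.sum_nonneg fun z _ => sq_nonneg _)
    linarith
  have hchain : s * (∑ z, f z ^ 2 + t ^ 2 * ∑ z, f' z ^ 2)
      ≤ G.lambdaOne k * (∑ z, f z ^ 2 + t ^ 2 * ∑ z, f' z ^ 2) := by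
    calc s * (∑ z, f z ^ 2 + t ^ 2 * ∑ z, f' z ^ 2)
        = s * ∑ z, f z ^ 2 + t ^ 2 * (s * ∑ z, f' z ^ 2) := by ring
      _ ≤ ∑ z, (G.adjMatrix ℝ *ᵥ f) z * f z
          + t ^ 2 * ∑ z, (G.adjMatrix ℝ *ᵥ f') z * f' z := add_le_add hest1 hs2
      _ = ∑ z, (G.adjMatrix ℝ *ᵥ g) z * g z := hAg.symm
      _ ≤ G.lambdaOne k * ∑ z, g z ^ 2 := hray
      _ = G.lambdaOne k * (∑ z, f z ^ 2 + t ^ 2 * ∑ z, f' z ^ 2) := by rw [hgsq]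
  have hchain' : (∑ z, f z ^ 2 + t ^ 2 * ∑ z, f' z ^ 2) * s
      ≤ (∑ z, f z ^ 2 + t ^ 2 * ∑ z, f' z ^ 2) * G.lambdaOne k := by
    rw [mul_comm _ s, mul_comm _ (G.lambdaOne k)]
    exact hchain
  exact (mul_le_mul_iff_right₀ hSpos).mp hchain'

end AlonBoppanaAux

/-- Asymptotic Alon–Boppana: for a sequence of finite connected `k`-regular graphs whose
sizes tend to infinity, `liminf λ₁(Xₙ) ≥ 2√(k-1)`. -/
theorem alon_boppana_liminf (k : ℕ) (hk : 3 ≤ k)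
    (V : ℕ → Type) [inst : ∀ n, Fintype (V n)] (X : ∀ n, SimpleGraph (V n))
    [instd : ∀ n, DecidableRel (X n).Adj]
    (hconn : ∀ n, (X n).Connected) (hreg : ∀ n, (X n).IsRegularOfDegree k)
    (hcard : Tendsto (fun n => Fintype.card (V n)) atTop atTop) :
    2 * Real.sqrt ((k : ℝ) - 1) ≤ liminf (fun n => (X n).lambdaOne k) atTop := by
  have hbound : ∀ n, (X n).lambdaOne k ≤ (k : ℝ) := fun n => by
    letI := Classical.decEq (V n)
    exact AlonBoppanaAux.lambdaOne_le (hreg n)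
  have hcob : IsCoboundedUnder (· ≥ ·) atTop (fun n => (X n).lambdaOne k) :=
    Filter.isCoboundedUnder_ge_of_eventually_le atTop (Eventually.of_forall hbound)
  have hstep : ∀ m : ℕ,
      2 * Real.sqrt ((k : ℝ) - 1) * (1 - 1 / ((m : ℝ) + 1))
        ≤ liminf (fun n => (X n).lambdaOne k) atTop := by
    intro m
    apply le_liminf_of_le hcob
    have hev : ∀ᶠ n in atTop, 4 * (k - 1) ^ (2 * m + 4) < Fintype.card (V n) :=
      hcard.eventually_gt_atTop _
    filter_upwards [hev] with n hn
    letI := Classical.decEq (V n)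
    exact AlonBoppanaAux.lambdaOne_ge (hconn n) (hreg n) hk m hn
  have hlim : Tendsto (fun m : ℕ => 2 * Real.sqrt ((k : ℝ) - 1) * (1 - 1 / ((m : ℝ) + 1)))
      atTop (nhds (2 * Real.sqrt ((k : ℝ) - 1) * (1 - 0))) :=
    tendsto_const_nhds.mul (tendsto_const_nhds.sub tendsto_one_div_add_atTop_nhds_zero_nat)
  have := le_of_tendsto hlim (Eventually.of_forall hstep)
  simpa using this
end

section
/- (Kesten) The spectrum of the adjacency operator A acting on ℓ²(T_k), for the infinite k-regular tree T_k, is exactly the interval [−2√(k−1), 2√(k−1)]. -/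
open SimpleGraph Finset
open scoped ENNReal NNReal

namespace KestenAux

set_option linter.unusedSectionVars false

variable {W : Type*} [DecidableEq W] {T : SimpleGraph W} [T.LocallyFinite] {v0 : W}

lemma parent_exists (hc : T.Connected) {v : W} {m : ℕ} (hv : T.dist v0 v = m + 1) :
    ∃ u, T.Adj u v ∧ T.dist v0 u = m := by
  obtain ⟨p, hp⟩ := hc.exists_walk_length_eq_dist v0 v
  have hnotnil : ¬ p.reverse.Nil := by
    rw [Walk.nil_iff_length_eq, Walk.length_reverse, hp, hv]; omega
  obtain ⟨u, h, q, hq⟩ := Walk.not_nil_iff.mp hnotnil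
  refine ⟨u, h.symm, ?_⟩
  have hql : q.length = m := by
    have := congrArg Walk.length hq
    rw [Walk.length_reverse, hp, hv] at this
    simpa using this.symm
  have h1 : T.dist v0 u ≤ m := by
    rw [SimpleGraph.dist_comm]
    exact (SimpleGraph.dist_le q).trans_eq hql
  have h2 : T.dist v0 v ≤ T.dist v0 u + T.dist u v := hc.dist_triangle
  have h3 : T.dist u v = 1 := SimpleGraph.dist_eq_one_iff_adj.mpr h.symm
  omega

lemma dist_le_of_mem_support {v w : W} {p : T.Walk v0 v} (hw : w ∈ p.support) :
    T.dist v0 w ≤ p.length := by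
  have h1 := SimpleGraph.dist_le (p.takeUntil w hw)
  exact h1.trans (Walk.length_takeUntil_le p hw)

lemma dist_lt_of_mem_support {v w : W} {p : T.Walk v0 v} (hw : w ∈ p.support)
    (hwv : w ≠ v) : T.dist v0 w < p.length := by
  have hspec := p.take_spec hw
  have hlen := congrArg Walk.length hspec
  rw [Walk.length_append] at hlen
  have h1 := SimpleGraph.dist_le (p.takeUntil w hw)
  have h2 : (p.dropUntil w hw).length ≠ 0 := fun h0 =>
    hwv (Walk.eq_of_length_eq_zero h0)
  omega

lemma adj_dist_ne (hc : T.Connected) (ha : T.IsAcyclic) {u v : W} (h : T.Adj u v) :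
    T.dist v0 u ≠ T.dist v0 v := by
  intro heq
  obtain ⟨P, hP, hPl⟩ := hc.exists_path_of_dist v0 v
  have hune : u ≠ v := h.ne
  have hu_not : u ∉ P.support := by
    intro hu
    have := dist_lt_of_mem_support hu hune
    rw [hPl, ← heq] at this
    omega
  have hu_not_rev : u ∉ P.reverse.support := by
    rwa [Walk.support_reverse, List.mem_reverse]
  have hR : (Walk.cons h P.reverse).IsPath :=
    (Walk.cons_isPath_iff h P.reverse).mpr ⟨hP.reverse, hu_not_rev⟩
  obtain ⟨S, hS, hSl⟩ := hc.exists_path_of_dist u v0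
  have := ha.path_unique ⟨Walk.cons h P.reverse, hR⟩ ⟨S, hS⟩
  have hlen := congrArg (fun (q : T.Path u v0) => (q : T.Walk u v0).length) this
  simp only [Walk.length_cons, Walk.length_reverse] at hlen
  rw [hPl, hSl] at hlen
  rw [SimpleGraph.dist_comm (u := u) (v := v0), heq] at hlen
  omega

lemma parent_unique (hc : T.Connected) (ha : T.IsAcyclic) {v u₁ u₂ : W} {m : ℕ}
    (hv : T.dist v0 v = m + 1) (h1 : T.Adj u₁ v) (hd1 : T.dist v0 u₁ = m)
    (h2 : T.Adj u₂ v) (hd2 : T.dist v0 u₂ = m) : u₁ = u₂ := by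
  obtain ⟨P₁, hP₁, hP₁l⟩ := hc.exists_path_of_dist v0 u₁
  obtain ⟨P₂, hP₂, hP₂l⟩ := hc.exists_path_of_dist v0 u₂
  have hv1 : v ∉ P₁.support := by
    intro hmem
    have := dist_le_of_mem_support hmem
    rw [hP₁l, hd1, hv] at this; omega
  have hv2 : v ∉ P₂.support := by
    intro hmem
    have := dist_le_of_mem_support hmem
    rw [hP₂l, hd2, hv] at this; omega
  have hv1' : v ∉ P₁.reverse.support := by rwa [Walk.support_reverse, List.mem_reverse]
  have hv2' : v ∉ P₂.reverse.support := by rwa [Walk.support_reverse, List.mem_reverse]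
  have hR1 : (Walk.cons h1.symm P₁.reverse).IsPath :=
    (Walk.cons_isPath_iff _ _).mpr ⟨hP₁.reverse, hv1'⟩
  have hR2 : (Walk.cons h2.symm P₂.reverse).IsPath :=
    (Walk.cons_isPath_iff _ _).mpr ⟨hP₂.reverse, hv2'⟩
  have heq := ha.path_unique ⟨Walk.cons h1.symm P₁.reverse, hR1⟩
    ⟨Walk.cons h2.symm P₂.reverse, hR2⟩
  have := congrArg (fun (q : T.Path v v0) => (q : T.Walk v v0).getVert 1) heq
  simpa [Walk.getVert_cons _ _ one_ne_zero] using this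

open Classical in
/-- the parent of `v`: the unique neighbour of `v` closer to `v0`. -/
noncomputable def pa (T : SimpleGraph W) (v0 v : W) : W :=
  if h : ∃ u, T.Adj u v ∧ T.dist v0 u + 1 = T.dist v0 v then h.choose else v0

lemma pa_spec (hc : T.Connected) {v : W} {m : ℕ} (hv : T.dist v0 v = m + 1) :
    T.Adj (pa T v0 v) v ∧ T.dist v0 (pa T v0 v) = m := by
  obtain ⟨u, hu, hud⟩ := parent_exists hc hv
  have hex : ∃ u, T.Adj u v ∧ T.dist v0 u + 1 = T.dist v0 v := ⟨u, hu, by omega⟩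
  rw [pa, dif_pos hex]
  obtain ⟨h1, h2⟩ := hex.choose_spec
  exact ⟨h1, by omega⟩

lemma pa_eq (hc : T.Connected) (ha : T.IsAcyclic) {v u : W} {m : ℕ}
    (hv : T.dist v0 v = m + 1) (h : T.Adj u v) (hd : T.dist v0 u = m) :
    u = pa T v0 v := by
  obtain ⟨h1, h2⟩ := pa_spec hc hv
  exact parent_unique hc ha hv h hd h1 h2

lemma adj_far (hc : T.Connected) (ha : T.IsAcyclic) {v w : W} {m : ℕ}
    (hv : T.dist v0 v = m + 1) (h : T.Adj w v) (hw : w ≠ pa T v0 v) :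
    T.dist v0 w = m + 2 := by
  have hne := adj_dist_ne (v0 := v0) hc ha h
  have h1 : T.dist v0 w ≤ T.dist v0 v + T.dist v w := hc.dist_triangle
  have h2 : T.dist v0 v ≤ T.dist v0 w + T.dist w v := hc.dist_triangle
  have h3 : T.dist v w = 1 := SimpleGraph.dist_eq_one_iff_adj.mpr h.symm
  have h4 : T.dist w v = 1 := SimpleGraph.dist_eq_one_iff_adj.mpr h
  have h5 : T.dist v0 w ≠ m := fun hm => hw (pa_eq hc ha hv h hm)
  omega

variable (T v0) in
/-- ball of radius `n` around `v0` as a finset -/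
def gball [T.LocallyFinite] : ℕ → Finset W
  | 0 => {v0}
  | n + 1 => (gball n).biUnion fun v => insert v (T.neighborFinset v)

variable (T v0) in
/-- sphere of radius `m` around `v0` as a finset -/
noncomputable def gsph (m : ℕ) : Finset W := (gball T v0 m).filter fun v => T.dist v0 v = m

lemma mem_gball (hc : T.Connected) {v : W} {n : ℕ} :
    v ∈ gball T v0 n ↔ T.dist v0 v ≤ n := by
  induction n generalizing v with
  | zero =>
    simp only [gball, mem_singleton, Nat.le_zero]
    rw [hc.dist_eq_zero_iff]
    exact ⟨fun h => h.symm, fun h => h.symm⟩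
  | succ n ih =>
    simp only [gball, mem_biUnion]
    constructor
    · rintro ⟨u, hu, hv⟩
      rw [mem_insert, mem_neighborFinset] at hv
      rcases hv with rfl | hadj
      · exact (ih.mp hu).trans (Nat.le_succ n)
      · have h1 : T.dist v0 v ≤ T.dist v0 u + T.dist u v := hc.dist_triangle
        have h2 : T.dist u v = 1 := SimpleGraph.dist_eq_one_iff_adj.mpr hadj
        have := ih.mp hu
        omega
    · intro hle
      rcases Nat.lt_or_ge (T.dist v0 v) (n + 1) with hlt | hge
      · exact ⟨v, ih.mpr (by omega), by simp⟩
      · have hv : T.dist v0 v = n + 1 := by omega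
        obtain ⟨hadj, hd⟩ := pa_spec hc hv
        exact ⟨pa T v0 v, ih.mpr hd.le, by rw [mem_insert, mem_neighborFinset]; exact Or.inr hadj⟩

lemma mem_gsph (hc : T.Connected) {v : W} {m : ℕ} :
    v ∈ gsph T v0 m ↔ T.dist v0 v = m := by
  simp only [gsph, mem_filter, mem_gball hc, and_iff_right_iff_imp]
  exact fun h => h.le

lemma gsph_zero (hc : T.Connected) : gsph T v0 0 = {v0} := by
  ext v
  rw [mem_gsph hc, mem_singleton, hc.dist_eq_zero_iff]
  exact ⟨fun h => h.symm, fun h => h.symm⟩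

lemma gsph_one (hc : T.Connected) : gsph T v0 1 = T.neighborFinset v0 := by
  ext v
  rw [mem_gsph hc, mem_neighborFinset, SimpleGraph.dist_eq_one_iff_adj]

lemma filter_far (hc : T.Connected) (ha : T.IsAcyclic) {v : W} {m : ℕ}
    (hv : T.dist v0 v = m + 1) :
    (T.neighborFinset v).filter (fun w => T.dist v0 w = m + 2)
      = (T.neighborFinset v).erase (pa T v0 v) := by
  ext w
  simp only [mem_filter, mem_erase, mem_neighborFinset]
  constructor
  · rintro ⟨hadj, hd⟩
    refine ⟨fun hw => ?_, hadj⟩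
    obtain ⟨-, hpd⟩ := pa_spec hc hv
    rw [hw, hpd] at hd; omega
  · rintro ⟨hne, hadj⟩
    exact ⟨hadj, adj_far hc ha hv hadj.symm hne⟩

lemma card_far {k : ℕ} (hc : T.Connected) (ha : T.IsAcyclic)
    (hreg : T.IsRegularOfDegree k) {v : W} {m : ℕ} (hv : T.dist v0 v = m + 1) :
    ((T.neighborFinset v).filter (fun w => T.dist v0 w = m + 2)).card = k - 1 := by
  rw [filter_far hc ha hv, card_erase_of_mem, card_neighborFinset_eq_degree, hreg v]
  rw [mem_neighborFinset]
  exact (pa_spec hc hv).1.symm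

lemma fiber_eq (hc : T.Connected) (ha : T.IsAcyclic) {v : W} {m : ℕ}
    (hv : T.dist v0 v = m + 1) :
    (gsph T v0 (m + 2)).filter (fun w => pa T v0 w = v)
      = (T.neighborFinset v).filter (fun w => T.dist v0 w = m + 2) := by
  ext w
  simp only [mem_filter, mem_gsph hc, mem_neighborFinset]
  constructor
  · rintro ⟨hd, hp⟩
    have := (pa_spec hc hd).1
    rw [hp] at this
    exact ⟨this, hd⟩
  · rintro ⟨hadj, hd⟩
    exact ⟨hd, (pa_eq hc ha hd hadj hv).symm⟩

lemma pa_mem_gsph (hc : T.Connected) {w : W} {m : ℕ} (hw : w ∈ gsph T v0 (m + 1)) :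
    pa T v0 w ∈ gsph T v0 m := by
  rw [mem_gsph hc] at hw ⊢
  exact (pa_spec hc hw).2

lemma gsph_card_one {k : ℕ} (hc : T.Connected) (hreg : T.IsRegularOfDegree k) :
    (gsph T v0 1).card = k := by
  rw [gsph_one hc, card_neighborFinset_eq_degree, hreg v0]

lemma gsph_card {k : ℕ} (hc : T.Connected) (ha : T.IsAcyclic)
    (hreg : T.IsRegularOfDegree k) :
    ∀ m : ℕ, (gsph T v0 (m + 1)).card ≤ k * (k - 1) ^ m := by
  intro m
  induction m with
  | zero => simp [gsph_card_one hc hreg]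
  | succ m ih =>
    have hsub : gsph T v0 (m + 2) ⊆ (gsph T v0 (m + 1)).biUnion
        (fun u => (T.neighborFinset u).filter fun w => T.dist v0 w = m + 2) := by
      intro w hw
      rw [mem_biUnion]
      refine ⟨pa T v0 w, pa_mem_gsph hc hw, ?_⟩
      rw [mem_gsph hc] at hw
      rw [mem_filter, mem_neighborFinset]
      exact ⟨(pa_spec hc hw).1, hw⟩
    calc (gsph T v0 (m + 2)).card ≤ _ := card_le_card hsub
      _ ≤ ∑ u ∈ gsph T v0 (m + 1),
            ((T.neighborFinset u).filter fun w => T.dist v0 w = m + 2).card :=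
          card_biUnion_le
      _ = ∑ u ∈ gsph T v0 (m + 1), (k - 1) := by
          refine Finset.sum_congr rfl fun u hu => ?_
          exact card_far hc ha hreg ((mem_gsph hc).mp hu)
      _ = (gsph T v0 (m + 1)).card * (k - 1) := by rw [Finset.sum_const, smul_eq_mul]
      _ ≤ k * (k - 1) ^ m * (k - 1) := Nat.mul_le_mul_right _ ih
      _ = k * (k - 1) ^ (m + 1) := by ring

section Sums

variable (g : W → ℝ)

lemma sum_nbhd (hc : T.Connected) (ha : T.IsAcyclic) {v : W} {m : ℕ}
    (hv : T.dist v0 v = m + 1) :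
    ∑ w ∈ T.neighborFinset v, g w
      = g (pa T v0 v) +
        ∑ w ∈ (T.neighborFinset v).filter (fun w => T.dist v0 w = m + 2), g w := by
  rw [filter_far hc ha hv]
  exact (Finset.add_sum_erase _ g (by rw [mem_neighborFinset]; exact (pa_spec hc hv).1.symm)).symm

lemma sum_parent_one (hc : T.Connected) :
    ∑ v ∈ gsph T v0 1, g (pa T v0 v) = (gsph T v0 1).card * g v0 := by
  have hpa : ∀ v ∈ gsph T v0 1, g (pa T v0 v) = g v0 := by
    intro v hv
    rw [mem_gsph hc] at hv
    have h0 := (pa_spec hc hv).2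
    rw [hc.dist_eq_zero_iff] at h0
    rw [← h0]
  rw [Finset.sum_congr rfl hpa, Finset.sum_const, nsmul_eq_mul]

lemma sum_parent {k : ℕ} (hc : T.Connected) (ha : T.IsAcyclic)
    (hreg : T.IsRegularOfDegree k) (m : ℕ) :
    ∑ v ∈ gsph T v0 (m + 2), g (pa T v0 v)
      = (k - 1 : ℕ) * ∑ u ∈ gsph T v0 (m + 1), g u := by
  rw [← Finset.sum_fiberwise_of_maps_to (g := pa T v0) (t := gsph T v0 (m + 1))
    (fun w hw => pa_mem_gsph hc hw)]
  rw [Finset.mul_sum]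
  refine Finset.sum_congr rfl fun u hu => ?_
  rw [mem_gsph hc] at hu
  have : ∀ w ∈ (gsph T v0 (m + 2)).filter (fun w => pa T v0 w = u),
      g (pa T v0 w) = g u := by
    intro w hw
    rw [(Finset.mem_filter.mp hw).2]
  rw [Finset.sum_congr rfl this, Finset.sum_const, nsmul_eq_mul, fiber_eq hc ha hu,
    card_far hc ha hreg hu]

lemma sum_children (hc : T.Connected) (ha : T.IsAcyclic) (m : ℕ) :
    ∑ v ∈ gsph T v0 (m + 1),
        ∑ w ∈ (T.neighborFinset v).filter (fun w => T.dist v0 w = m + 2), g w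
      = ∑ w ∈ gsph T v0 (m + 2), g w := by
  rw [← Finset.sum_fiberwise_of_maps_to (g := pa T v0) (t := gsph T v0 (m + 1))
    (fun w hw => pa_mem_gsph hc hw) g]
  refine Finset.sum_congr rfl fun v hv => ?_
  rw [mem_gsph hc] at hv
  rw [fiber_eq hc ha hv]

end Sums

section Schur

lemma summable_sq (f : lp (fun _ : W => ℝ) 2) :
    Summable fun v => ((f : ∀ _ : W, ℝ) v) ^ 2 := by
  have h2 : (0:ℝ) < (2:ℝ≥0∞).toReal := by norm_num
  have hs := (memℓp_gen_iff h2).mp (lp.memℓp f)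
  have : ∀ v : W, ‖(f : ∀ _ : W, ℝ) v‖ ^ (2:ℝ≥0∞).toReal = ((f : ∀ _ : W, ℝ) v) ^ 2 := by
    intro v
    rw [show (2:ℝ≥0∞).toReal = ((2:ℕ):ℝ) by norm_num, Real.rpow_natCast,
      Real.norm_eq_abs, sq_abs]
  simpa only [this] using hs

lemma norm_sq_eq (f : lp (fun _ : W => ℝ) 2) :
    ‖f‖ ^ 2 = ∑' v, ((f : ∀ _ : W, ℝ) v) ^ 2 := by
  have h2 : (0:ℝ) < (2:ℝ≥0∞).toReal := by norm_num
  have := lp.norm_rpow_eq_tsum h2 f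
  have hconv : ∀ v : W, ‖(f : ∀ _ : W, ℝ) v‖ ^ (2:ℝ≥0∞).toReal = ((f : ∀ _ : W, ℝ) v) ^ 2 := by
    intro v
    rw [show (2:ℝ≥0∞).toReal = ((2:ℕ):ℝ) by norm_num, Real.rpow_natCast,
      Real.norm_eq_abs, sq_abs]
  simp only [hconv] at this
  rw [show ((2:ℝ≥0∞).toReal) = ((2:ℕ):ℝ) by norm_num, Real.rpow_natCast] at this
  exact_mod_cast this

lemma schur_sum {k : ℕ} (hk : 3 ≤ k) (hc : T.Connected) (ha : T.IsAcyclic)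
    (hreg : T.IsRegularOfDegree k) (v : W) :
    ∑ w ∈ T.neighborFinset v, ((Real.sqrt ((k:ℝ) - 1))⁻¹) ^ T.dist v0 w
      ≤ (2 * Real.sqrt ((k:ℝ) - 1)) * ((Real.sqrt ((k:ℝ) - 1))⁻¹) ^ T.dist v0 v := by
  set s : ℝ := Real.sqrt ((k:ℝ) - 1) with hs_def
  have hk1 : (0:ℝ) < (k:ℝ) - 1 := by
    have : (3:ℝ) ≤ (k:ℝ) := by exact_mod_cast hk
    linarith
  have hs0 : 0 < s := Real.sqrt_pos.mpr hk1
  have hs2 : s ^ 2 = (k:ℝ) - 1 := Real.sq_sqrt hk1.le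
  rcases Nat.eq_zero_or_eq_succ_pred (T.dist v0 v) with h0 | hsucc
  · -- v = v0
    have hv0 : v = v0 := by
      have := (hc.dist_eq_zero_iff).mp h0
      exact this.symm
    subst hv0
    have hterm : ∀ w ∈ T.neighborFinset v, (s⁻¹) ^ T.dist v w = s⁻¹ := by
      intro w hw
      rw [mem_neighborFinset] at hw
      rw [SimpleGraph.dist_eq_one_iff_adj.mpr hw, pow_one]
    rw [Finset.sum_congr rfl hterm, Finset.sum_const, nsmul_eq_mul,
      card_neighborFinset_eq_degree, hreg v, h0, pow_zero, mul_one]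
    have h2k : (k:ℝ) ≤ 2 * ((k:ℝ) - 1) := by
      have : (3:ℝ) ≤ (k:ℝ) := by exact_mod_cast hk
      linarith
    calc (k:ℝ) * s⁻¹ ≤ (2 * ((k:ℝ) - 1)) * s⁻¹ :=
          mul_le_mul_of_nonneg_right h2k (inv_nonneg.mpr hs0.le)
      _ = 2 * s := by
          rw [← hs2]; field_simp
  · set m : ℕ := (T.dist v0 v).pred with hm_def
    have hv : T.dist v0 v = m + 1 := by omega
    have hterm : ∀ w ∈ (T.neighborFinset v).filter (fun w => T.dist v0 w = m + 2),
        (s⁻¹) ^ T.dist v0 w = (s⁻¹) ^ (m + 2) := by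
      intro w hw
      rw [(Finset.mem_filter.mp hw).2]
    rw [sum_nbhd _ hc ha hv, (pa_spec hc hv).2, Finset.sum_congr rfl hterm,
      Finset.sum_const, nsmul_eq_mul, card_far hc ha hreg hv, hv]
    have hcast : ((k - 1 : ℕ) : ℝ) = (k:ℝ) - 1 := by
      have : 1 ≤ k := by omega
      push_cast [this]; ring
    rw [hcast]
    have key : (1:ℝ) + ((k:ℝ) - 1) * s⁻¹ ^ 2 = 2 * s * s⁻¹ := by
      rw [← hs2]; field_simp; norm_num
    have hexp : (s⁻¹) ^ (m + 2) = (s⁻¹) ^ m * s⁻¹ * s⁻¹ := by ring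
    have hexp1 : (s⁻¹) ^ (m + 1) = (s⁻¹) ^ m * s⁻¹ := by ring
    rw [hexp, hexp1]
    apply le_of_eq
    linear_combination ((s⁻¹) ^ m) * key

lemma norm_bound (x0 : W) {k : ℕ} (hk : 3 ≤ k) (hc : T.Connected) (ha : T.IsAcyclic)
    (hreg : T.IsRegularOfDegree k)
    (A : lp (fun _ : W => ℝ) 2 →L[ℝ] lp (fun _ : W => ℝ) 2)
    (hA : ∀ (f : lp (fun _ : W => ℝ) 2) (v : W),
      (A f : ∀ _ : W, ℝ) v = ∑ w ∈ T.neighborFinset v, (f : ∀ _ : W, ℝ) w)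
    (f : lp (fun _ : W => ℝ) 2) :
    ‖A f‖ ≤ (2 * Real.sqrt ((k:ℝ) - 1)) * ‖f‖ := by
  set M : ℝ := 2 * Real.sqrt ((k:ℝ) - 1) with hM_def
  have hk1 : (0:ℝ) < (k:ℝ) - 1 := by
    have : (3:ℝ) ≤ (k:ℝ) := by exact_mod_cast hk
    linarith
  have hs0 : 0 < Real.sqrt ((k:ℝ) - 1) := Real.sqrt_pos.mpr hk1
  have hM0 : 0 ≤ M := by positivity
  set h : W → ℝ := fun v => ((Real.sqrt ((k:ℝ) - 1))⁻¹) ^ T.dist x0 v with hh_def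
  have hpos : ∀ v, 0 < h v := fun v => pow_pos (inv_pos.mpr hs0) _
  have schur : ∀ v, ∑ w ∈ T.neighborFinset v, h w ≤ M * h v :=
    fun v => schur_sum (v0 := x0) hk hc ha hreg v
  set g : W → ℝ := fun v => (f : ∀ _ : W, ℝ) v with hg_def
  -- pointwise Cauchy-Schwarz
  have ptwise : ∀ v, (∑ w ∈ T.neighborFinset v, g w) ^ 2
      ≤ M * (h v * ∑ w ∈ T.neighborFinset v, g w ^ 2 / h w) := by
    intro v
    have CS := Finset.sum_mul_sq_le_sq_mul_sq (T.neighborFinset v)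
      (fun w => Real.sqrt (h w)) (fun w => g w / Real.sqrt (h w))
    have e1 : ∀ w ∈ T.neighborFinset v,
        Real.sqrt (h w) * (g w / Real.sqrt (h w)) = g w := by
      intro w _
      rw [mul_div_cancel₀]
      exact (Real.sqrt_ne_zero').mpr (hpos w)
    have e2 : ∀ w ∈ T.neighborFinset v, Real.sqrt (h w) ^ 2 = h w := by
      intro w _; exact Real.sq_sqrt (hpos w).le
    have e3 : ∀ w ∈ T.neighborFinset v,
        (g w / Real.sqrt (h w)) ^ 2 = g w ^ 2 / h w := by
      intro w _
      rw [div_pow, Real.sq_sqrt (hpos w).le]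
    rw [Finset.sum_congr rfl e1, Finset.sum_congr rfl e2, Finset.sum_congr rfl e3] at CS
    have hsum2 : 0 ≤ ∑ w ∈ T.neighborFinset v, g w ^ 2 / h w :=
      Finset.sum_nonneg fun w _ => div_nonneg (sq_nonneg _) (hpos w).le
    calc (∑ w ∈ T.neighborFinset v, g w) ^ 2
        ≤ (∑ w ∈ T.neighborFinset v, h w) * ∑ w ∈ T.neighborFinset v, g w ^ 2 / h w := CS
      _ ≤ (M * h v) * ∑ w ∈ T.neighborFinset v, g w ^ 2 / h w :=
          mul_le_mul_of_nonneg_right (schur v) hsum2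
      _ = M * (h v * ∑ w ∈ T.neighborFinset v, g w ^ 2 / h w) := by ring
  -- ENNReal double sum
  set F : W → W → ENNReal := fun v w =>
    if w ∈ T.neighborFinset v then ENNReal.ofReal (h v * (g w ^ 2 / h w)) else 0 with hF_def
  have row : ∀ v, ENNReal.ofReal (((A f : ∀ _ : W, ℝ) v) ^ 2)
      ≤ ENNReal.ofReal M * ∑' w, F v w := by
    intro v
    have hFsum : ∑' w, F v w = ∑ w ∈ T.neighborFinset v, ENNReal.ofReal (h v * (g w ^ 2 / h w)) := by
      rw [tsum_eq_sum (s := T.neighborFinset v) (fun w hw => by simp [hF_def, hw])]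
      refine Finset.sum_congr rfl fun w hw => by simp [hF_def, hw]
    rw [hFsum, ← ENNReal.ofReal_sum_of_nonneg (fun w _ => by positivity),
      ← ENNReal.ofReal_mul hM0]
    apply ENNReal.ofReal_le_ofReal
    rw [hA f v, ← Finset.mul_sum]
    exact ptwise v
  have col : ∀ w, ∑' v, F v w ≤ ENNReal.ofReal M * ENNReal.ofReal (g w ^ 2) := by
    intro w
    have hFsum : ∑' v, F v w
        = ∑ v ∈ T.neighborFinset w, ENNReal.ofReal (h v * (g w ^ 2 / h w)) := by
      rw [tsum_eq_sum (s := T.neighborFinset w)]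
      · refine Finset.sum_congr rfl fun v hv => ?_
        have : w ∈ T.neighborFinset v := by
          rw [mem_neighborFinset] at hv ⊢; exact hv.symm
        simp [hF_def, this]
      · intro v hv
        have : w ∉ T.neighborFinset v := by
          rw [mem_neighborFinset] at hv ⊢
          exact fun hadj => hv hadj.symm
        simp [hF_def, this]
    rw [hFsum, ← ENNReal.ofReal_sum_of_nonneg (fun v _ => by positivity),
      ← ENNReal.ofReal_mul hM0]
    apply ENNReal.ofReal_le_ofReal
    have step : ∑ v ∈ T.neighborFinset w, h v * (g w ^ 2 / h w)
        = (∑ v ∈ T.neighborFinset w, h v) * (g w ^ 2 / h w) := by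
      rw [Finset.sum_mul]
    rw [step]
    calc (∑ v ∈ T.neighborFinset w, h v) * (g w ^ 2 / h w)
        ≤ (M * h w) * (g w ^ 2 / h w) :=
          mul_le_mul_of_nonneg_right (schur w) (by positivity)
      _ = M * g w ^ 2 := by
          rw [mul_assoc, mul_div_cancel₀]
          exact (hpos w).ne'
  have main : ENNReal.ofReal (‖A f‖ ^ 2)
      ≤ ENNReal.ofReal M * (ENNReal.ofReal M * ENNReal.ofReal (‖f‖ ^ 2)) := by
    have lhs_eq : ENNReal.ofReal (‖A f‖ ^ 2) = ∑' v, ENNReal.ofReal (((A f : ∀ _ : W, ℝ) v) ^ 2) := by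
      rw [norm_sq_eq, ENNReal.ofReal_tsum_of_nonneg (fun v => sq_nonneg _) (summable_sq (A f))]
    have rhs_eq : ENNReal.ofReal (‖f‖ ^ 2) = ∑' w, ENNReal.ofReal (g w ^ 2) := by
      rw [norm_sq_eq, ENNReal.ofReal_tsum_of_nonneg (fun v => sq_nonneg _) (summable_sq f)]
    rw [lhs_eq, rhs_eq]
    calc ∑' v, ENNReal.ofReal (((A f : ∀ _ : W, ℝ) v) ^ 2)
        ≤ ∑' v, (ENNReal.ofReal M * ∑' w, F v w) := ENNReal.tsum_le_tsum row
      _ = ENNReal.ofReal M * ∑' v, ∑' w, F v w := by rw [ENNReal.tsum_mul_left]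
      _ = ENNReal.ofReal M * ∑' w, ∑' v, F v w := by rw [ENNReal.tsum_comm]
      _ ≤ ENNReal.ofReal M * ∑' w, (ENNReal.ofReal M * ENNReal.ofReal (g w ^ 2)) := by
          exact mul_le_mul_right (ENNReal.tsum_le_tsum col) _
      _ = ENNReal.ofReal M * (ENNReal.ofReal M * ∑' w, ENNReal.ofReal (g w ^ 2)) := by
          rw [ENNReal.tsum_mul_left]
  have main2 : ‖A f‖ ^ 2 ≤ (M * ‖f‖) ^ 2 := by
    have h1 : ENNReal.ofReal M * (ENNReal.ofReal M * ENNReal.ofReal (‖f‖ ^ 2))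
        = ENNReal.ofReal (M * (M * ‖f‖ ^ 2)) := by
      rw [ENNReal.ofReal_mul hM0, ENNReal.ofReal_mul hM0]
    rw [h1] at main
    have h2 := (ENNReal.ofReal_le_ofReal_iff (by positivity)).mp main
    calc ‖A f‖ ^ 2 ≤ M * (M * ‖f‖ ^ 2) := h2
      _ = (M * ‖f‖) ^ 2 := by ring
  have := Real.sqrt_le_sqrt main2
  rwa [Real.sqrt_sq (norm_nonneg _), Real.sqrt_sq (by positivity)] at this

end Schur

section Lower

open Filter Topology

lemma not_summable_solution {k : ℕ} (hk : 3 ≤ k) (hc : T.Connected) (ha : T.IsAcyclic)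
    (hreg : T.IsRegularOfDegree k) (lam : ℝ)
    (hlam : |lam| ≤ 2 * Real.sqrt ((k:ℝ) - 1))
    (g : W → ℝ) (hg : Summable (fun v => g v ^ 2))
    (hpt : ∀ v : W, lam * g v - ∑ w ∈ T.neighborFinset v, g w
      = if v = v0 then 1 else 0) :
    False := by
  have hk1 : (0:ℝ) < (k:ℝ) - 1 := by
    have : (3:ℝ) ≤ (k:ℝ) := by exact_mod_cast hk
    linarith
  set q : ℝ := Real.sqrt ((k:ℝ) - 1) with hq_def
  have hq0 : 0 < q := Real.sqrt_pos.mpr hk1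
  have hq2 : q ^ 2 = (k:ℝ) - 1 := Real.sq_sqrt hk1.le
  have hqne : q ≠ 0 := hq0.ne'
  have hcast : ((k - 1 : ℕ) : ℝ) = (k:ℝ) - 1 := by
    have : 1 ≤ k := by omega
    push_cast [this]; ring
  set S : ℕ → ℝ := fun m => ∑ v ∈ gsph T v0 m, g v with hS_def
  set R : ℕ → ℝ := fun m => ∑ v ∈ gsph T v0 m, g v ^ 2 with hR_def
  -- summed equations over spheres
  have hsum : ∀ m : ℕ, lam * S m - (∑ v ∈ gsph T v0 m, ∑ w ∈ T.neighborFinset v, g w)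
      = if m = 0 then 1 else 0 := by
    intro m
    have h1 : ∑ v ∈ gsph T v0 m, (lam * g v - ∑ w ∈ T.neighborFinset v, g w)
        = ∑ v ∈ gsph T v0 m, (if v = v0 then (1:ℝ) else 0) :=
      Finset.sum_congr rfl fun v _ => hpt v
    rw [Finset.sum_sub_distrib, ← Finset.mul_sum] at h1
    rw [hS_def]
    rw [h1]
    rcases Nat.eq_zero_or_pos m with rfl | hm
    · rw [gsph_zero hc]
      simp
    · have : ∀ v ∈ gsph T v0 m, (if v = v0 then (1:ℝ) else 0) = 0 := by
        intro v hv
        rw [mem_gsph hc] at hv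
        have : v ≠ v0 := by
          rintro rfl
          rw [SimpleGraph.dist_self] at hv
          omega
        simp [this]
      rw [Finset.sum_congr rfl this, Finset.sum_const, smul_zero]
      have : m ≠ 0 := by omega
      simp [this]
  have hS0 : S 0 = g v0 := by simp only [hS_def]; rw [gsph_zero hc, Finset.sum_singleton]
  have eq0 : lam * S 0 - S 1 = 1 := by
    have h0 := hsum 0
    rw [if_pos rfl] at h0
    rw [gsph_zero hc, Finset.sum_singleton] at h0
    have : ∑ w ∈ T.neighborFinset v0, g w = S 1 := by
      simp only [hS_def]; rw [gsph_one hc]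
    rw [this] at h0
    exact h0
  have eq1 : lam * S 1 = (k:ℝ) * S 0 + S 2 := by
    have h1 := hsum 1
    rw [if_neg one_ne_zero] at h1
    have hnb : ∑ v ∈ gsph T v0 1, ∑ w ∈ T.neighborFinset v, g w
        = (k:ℝ) * S 0 + S 2 := by
      have hsplit : ∀ v ∈ gsph T v0 1, ∑ w ∈ T.neighborFinset v, g w
          = g (pa T v0 v) + ∑ w ∈ (T.neighborFinset v).filter
              (fun w => T.dist v0 w = 0 + 2), g w := by
        intro v hv
        rw [mem_gsph hc] at hv
        exact sum_nbhd g hc ha (by omega : T.dist v0 v = 0 + 1)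
      rw [Finset.sum_congr rfl hsplit, Finset.sum_add_distrib,
        sum_parent_one g hc, sum_children g hc ha 0, gsph_card_one hc hreg, ← hS0]
    rw [hnb] at h1
    linarith
  have eq2 : ∀ m : ℕ, lam * S (m + 2) = ((k:ℝ) - 1) * S (m + 1) + S (m + 3) := by
    intro m
    have h1 := hsum (m + 2)
    rw [if_neg (by omega : m + 2 ≠ 0)] at h1
    have hnb : ∑ v ∈ gsph T v0 (m + 2), ∑ w ∈ T.neighborFinset v, g w
        = ((k:ℝ) - 1) * S (m + 1) + S (m + 3) := by
      have hsplit : ∀ v ∈ gsph T v0 (m + 2), ∑ w ∈ T.neighborFinset v, g w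
          = g (pa T v0 v) + ∑ w ∈ (T.neighborFinset v).filter
              (fun w => T.dist v0 w = (m + 1) + 2), g w := by
        intro v hv
        rw [mem_gsph hc] at hv
        exact sum_nbhd g hc ha (by omega : T.dist v0 v = (m + 1) + 1)
      rw [Finset.sum_congr rfl hsplit, Finset.sum_add_distrib,
        sum_parent g hc ha hreg m, sum_children g hc ha (m + 1), hcast]
    rw [hnb] at h1
    linarith
  -- R tends to zero
  have hdisj : ∀ m n : ℕ, m ≠ n → Disjoint (gsph T v0 m) (gsph T v0 n) := by
    intro m n hmn
    rw [Finset.disjoint_left]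
    intro v hvm hvn
    rw [mem_gsph hc] at hvm hvn
    omega
  have hRsum : Summable R := by
    apply summable_of_sum_range_le (c := ∑' v, g v ^ 2)
      (fun m => Finset.sum_nonneg fun v _ => sq_nonneg _)
    intro n
    have hb : ∑ m ∈ Finset.range n, R m
        = ∑ v ∈ (Finset.range n).biUnion (gsph T v0), g v ^ 2 := by
      rw [Finset.sum_biUnion]
      intro m _ n' _ hmn
      exact hdisj m n' hmn
    rw [hb]
    exact hg.sum_le_tsum _ (fun v _ => sq_nonneg _)
  have hR0 : Tendsto R atTop (𝓝 0) := hRsum.tendsto_atTop_zero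
  have hRnn : ∀ m, 0 ≤ R m := fun m => Finset.sum_nonneg fun v _ => sq_nonneg _
  -- normalized sequence
  set t : ℕ → ℝ := fun m => S m * (q⁻¹) ^ m with ht_def
  have hki : ((k:ℝ) - 1) * (q⁻¹) ^ 2 = 1 := by
    rw [← hq2]; field_simp
  -- bound on t
  have htbound : ∀ m : ℕ, t (m + 1) ^ 2 ≤ ((k:ℝ) / ((k:ℝ) - 1)) * R (m + 1) := by
    intro m
    have hcard : ((gsph T v0 (m + 1)).card : ℝ) ≤ (k:ℝ) * ((k:ℝ) - 1) ^ m := by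
      have h1 := gsph_card (v0 := v0) hc ha hreg m
      have h2 : (((gsph T v0 (m + 1)).card : ℕ) : ℝ) ≤ ((k * (k - 1) ^ m : ℕ) : ℝ) := by
        exact_mod_cast h1
      calc ((gsph T v0 (m + 1)).card : ℝ) ≤ ((k * (k - 1) ^ m : ℕ) : ℝ) := h2
        _ = (k:ℝ) * ((k:ℝ) - 1) ^ m := by push_cast [hcast]; ring
    have hCS : S (m + 1) ^ 2 ≤ ((gsph T v0 (m + 1)).card : ℝ) * R (m + 1) := by
      simp only [hS_def, hR_def]
      exact_mod_cast sq_sum_le_card_mul_sum_sq (s := gsph T v0 (m + 1)) (f := g)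
    have hpow : (0:ℝ) < ((k:ℝ) - 1) ^ (m + 1) := pow_pos hk1 _
    have hiq : ((q⁻¹) ^ (m + 1)) ^ 2 = (((k:ℝ) - 1) ^ (m + 1))⁻¹ := by
      rw [← pow_mul, mul_comm (m+1) 2, pow_mul, ← inv_pow]
      congr 1
      rw [inv_pow, ← hq2]
    have ht2 : t (m + 1) ^ 2 = S (m + 1) ^ 2 / ((k:ℝ) - 1) ^ (m + 1) := by
      simp only [ht_def]
      rw [mul_pow, hiq, div_eq_mul_inv]
    rw [ht2]
    rw [div_le_iff₀ hpow]
    calc S (m + 1) ^ 2 ≤ ((gsph T v0 (m + 1)).card : ℝ) * R (m + 1) := hCS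
      _ ≤ ((k:ℝ) * ((k:ℝ) - 1) ^ m) * R (m + 1) :=
          mul_le_mul_of_nonneg_right hcard (hRnn _)
      _ = (k:ℝ) / ((k:ℝ) - 1) * R (m + 1) * ((k:ℝ) - 1) ^ (m + 1) := by
          field_simp
          ring
  have ht1 : Tendsto (fun m => t (m + 1)) atTop (𝓝 0) := by
    have htsq : Tendsto (fun m => t (m + 1) ^ 2) atTop (𝓝 0) := by
      apply squeeze_zero (fun m => sq_nonneg _) htbound
      have := (hR0.comp (tendsto_add_atTop_nat 1)).const_mul ((k:ℝ) / ((k:ℝ) - 1))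
      simpa using this
    have habs : Tendsto (fun m => |t (m + 1)|) atTop (𝓝 0) := by
      have hsqrt := (Real.continuous_sqrt.tendsto 0).comp htsq
      simp only [Function.comp_def, Real.sqrt_sq_eq_abs, Real.sqrt_zero] at hsqrt
      exact hsqrt
    exact (tendsto_zero_iff_abs_tendsto_zero _).mpr habs
  have ht2' : Tendsto (fun m => t (m + 2)) atTop (𝓝 0) := by
    have := ht1.comp (tendsto_add_atTop_nat 1)
    simpa [Function.comp_def, add_assoc] using this
  set c : ℝ := lam * q⁻¹ with hc_def
  have hcabs : |c| ≤ 2 := by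
    rw [hc_def, abs_mul, abs_inv, abs_of_pos hq0]
    rw [mul_inv_le_iff₀ hq0]
    linarith [hlam]
  -- recurrence for t
  have trec : ∀ m : ℕ, t (m + 3) + t (m + 1) = c * t (m + 2) := by
    intro m
    have e := eq2 m
    simp only [ht_def, hc_def]
    linear_combination (-((q⁻¹) ^ (m + 3))) * e - S (m + 1) * (q⁻¹) ^ (m + 1) * hki
  -- conserved quantity
  set E : ℕ → ℝ := fun m => t (m + 1) ^ 2 + t (m + 2) ^ 2 - c * t (m + 1) * t (m + 2)
    with hE_def
  have hEstep : ∀ m : ℕ, E (m + 1) = E m := by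
    intro m
    simp only [hE_def]
    linear_combination (t (m + 3) - t (m + 1)) * trec m
  have hEconst : ∀ m : ℕ, E m = E 0 := by
    intro m
    induction m with
    | zero => rfl
    | succ n ih => rw [hEstep n, ih]
  have hE0 : E 0 = 0 := by
    have htE : Tendsto E atTop (𝓝 0) := by
      have h1 := (ht1.mul ht1).add (ht2'.mul ht2')
      have h2 := ((tendsto_const_nhds (x := c)).mul ht1).mul ht2'
      have := h1.sub h2
      simpa [hE_def, pow_two] using this
    have htE' : Tendsto E atTop (𝓝 (E 0)) := by
      have : E = fun _ => E 0 := funext fun m => hEconst m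
      rw [this]
      exact tendsto_const_nhds
    exact tendsto_nhds_unique htE' htE
  have hEzero : ∀ m, E m = 0 := fun m => (hEconst m).trans hE0
  -- equal absolute values
  have habs_eq : ∀ m : ℕ, |t (m + 2)| = |t (m + 1)| := by
    intro m
    have h1 : t (m + 1) ^ 2 + t (m + 2) ^ 2 = c * t (m + 1) * t (m + 2) := by
      have := hEzero m
      simp only [hE_def] at this
      linarith
    have h2 : c * t (m + 1) * t (m + 2) ≤ 2 * |t (m + 1)| * |t (m + 2)| := by
      calc c * t (m + 1) * t (m + 2) ≤ |c * t (m + 1) * t (m + 2)| := le_abs_self _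
        _ = |c| * |t (m + 1)| * |t (m + 2)| := by rw [abs_mul, abs_mul]
        _ ≤ 2 * |t (m + 1)| * |t (m + 2)| := by
            apply mul_le_mul_of_nonneg_right _ (abs_nonneg _)
            exact mul_le_mul_of_nonneg_right hcabs (abs_nonneg _)
    have h3 : (|t (m + 1)| - |t (m + 2)|) ^ 2 ≤ 0 := by
      nlinarith [sq_abs (t (m + 1)), sq_abs (t (m + 2))]
    have h4 : (|t (m + 1)| - |t (m + 2)|) ^ 2 = 0 := le_antisymm h3 (sq_nonneg _)
    have h5 : |t (m + 1)| - |t (m + 2)| = 0 := by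
      exact pow_eq_zero_iff (two_ne_zero) |>.mp h4
    linarith
  have habs_const : ∀ m : ℕ, |t (m + 1)| = |t 1| := by
    intro m
    induction m with
    | zero => rfl
    | succ n ih => rw [show n + 1 + 1 = n + 2 by ring, habs_eq n, ih]
  have ht1_zero : |t 1| = 0 := by
    have hc1 : Tendsto (fun m : ℕ => |t (m + 1)|) atTop (𝓝 (|t 1|)) := by
      have : (fun m : ℕ => |t (m + 1)|) = fun _ => |t 1| := funext fun m => habs_const m
      rw [this]
      exact tendsto_const_nhds
    have hc2 : Tendsto (fun m : ℕ => |t (m + 1)|) atTop (𝓝 0) := by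
      have := ht1.abs
      simpa using this
    exact tendsto_nhds_unique hc1 hc2
  have htz : ∀ m : ℕ, t (m + 1) = 0 := by
    intro m
    have := habs_const m
    rw [ht1_zero] at this
    exact abs_eq_zero.mp this
  have hSz : ∀ m : ℕ, S (m + 1) = 0 := by
    intro m
    have h := htz m
    simp only [ht_def] at h
    rcases mul_eq_zero.mp h with h' | h'
    · exact h'
    · exact absurd h' (pow_ne_zero _ (inv_ne_zero hqne))
  have hS0z : S 0 = 0 := by
    have h := eq1
    rw [hSz 0, hSz 1] at h
    have hkpos : (0:ℝ) < (k:ℝ) := by positivity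
    have : (k:ℝ) * S 0 = 0 := by linarith
    rcases mul_eq_zero.mp this with h' | h'
    · exact absurd h' hkpos.ne'
    · exact h'
  have := eq0
  rw [hS0z, hSz 0] at this
  simp at this

end Lower

end KestenAux

/-- Kesten: the spectrum of the adjacency operator of the infinite `k`-regular tree `T_k`
acting on `ℓ²(T_k)` is the interval `[-2√(k-1), 2√(k-1)]`. -/
theorem kesten_spectrum {W : Type*} (k : ℕ) (hk : 3 ≤ k)
    (T : SimpleGraph W) [T.LocallyFinite] [DecidableEq W]
    (hTconn : T.Connected) (hTacyclic : T.IsAcyclic) (hTreg : T.IsRegularOfDegree k)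
    (A : lp (fun _ : W => ℝ) 2 →L[ℝ] lp (fun _ : W => ℝ) 2)
    (hA : ∀ (f : lp (fun _ : W => ℝ) 2) (v : W),
      (A f : ∀ _ : W, ℝ) v = ∑ w ∈ T.neighborFinset v, (f : ∀ _ : W, ℝ) w) :
    spectrum ℝ A =
      Set.Icc (-(2 * Real.sqrt ((k : ℝ) - 1))) (2 * Real.sqrt ((k : ℝ) - 1)) := by
  classical
  obtain ⟨v0⟩ := hTconn.nonempty
  set M : ℝ := 2 * Real.sqrt ((k:ℝ) - 1) with hM_def
  have hk1 : (0:ℝ) < (k:ℝ) - 1 := by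
    have : (3:ℝ) ≤ (k:ℝ) := by exact_mod_cast hk
    linarith
  have hM0 : 0 ≤ M := by positivity
  haveI : Nontrivial (lp (fun _ : W => ℝ) 2) := by
    refine ⟨lp.single 2 v0 (1:ℝ), 0, fun hcon => ?_⟩
    have h1 : (lp.single 2 v0 (1:ℝ) : ∀ _ : W, ℝ) v0
        = ((0 : lp (fun _ : W => ℝ) 2) : ∀ _ : W, ℝ) v0 := by rw [hcon]
    rw [lp.single_apply_self] at h1
    simp only [lp.coeFn_zero, Pi.zero_apply] at h1
    exact one_ne_zero h1
  have hAnorm : ‖A‖ ≤ M :=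
    A.opNorm_le_bound hM0 fun f =>
      KestenAux.norm_bound v0 hk hTconn hTacyclic hTreg A hA f
  ext lam
  constructor
  · intro hlam
    have h1 := spectrum.norm_le_norm_of_mem hlam
    rw [Real.norm_eq_abs] at h1
    have h2 : |lam| ≤ M := h1.trans hAnorm
    exact Set.mem_Icc.mpr (abs_le.mp h2)
  · intro hlam
    rw [Set.mem_Icc] at hlam
    have habs : |lam| ≤ M := abs_le.mpr hlam
    by_contra hnot
    rw [spectrum.notMem_iff] at hnot
    set δ : lp (fun _ : W => ℝ) 2 := lp.single 2 v0 (1:ℝ) with hδ_def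
    set gl : lp (fun _ : W => ℝ) 2 :=
      (↑hnot.unit⁻¹ : lp (fun _ : W => ℝ) 2 →L[ℝ] lp (fun _ : W => ℝ) 2) δ with hgl_def
    have hug : (algebraMap ℝ (lp (fun _ : W => ℝ) 2 →L[ℝ] lp (fun _ : W => ℝ) 2) lam - A) gl
        = δ := by
      have h1 : (algebraMap ℝ (lp (fun _ : W => ℝ) 2 →L[ℝ] lp (fun _ : W => ℝ) 2) lam - A)
          * (↑hnot.unit⁻¹) = 1 := hnot.mul_val_inv
      calc (algebraMap ℝ _ lam - A) gl
          = ((algebraMap ℝ _ lam - A) * (↑hnot.unit⁻¹ :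
              lp (fun _ : W => ℝ) 2 →L[ℝ] lp (fun _ : W => ℝ) 2)) δ := by
            rw [ContinuousLinearMap.mul_apply]
        _ = δ := by rw [h1, ContinuousLinearMap.one_apply]
    have hpt : ∀ v : W, lam * (gl : ∀ _ : W, ℝ) v
        - ∑ w ∈ T.neighborFinset v, (gl : ∀ _ : W, ℝ) w = if v = v0 then 1 else 0 := by
      intro v
      have h1 : (((algebraMap ℝ (lp (fun _ : W => ℝ) 2 →L[ℝ] lp (fun _ : W => ℝ) 2) lam - A) gl
          : lp (fun _ : W => ℝ) 2) : ∀ _ : W, ℝ) v = (δ : ∀ _ : W, ℝ) v := by rw [hug]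
      rw [ContinuousLinearMap.sub_apply] at h1
      rw [Algebra.algebraMap_eq_smul_one, ContinuousLinearMap.smul_apply,
        ContinuousLinearMap.one_apply] at h1
      rw [lp.coeFn_sub, Pi.sub_apply, lp.coeFn_smul, Pi.smul_apply, smul_eq_mul] at h1
      rw [hA gl v] at h1
      rw [h1]
      by_cases hv : v = v0
      · subst hv
        rw [if_pos rfl, hδ_def, lp.single_apply_self]
      · rw [if_neg hv, hδ_def, lp.single_apply_ne _ _ _ hv]
    exact KestenAux.not_summable_solution (v0 := v0) hk hTconn hTacyclic hTreg lam habs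
      (fun v => (gl : ∀ _ : W, ℝ) v) (KestenAux.summable_sq gl) hpt
end
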